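/- arXiv:2007.14665 — 8 statements merged into one kernel-verified Lean document; each statement's English description precedes it below -/
import Mathlib

section
/- For every real s > 0, the Laplace transform of the logarithm satisfies ∫₀^∞ e^{-st} log t dt = -(γ + log s)/s, where γ is the Euler–Mascheroni constant. -/
open MeasureTheory Real Set Filter Asymptotics

open Complex in
lemma complex_integral_log_exp :
    (∫ t : ℝ in Set.Ioi 0, ((1:ℂ)) * (Real.log t * Real.exp (-t))
      : ℂ) = -(Real.eulerMascheroniConstant : ℂ) := by
  have h1 := Complex.hasDerivAt_GammaIntegral (s := 1) (by norm_num)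
  have heq : Complex.GammaIntegral =ᶠ[nhds (1:ℂ)] Complex.Gamma := by
    filter_upwards [IsOpen.mem_nhds (isOpen_lt continuous_const Complex.continuous_re)
      (by norm_num : (0:ℝ) < (1:ℂ).re)] with z hz
    exact (Complex.Gamma_eq_integral hz).symm
  have h2 : HasDerivAt Complex.Gamma
      (∫ t : ℝ in Set.Ioi 0, (t:ℂ) ^ ((1:ℂ) - 1) * (Real.log t * Real.exp (-t))) 1 :=
    h1.congr_of_eventuallyEq heq.symm
  have h3 := h2.unique Complex.hasDerivAt_Gamma_one
  rw [← h3]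
  refine setIntegral_congr_fun measurableSet_Ioi fun t ht => ?_
  simp [Complex.cpow_zero]

lemma real_integral_log_exp :
    ∫ t : ℝ in Set.Ioi 0, Real.exp (-t) * Real.log t
      = -Real.eulerMascheroniConstant := by
  have h := complex_integral_log_exp
  have hc : ∀ r : ℝ, Complex.ofReal r = @RCLike.ofReal ℂ _ r := fun r => rfl
  have h2 : (∫ t : ℝ in Set.Ioi 0, ((1:ℂ)) * (Real.log t * Real.exp (-t)) : ℂ)
      = ((∫ t : ℝ in Set.Ioi 0, Real.exp (-t) * Real.log t : ℝ) : ℂ) := by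
    rw [hc, ← integral_ofReal]
    refine setIntegral_congr_fun measurableSet_Ioi fun t ht => ?_
    rw [← hc]
    push_cast
    ring
  rw [h2] at h
  exact_mod_cast h

lemma integrableOn_exp_neg_log :
    IntegrableOn (fun t : ℝ => Real.exp (-t) * Real.log t) (Set.Ioi 0) := by
  have h := (mellin_hasDerivAt_of_isBigO_rpow (E := ℂ) (a := 2) (b := 0)
    (f := fun t : ℝ => (Real.exp (-t) : ℂ)) (s := 1)
    ((Continuous.continuousOn (Complex.continuous_ofReal.comp
      (Real.continuous_exp.comp continuous_neg))).locallyIntegrableOn measurableSet_Ioi)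
    ?_ (by norm_num) ?_ (by norm_num)).1
  · have h2 : IntegrableOn (fun t : ℝ =>
        ((Real.exp (-t) * Real.log t : ℝ) : ℂ)) (Set.Ioi 0) := by
      refine h.congr_fun (fun t ht => ?_) measurableSet_Ioi
      simp only [sub_self, Complex.cpow_zero, smul_eq_mul, one_mul, Complex.real_smul]
      push_cast
      ring_nf
    have h3 : IntegrableOn (fun t : ℝ =>
        ((Real.exp (-t) * Real.log t : ℝ) : ℂ).re) (Set.Ioi 0) := h2.re
    refine h3.congr_fun (fun t ht => ?_) measurableSet_Ioi
    exact Complex.ofReal_re _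
  · rw [← isBigO_norm_left]
    simp_rw [Complex.norm_real, isBigO_norm_left]
    simpa only [neg_one_mul] using (isLittleO_exp_neg_mul_rpow_atTop zero_lt_one _).isBigO
  · simp_rw [neg_zero, Real.rpow_zero]
    refine Asymptotics.isBigO_const_of_tendsto (?_ : Tendsto _ _ (nhds (1 : ℂ))) one_ne_zero
    rw [(by simp : (1 : ℂ) = Real.exp (-0))]
    exact (Complex.continuous_ofReal.comp
      (Real.continuous_exp.comp continuous_neg)).continuousWithinAt

/-- For every real `s > 0`, the Laplace transform of the logarithm satisfies
`∫₀^∞ e^{-st} log t dt = -(γ + log s)/s`, where `γ` is the Euler–Mascheroni constant. -/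
theorem stmt2 (s : ℝ) (hs : 0 < s) :
    ∫ t in Set.Ioi (0:ℝ), Real.exp (-(s * t)) * Real.log t
      = -((Real.eulerMascheroniConstant + Real.log s) / s) := by
  have key : ∫ t in Set.Ioi (0:ℝ), Real.exp (-(s * t)) * Real.log t
      = s⁻¹ • ∫ u in Set.Ioi (0:ℝ), Real.exp (-u) * Real.log (u / s) := by
    have h := MeasureTheory.integral_comp_mul_left_Ioi
      (fun u => Real.exp (-u) * Real.log (u / s)) 0 hs
    rw [mul_zero] at h
    rw [← h]
    refine setIntegral_congr_fun measurableSet_Ioi fun t ht => ?_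
    rw [mul_div_cancel_left₀ _ hs.ne']
  rw [key]
  have h2 : ∫ u in Set.Ioi (0:ℝ), Real.exp (-u) * Real.log (u / s)
      = ∫ u in Set.Ioi (0:ℝ), (Real.exp (-u) * Real.log u - Real.log s * Real.exp (-u)) := by
    refine setIntegral_congr_fun measurableSet_Ioi fun u hu => ?_
    rw [Real.log_div (ne_of_gt hu) hs.ne']
    ring
  rw [h2, integral_sub integrableOn_exp_neg_log
    (((exp_neg_integrableOn_Ioi 0 one_pos).congr_fun (by intro x _; simp)
      measurableSet_Ioi).const_mul _), real_integral_log_exp,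
    integral_const_mul, integral_exp_neg_Ioi_zero]
  field_simp
  rw [smul_eq_mul, one_div, ← mul_assoc, mul_inv_cancel₀ hs.ne']
  ring
end

section
/- Let r > 0 and let f ∈ C¹([0,r];ℝ) satisfy f(0) = 0. If T[f](x) = -(1/(8π²)) ∫₀ˣ f'(y) log(x-y) dy vanishes for every x ∈ [0,r], then f vanishes identically on [0,r]. In other words, T is injective on the set D = { f ∈ C¹([0,r]) : f(0) = 0 }. -/
open MeasureTheory Real Set Topology Filter



lemma II_log01 : IntervalIntegrable Real.log volume 0 1 := by
  have h1 : IntegrableOn (fun t => -Real.log t) (Ioc (0:ℝ) 1) := by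
    apply intervalIntegral.integrableOn_deriv_of_nonneg (g := fun t => t - t * Real.log t)
    · exact (continuous_id.sub Real.continuous_mul_log).continuousOn
    · intro x hx
      have hx0 : x ≠ 0 := ne_of_gt hx.1
      have := (hasDerivAt_id' x).sub (Real.hasDerivAt_mul_log hx0)
      exact this.congr_deriv (by ring)
    · intro x hx
      have : Real.log x ≤ 0 := Real.log_nonpos hx.1.le hx.2.le
      linarith
  have h2 : IntegrableOn Real.log (Ioc (0:ℝ) 1) := by
    have h := h1.neg
    have e : (-fun t : ℝ => -Real.log t) = Real.log := by funext t; simp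
    rwa [e] at h
  rw [intervalIntegrable_iff_integrableOn_Ioc_of_le (by norm_num)]
  exact h2

lemma II_log_nonneg (c : ℝ) (hc : 0 ≤ c) : IntervalIntegrable Real.log volume 0 c := by
  rcases le_total c 1 with h | h
  · exact II_log01.mono_set (by rw [Set.uIcc_of_le hc, Set.uIcc_of_le (by norm_num)]; exact Set.Icc_subset_Icc le_rfl h)
  · refine II_log01.trans ?_
    apply ContinuousOn.intervalIntegrable
    apply Real.continuousOn_log.mono
    intro x hx
    rw [Set.uIcc_of_le h] at hx
    simp only [Set.mem_compl_iff, Set.mem_singleton_iff]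
    intro h0; rw [h0] at hx; exact absurd hx.1 (by norm_num)

lemma II_log (a b : ℝ) : IntervalIntegrable Real.log volume a b := by
  have key : ∀ c : ℝ, IntervalIntegrable Real.log volume 0 c := by
    intro c
    rcases le_total 0 c with h | h
    · exact II_log_nonneg c h
    · have h2 := (II_log_nonneg (-c) (by linarith)).comp_sub_left 0
      simp only [zero_sub, neg_neg, neg_zero] at h2
      have e : (fun x : ℝ => Real.log (-x)) = Real.log := by
        funext x; rw [Real.log_neg_eq_log]
      rwa [e] at h2
  exact (key a).symm.trans (key b)

/-- integrability of shifted log on a compact interval -/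
lemma intOn_log_sub (c p q : ℝ) : IntegrableOn (fun y => Real.log (c - y)) (Icc p q) := by
  have h := (II_log (c - p) (c - q)).comp_sub_left c
  simp only [sub_sub_cancel] at h
  rw [intervalIntegrable_iff'] at h
  exact h.mono_set Set.Icc_subset_uIcc

lemma intOn_mul_log {ψ : ℝ → ℝ} {C : ℝ} (hψ : AEStronglyMeasurable ψ (volume.restrict (Icc p q)))
    (hb : ∀ᵐ y ∂(volume.restrict (Icc p q)), ‖ψ y‖ ≤ C) (c : ℝ) :
    IntegrableOn (fun y => ψ y * Real.log (c - y)) (Icc p q) :=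
  (intOn_log_sub c p q).bdd_mul hψ hb

lemma II_mul_log {ψ : ℝ → ℝ} (hψ : Continuous ψ) (c p q : ℝ) :
    IntervalIntegrable (fun y => ψ y * Real.log (c - y)) volume p q := by
  rw [intervalIntegrable_iff']
  rcases le_total p q with h | h
  · rw [Set.uIcc_of_le h]
    obtain ⟨C, hC⟩ := (isCompact_Icc (a := p) (b := q)).exists_bound_of_continuousOn hψ.continuousOn
    exact intOn_mul_log hψ.aestronglyMeasurable.restrict
      ((ae_restrict_mem measurableSet_Icc).mono fun y hy => hC y hy) c
  · rw [Set.uIcc_of_ge h]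
    obtain ⟨C, hC⟩ := (isCompact_Icc (a := q) (b := p)).exists_bound_of_continuousOn hψ.continuousOn
    exact intOn_mul_log hψ.aestronglyMeasurable.restrict
      ((ae_restrict_mem measurableSet_Icc).mono fun y hy => hC y hy) c

lemma kern {s : ℝ} (hs : 0 < s) (hs1 : s ≤ 1) :
    ∫ u in Ioc (0:ℝ) 1, max (u - s) 0 / u ^ 2 = -Real.log s - 1 + s := by
  have hsplit : Ioc (0:ℝ) 1 = Ioc 0 s ∪ Ioc s 1 := (Set.Ioc_union_Ioc_eq_Ioc hs.le hs1).symm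
  have hzero : ∀ u ∈ Ioc (0:ℝ) s, max (u - s) 0 / u ^ 2 = 0 := by
    intro u hu
    rw [max_eq_right (by linarith [hu.2] : u - s ≤ 0), zero_div]
  have hcont : ContinuousOn (fun u : ℝ => max (u - s) 0 / u ^ 2) (Icc s 1) := by
    apply ContinuousOn.div
    · exact ((continuous_id.sub continuous_const).max continuous_const).continuousOn
    · exact (continuous_pow 2).continuousOn
    · intro u hu
      have : 0 < u := lt_of_lt_of_le hs hu.1
      positivity
  have hIntOn : IntegrableOn (fun u : ℝ => max (u - s) 0 / u ^ 2) (Ioc s 1) :=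
    (hcont.integrableOn_compact isCompact_Icc).mono_set Ioc_subset_Icc_self
  have hIntZ : IntegrableOn (fun u : ℝ => max (u - s) 0 / u ^ 2) (Ioc 0 s) :=
    (integrableOn_zero).congr_fun (fun u hu => (hzero u hu).symm) measurableSet_Ioc
  rw [hsplit, MeasureTheory.setIntegral_union (Set.Ioc_disjoint_Ioc_of_le le_rfl) measurableSet_Ioc hIntZ hIntOn]
  have e1 : ∫ u in Ioc 0 s, max (u - s) 0 / u ^ 2 = 0 := by
    rw [MeasureTheory.setIntegral_congr_fun measurableSet_Ioc hzero]
    simp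
  have e2 : ∫ u in Ioc s 1, max (u - s) 0 / u ^ 2 = ∫ u in Ioc s 1, (u⁻¹ - s * (u ^ 2)⁻¹) := by
    apply MeasureTheory.setIntegral_congr_fun measurableSet_Ioc
    intro u hu
    have hu0 : 0 < u := lt_trans hs hu.1
    show max (u - s) 0 / u ^ 2 = u⁻¹ - s * (u ^ 2)⁻¹
    rw [max_eq_left (by linarith [hu.1.le] : (0:ℝ) ≤ u - s)]
    field_simp
  have e3 : ∫ u in Ioc s 1, (u⁻¹ - s * (u ^ 2)⁻¹) = (Real.log 1 + s * 1⁻¹) - (Real.log s + s * s⁻¹) := by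
    rw [← intervalIntegral.integral_of_le hs1]
    apply intervalIntegral.integral_eq_sub_of_hasDerivAt (f := fun u => Real.log u + s * u⁻¹)
    · intro u hu
      rw [Set.uIcc_of_le hs1] at hu
      have hu0 : 0 < u := lt_of_lt_of_le hs hu.1
      have h1 : HasDerivAt (fun u : ℝ => Real.log u + s * u⁻¹) (u⁻¹ + s * (-(u ^ 2)⁻¹)) u :=
        (Real.hasDerivAt_log hu0.ne').add ((hasDerivAt_inv hu0.ne').const_mul s)
      exact h1.congr_deriv (by ring)
    · apply ContinuousOn.intervalIntegrable
      apply ContinuousOn.sub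
      · apply ContinuousOn.inv₀ continuousOn_id
        intro u hu
        rw [Set.uIcc_of_le hs1] at hu
        exact (lt_of_lt_of_le hs hu.1).ne'
      · apply ContinuousOn.mul continuousOn_const
        apply ContinuousOn.inv₀ (continuous_pow 2).continuousOn
        intro u hu
        rw [Set.uIcc_of_le hs1] at hu
        have : 0 < u := lt_of_lt_of_le hs hu.1
        positivity
  rw [e1, e2, e3]
  rw [Real.log_one, mul_inv_cancel₀ hs.ne']
  ring

lemma tri (u x y : ℝ) (hu : 0 ≤ u) :
    ∫ t : ℝ, (Icc (x - u) x).indicator (fun _ => (1:ℝ)) t * (Icc (y - u) y).indicator (fun _ => (1:ℝ)) t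
      = max (u - |x - y|) 0 := by
  have h1 : ∀ t : ℝ, (Icc (x - u) x).indicator (fun _ => (1:ℝ)) t * (Icc (y - u) y).indicator (fun _ => (1:ℝ)) t
      = (Icc (max (x - u) (y - u)) (min x y)).indicator (fun _ => (1:ℝ)) t := by
    intro t
    rw [← Set.Icc_inter_Icc]
    by_cases h1 : t ∈ Icc (x - u) x <;> by_cases h2 : t ∈ Icc (y - u) y <;>
      simp [Set.indicator_apply, h1, h2, Set.mem_inter_iff]
  simp_rw [h1]
  rw [MeasureTheory.integral_indicator_const _ measurableSet_Icc]
  rw [measureReal_def, Real.volume_Icc]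
  have e : min x y - max (x - u) (y - u) = u - |x - y| := by
    rcases le_total x y with h | h
    · rw [min_eq_left h, max_eq_right (by linarith : x - u ≤ y - u), abs_of_nonpos (by linarith)]; ring
    · rw [min_eq_right h, max_eq_left (by linarith : y - u ≤ x - u), abs_of_nonneg (by linarith)]; ring
  rw [e]
  rcases le_total (u - |x - y|) 0 with h | h
  · rw [ENNReal.ofReal_of_nonpos h, max_eq_right h]; simp
  · rw [ENNReal.toReal_ofReal h, max_eq_left h]; simp

lemma tri' (u x y : ℝ) (hu : 0 ≤ u) :
    ∫ t : ℝ, (if t ≤ x ∧ x ≤ t + u then (1:ℝ) else 0) * (if t ≤ y ∧ y ≤ t + u then (1:ℝ) else 0)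
      = max (u - |x - y|) 0 := by
  have e1 : (fun t : ℝ => (if t ≤ x ∧ x ≤ t + u then (1:ℝ) else 0)
        * (if t ≤ y ∧ y ≤ t + u then (1:ℝ) else 0))
      = fun t => (Icc (x - u) x).indicator (fun _ => (1:ℝ)) t
        * (Icc (y - u) y).indicator (fun _ => (1:ℝ)) t := by
    funext t
    congr 1 <;>
    · simp only [Set.indicator_apply, Set.mem_Icc]
      exact if_congr (by constructor <;> (intro h; exact ⟨by linarith [h.1, h.2], by linarith [h.1, h.2]⟩)) rfl rfl
  rw [e1]
  exact tri u x y hu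


lemma Qfub (a : ℝ) (g : ℝ → ℝ) (hg : Continuous g) (C : ℝ) (hb : ∀ x, ‖g x‖ ≤ C)
    (u : ℝ) (hu : 0 < u) :
    (∫ p, g p.1 * g p.2 * max (u - |p.1 - p.2|) 0
        ∂((volume.restrict (Icc (0:ℝ) a)).prod (volume.restrict (Icc (0:ℝ) a))))
      = (∫ t : ℝ, (∫ x in Icc (0:ℝ) a, g x * (if t ≤ x ∧ x ≤ t + u then (1:ℝ) else 0))
          * (∫ x in Icc (0:ℝ) a, g x * (if t ≤ x ∧ x ≤ t + u then (1:ℝ) else 0)))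
    ∧ Integrable (fun t : ℝ => (∫ x in Icc (0:ℝ) a, g x * (if t ≤ x ∧ x ≤ t + u then (1:ℝ) else 0))
          * (∫ x in Icc (0:ℝ) a, g x * (if t ≤ x ∧ x ≤ t + u then (1:ℝ) else 0))) volume := by
  set μ := volume.restrict (Icc (0:ℝ) a) with hμdef
  set θ : ℝ → ℝ → ℝ := fun t x => if t ≤ x ∧ x ≤ t + u then (1:ℝ) else 0 with hθdef
  have hC0 : 0 ≤ C := le_trans (norm_nonneg _) (hb 0)
  have hθ0 : ∀ t x, 0 ≤ θ t x := by
    intro t x; simp only [hθdef]; split <;> norm_num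
  have hθ1 : ∀ t x, θ t x ≤ 1 := by
    intro t x; simp only [hθdef]; split <;> norm_num
  set Θ : (ℝ × ℝ) × ℝ → ℝ :=
    fun q => (g q.1.1 * θ q.2 q.1.1) * (g q.1.2 * θ q.2 q.1.2) with hΘdef
  have m1 : Measurable fun q : (ℝ × ℝ) × ℝ => q.1.1 := measurable_fst.fst
  have m2 : Measurable fun q : (ℝ × ℝ) × ℝ => q.1.2 := measurable_fst.snd
  have mt : Measurable fun q : (ℝ × ℝ) × ℝ => q.2 := measurable_snd
  have mθ1 : Measurable fun q : (ℝ × ℝ) × ℝ => θ q.2 q.1.1 := by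
    apply Measurable.ite _ measurable_const measurable_const
    exact (measurableSet_le mt m1).inter (measurableSet_le m1 (mt.add_const u))
  have mθ2 : Measurable fun q : (ℝ × ℝ) × ℝ => θ q.2 q.1.2 := by
    apply Measurable.ite _ measurable_const measurable_const
    exact (measurableSet_le mt m2).inter (measurableSet_le m2 (mt.add_const u))
  have hgm : Measurable g := hg.measurable
  have mΘ : Measurable Θ :=
    ((hgm.comp m1).mul mθ1).mul ((hgm.comp m2).mul mθ2)
  have mslice : ∀ p : ℝ × ℝ, Measurable fun t => Θ (p, t) := by
    intro p
    have h1 : Measurable fun t : ℝ => θ t p.1 := by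
      apply Measurable.ite _ measurable_const measurable_const
      exact (measurableSet_le measurable_id measurable_const).inter
        (measurableSet_le measurable_const (measurable_id.add_const u))
    have h2 : Measurable fun t : ℝ => θ t p.2 := by
      apply Measurable.ite _ measurable_const measurable_const
      exact (measurableSet_le measurable_id measurable_const).inter
        (measurableSet_le measurable_const (measurable_id.add_const u))
    simp only [hΘdef]
    exact (measurable_const.mul h1).mul (measurable_const.mul h2)
  have hθind : ∀ x : ℝ, (fun t => θ t x) = (Icc (x - u) x).indicator (fun _ => (1:ℝ)) := by
    intro x; funext t
    simp only [hθdef, Set.indicator_apply, Set.mem_Icc]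
    exact if_congr (by constructor <;> (intro h; constructor <;> linarith [h.1, h.2])) rfl rfl
  have hθt_int : ∀ x : ℝ, Integrable (fun t => θ t x) volume := by
    intro x; rw [hθind x]
    rw [integrable_indicator_iff measurableSet_Icc]
    exact integrableOn_const (by rw [Real.volume_Icc]; exact ENNReal.ofReal_ne_top)
  have hθt_vol : ∀ x : ℝ, (∫ t : ℝ, θ t x) = u := by
    intro x; rw [hθind x, MeasureTheory.integral_indicator_const _ measurableSet_Icc]
    rw [measureReal_def, Real.volume_Icc]
    simp [sub_sub_cancel, ENNReal.toReal_ofReal hu.le]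
  have hbound : ∀ (p : ℝ × ℝ) (t : ℝ), ‖Θ (p, t)‖ ≤ C * C * θ t p.1 := by
    intro p t
    have e : ‖Θ (p, t)‖ = ‖g p.1‖ * θ t p.1 * (‖g p.2‖ * θ t p.2) := by
      simp only [hΘdef, norm_mul, Real.norm_of_nonneg (hθ0 t p.1), Real.norm_of_nonneg (hθ0 t p.2)]
    rw [e]
    have h2' : ‖g p.2‖ * θ t p.2 ≤ C * 1 :=
      mul_le_mul (hb p.2) (hθ1 t p.2) (hθ0 t p.2) hC0
    have h1' : ‖g p.1‖ * θ t p.1 ≤ C * θ t p.1 :=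
      mul_le_mul_of_nonneg_right (hb p.1) (hθ0 t p.1)
    calc ‖g p.1‖ * θ t p.1 * (‖g p.2‖ * θ t p.2)
        ≤ (C * θ t p.1) * (C * 1) :=
          mul_le_mul h1' h2' (mul_nonneg (norm_nonneg _) (hθ0 t p.2))
            (mul_nonneg hC0 (hθ0 t p.1))
      _ = C * C * θ t p.1 := by ring
  have hΘslice : ∀ p : ℝ × ℝ, Integrable (fun t => Θ (p, t)) volume := by
    intro p
    exact Integrable.mono' ((hθt_int p.1).const_mul (C * C))
      (mslice p).aestronglyMeasurable (Filter.Eventually.of_forall fun t => hbound p t)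
  have houter : Integrable (fun p : ℝ × ℝ => ∫ t : ℝ, ‖Θ (p, t)‖) (μ.prod μ) := by
    apply Integrable.mono' (integrable_const (C * C * u))
      ((mΘ.aestronglyMeasurable.norm).integral_prod_right')
    refine Filter.Eventually.of_forall fun p => ?_
    have h1 : (∫ t : ℝ, ‖Θ (p, t)‖) ≤ ∫ t : ℝ, C * C * θ t p.1 := by
      apply integral_mono (hΘslice p).norm ((hθt_int p.1).const_mul (C * C))
      exact fun t => hbound p t
    have h2 : (∫ t : ℝ, C * C * θ t p.1) = C * C * u := by
      rw [MeasureTheory.integral_const_mul, hθt_vol]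
    rw [Real.norm_of_nonneg (integral_nonneg fun t => norm_nonneg _)]
    rw [h2] at h1; exact h1
  have hΘint : Integrable Θ ((μ.prod μ).prod volume) := by
    rw [integrable_prod_iff mΘ.aestronglyMeasurable]
    exact ⟨Filter.Eventually.of_forall hΘslice, houter⟩
  have e1 : ∀ p : ℝ × ℝ, g p.1 * g p.2 * max (u - |p.1 - p.2|) 0 = ∫ t : ℝ, Θ (p, t) := by
    intro p
    have e : (fun t => Θ (p, t)) = fun t => (g p.1 * g p.2) * (θ t p.1 * θ t p.2) := by
      funext t; simp only [hΘdef]; ring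
    rw [e, MeasureTheory.integral_const_mul, tri' u p.1 p.2 hu.le]
  have hswap : (∫ p, (∫ t : ℝ, Θ (p, t)) ∂(μ.prod μ))
      = ∫ t : ℝ, ∫ p, Θ (p, t) ∂(μ.prod μ) :=
    integral_integral_swap (f := fun p t => Θ (p, t)) hΘint
  have e3 : ∀ t : ℝ, (∫ p, Θ (p, t) ∂(μ.prod μ))
      = (∫ x, g x * θ t x ∂μ) * (∫ x, g x * θ t x ∂μ) := by
    intro t
    exact integral_prod_mul (μ := μ) (ν := μ) (fun x => g x * θ t x) (fun x => g x * θ t x)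
  constructor
  · calc (∫ p, g p.1 * g p.2 * max (u - |p.1 - p.2|) 0 ∂(μ.prod μ))
        = ∫ p, (∫ t : ℝ, Θ (p, t)) ∂(μ.prod μ) := by
          exact integral_congr_ae (Filter.Eventually.of_forall fun p => e1 p)
      _ = ∫ t : ℝ, ∫ p, Θ (p, t) ∂(μ.prod μ) := hswap
      _ = _ := by
          have : (fun t : ℝ => ∫ p, Θ (p, t) ∂(μ.prod μ))
              = fun t : ℝ => (∫ x, g x * θ t x ∂μ) * (∫ x, g x * θ t x ∂μ) := funext e3
          rw [this]
  · have hI : Integrable (fun t : ℝ => ∫ p, Θ (p, t) ∂(μ.prod μ)) volume :=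
      hΘint.integral_prod_right
    have e : (fun t : ℝ => ∫ p, Θ (p, t) ∂(μ.prod μ))
        = fun t : ℝ => (∫ x, g x * θ t x ∂μ) * (∫ x, g x * θ t x ∂μ) := funext e3
    rw [e] at hI
    exact hI


lemma core (a : ℝ) (ha : 0 < a) (ha1 : a ≤ 1) (g : ℝ → ℝ) (hg : Continuous g)
    (C : ℝ) (hb : ∀ x, ‖g x‖ ≤ C)
    (H : ∀ x ∈ Icc (0:ℝ) a, ∫ y in (0:ℝ)..x, g y * Real.log (x - y) = 0) :
    ∀ x ∈ Icc (0:ℝ) a, g x = 0 := by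
  set μ := volume.restrict (Icc (0:ℝ) a) with hμdef
  have hgm : Measurable g := hg.measurable
  have hC0 : 0 ≤ C := le_trans (norm_nonneg _) (hb 0)
  have hSlice : ∀ x : ℝ, IntegrableOn (fun y => g y * Real.log (x - y)) (Icc 0 a) volume :=
    fun x => intOn_mul_log hg.aestronglyMeasurable.restrict
      (Filter.Eventually.of_forall fun y => hb y) x
  have Hset : ∀ x ∈ Icc (0:ℝ) a, ∫ y in Icc (0:ℝ) x, g y * Real.log (x - y) = 0 := by
    intro x hx
    rw [MeasureTheory.integral_Icc_eq_integral_Ioc, ← intervalIntegral.integral_of_le hx.1]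
    exact H x hx
  have HsetIco : ∀ y ∈ Icc (0:ℝ) a, ∫ x in Ico (0:ℝ) y, g x * Real.log (y - x) = 0 := by
    intro y hy
    rw [MeasureTheory.integral_Ico_eq_integral_Ioo, ← MeasureTheory.integral_Ioc_eq_integral_Ioo,
      ← intervalIntegral.integral_of_le hy.1]
    exact H y hy
  set B := ∫ t in (-1:ℝ)..1, ‖Real.log t‖ with hBdef
  have hLogBnd : ∀ x ∈ Icc (0:ℝ) a, (∫ y in Icc (0:ℝ) a, ‖Real.log (x - y)‖) ≤ B := by
    intro x hx
    have hsub : Icc (0:ℝ) a ⊆ Icc (x - 1) (x + 1) := by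
      intro y hy
      constructor
      · have : x ≤ 1 := le_trans hx.2 ha1
        linarith [hy.1]
      · have : y ≤ 1 := le_trans hy.2 ha1
        linarith [hx.1]
    have hmono : (∫ y in Icc (0:ℝ) a, ‖Real.log (x - y)‖)
        ≤ ∫ y in Icc (x - 1) (x + 1), ‖Real.log (x - y)‖ := by
      apply setIntegral_mono_set ((intOn_log_sub x (x-1) (x+1)).norm)
      · exact Filter.Eventually.of_forall fun y => norm_nonneg _
      · exact HasSubset.Subset.eventuallyLE hsub
    have heq2 : (∫ y in Icc (x - 1) (x + 1), ‖Real.log (x - y)‖) = B := by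
      rw [MeasureTheory.integral_Icc_eq_integral_Ioc,
        ← intervalIntegral.integral_of_le (by linarith : x - 1 ≤ x + 1)]
      have := intervalIntegral.integral_comp_sub_left (a := x - 1) (b := x + 1)
        (fun t => ‖Real.log t‖) x
      rw [show x - (x + 1) = -1 by ring, show x - (x - 1) = 1 by ring] at this
      rw [this]
    rw [heq2] at hmono
    exact hmono
  have hLogSlice : ∀ x : ℝ, Integrable (fun y => Real.log (x - y)) μ := fun x => intOn_log_sub x 0 a
  have haesmL : AEStronglyMeasurable (fun p : ℝ × ℝ => Real.log (p.1 - p.2)) (μ.prod μ) :=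
    (Real.measurable_log.comp (measurable_fst.sub measurable_snd)).aestronglyMeasurable
  have hLog2 : Integrable (fun p : ℝ × ℝ => Real.log (p.1 - p.2)) (μ.prod μ) := by
    rw [integrable_prod_iff haesmL]
    refine ⟨Filter.Eventually.of_forall hLogSlice, ?_⟩
    apply Integrable.mono' (integrable_const B) (haesmL.norm.integral_prod_right')
    rw [hμdef]
    filter_upwards [ae_restrict_mem measurableSet_Icc] with x hx
    rw [Real.norm_of_nonneg (integral_nonneg fun y => norm_nonneg _)]
    exact hLogBnd x hx
  have mgg : Measurable (fun p : ℝ × ℝ => g p.1 * g p.2) :=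
    (hgm.comp measurable_fst).mul (hgm.comp measurable_snd)
  have hggC : ∀ p : ℝ × ℝ, ‖g p.1 * g p.2‖ ≤ C * C := fun p => by
    rw [norm_mul]; exact mul_le_mul (hb _) (hb _) (norm_nonneg _) hC0
  have hΦint : Integrable (fun p : ℝ × ℝ => g p.1 * g p.2 * Real.log (p.1 - p.2)) (μ.prod μ) :=
    hLog2.bdd_mul (c := C * C) mgg.aestronglyMeasurable
      (Filter.Eventually.of_forall hggC)
  -- Part A : the double integral of Phi vanishes
  set U : ℝ → ℝ := fun x => ∫ y in Ioc x a, g y * Real.log (x - y) with hU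
  have stepA1 : ∀ x ∈ Icc (0:ℝ) a, (∫ y, g x * g y * Real.log (x - y) ∂μ) = g x * U x := by
    intro x hx
    have e : (fun y => g x * g y * Real.log (x - y))
        = fun y => g x * (g y * Real.log (x - y)) := by funext y; ring
    rw [e, MeasureTheory.integral_const_mul]
    congr 1
    have hdj : Disjoint (Icc (0:ℝ) x) (Ioc x a) := by
      rw [Set.disjoint_left]; intro y hy hy2; exact absurd hy.2 (not_le.2 hy2.1)
    have hsub1 : Icc (0:ℝ) x ⊆ Icc 0 a := Set.Icc_subset_Icc le_rfl hx.2
    have hsub2 : Ioc x a ⊆ Icc (0:ℝ) a := fun y hy => ⟨le_trans hx.1 hy.1.le, hy.2⟩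
    rw [hμdef, show Icc (0:ℝ) a = Icc 0 x ∪ Ioc x a from (Set.Icc_union_Ioc_eq_Icc hx.1 hx.2).symm,
      MeasureTheory.setIntegral_union hdj measurableSet_Ioc
        ((hSlice x).mono_set hsub1) ((hSlice x).mono_set hsub2)]
    rw [Hset x hx, zero_add]
  have mΦ : Measurable (fun p : ℝ × ℝ => g p.1 * g p.2 * Real.log (p.1 - p.2)) :=
    mgg.mul (Real.measurable_log.comp (measurable_fst.sub measurable_snd))
  set Fup : ℝ × ℝ → ℝ :=
    fun p => if p.1 < p.2 then g p.1 * g p.2 * Real.log (p.1 - p.2) else 0 with hFup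
  have mFup : Measurable Fup :=
    Measurable.ite (measurableSet_lt measurable_fst measurable_snd) mΦ measurable_const
  have hFupInt : Integrable Fup (μ.prod μ) := by
    apply hΦint.mono mFup.aestronglyMeasurable
    refine Filter.Eventually.of_forall fun p => ?_
    simp only [hFup]
    split
    · exact le_rfl
    · simp only [norm_zero]; positivity
  have stepA2 : ∫ p, Fup p ∂(μ.prod μ) = ∫ x, g x * U x ∂μ := by
    rw [MeasureTheory.integral_prod _ hFupInt]
    rw [hμdef]
    apply MeasureTheory.setIntegral_congr_fun measurableSet_Icc
    intro x hx
    show (∫ y in Icc (0:ℝ) a, Fup (x, y)) = g x * U x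
    have e : (fun y => Fup (x, y)) = (Ioi x).indicator (fun y => g x * (g y * Real.log (x - y))) := by
      funext y
      simp only [hFup, Set.indicator_apply, Set.mem_Ioi]
      split <;> ring
    rw [e, MeasureTheory.integral_indicator measurableSet_Ioi]
    rw [Measure.restrict_restrict measurableSet_Ioi]
    have e2 : Ioi x ∩ Icc 0 a = Ioc x a := by
      ext y; simp only [Set.mem_inter_iff, Set.mem_Ioi, Set.mem_Icc, Set.mem_Ioc]
      constructor
      · rintro ⟨h1, _, h3⟩; exact ⟨h1, h3⟩
      · rintro ⟨h1, h2⟩; exact ⟨h1, le_trans hx.1 h1.le, h2⟩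
    rw [e2, MeasureTheory.integral_const_mul]
  have stepA3 : ∫ p, Fup p ∂(μ.prod μ) = 0 := by
    rw [MeasureTheory.integral_prod_symm _ hFupInt]
    have hinner : ∀ y ∈ Icc (0:ℝ) a, (∫ x, Fup (x, y) ∂μ) = 0 := by
      intro y hy
      have e : (fun x => Fup (x, y))
          = (Iio y).indicator (fun x => g y * (g x * Real.log (y - x))) := by
        funext x
        simp only [hFup, Set.indicator_apply, Set.mem_Iio]
        split
        · rw [show Real.log (x - y) = Real.log (y - x) by rw [← neg_sub y x, Real.log_neg_eq_log]]
          ring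
        · rfl
      rw [e, MeasureTheory.integral_indicator measurableSet_Iio]
      rw [hμdef, Measure.restrict_restrict measurableSet_Iio]

      have e2 : Iio y ∩ Icc 0 a = Ico 0 y := by
        ext x; simp only [Set.mem_inter_iff, Set.mem_Iio, Set.mem_Icc, Set.mem_Ico]
        constructor
        · rintro ⟨h1, h2, _⟩; exact ⟨h2, h1⟩
        · rintro ⟨h1, h2⟩; exact ⟨h2, h1, le_trans h2.le hy.2⟩
      rw [e2, MeasureTheory.integral_const_mul, HsetIco y hy, mul_zero]
    calc ∫ y, (∫ x, Fup (x, y) ∂μ) ∂μ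
        = ∫ y in Icc (0:ℝ) a, (0:ℝ) := by
          rw [hμdef]
          exact MeasureTheory.setIntegral_congr_fun measurableSet_Icc fun y hy => hinner y hy
      _ = 0 := by simp
  have hGU : ∫ x, g x * U x ∂μ = 0 := stepA2 ▸ stepA3
  have hJ : ∫ p, g p.1 * g p.2 * Real.log (p.1 - p.2) ∂(μ.prod μ) = 0 := by
    rw [MeasureTheory.integral_prod _ hΦint]
    calc ∫ x, (∫ y, g x * g y * Real.log (x - y) ∂μ) ∂μ
        = ∫ x, g x * U x ∂μ := by
          rw [hμdef]
          apply MeasureTheory.setIntegral_congr_fun measurableSet_Icc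
          intro x hx
          exact stepA1 x hx
      _ = 0 := hGU
  -- Part E : kernel decomposition and positivity
  set κ : ℝ × ℝ → ℝ := fun p => ∫ u in Ioc (0:ℝ) 1, max (u - |p.1 - p.2|) 0 / u ^ 2 with hκ
  have haeBox : ∀ᵐ p ∂(μ.prod μ), p ∈ Icc (0:ℝ) a ×ˢ Icc (0:ℝ) a := by
    rw [hμdef, Measure.prod_restrict]
    exact ae_restrict_mem (measurableSet_Icc.prod measurableSet_Icc)
  have haeD : ∀ᵐ p : ℝ × ℝ ∂(μ.prod μ), p.1 ≠ p.2 := by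
    have hD : MeasurableSet {p : ℝ × ℝ | p.1 = p.2} :=
      measurableSet_eq_fun measurable_fst measurable_snd
    rw [MeasureTheory.ae_iff]
    have e : {p : ℝ × ℝ | ¬p.1 ≠ p.2} = {p : ℝ × ℝ | p.1 = p.2} := by ext p; simp
    rw [e, Measure.prod_apply hD]
    have e2 : ∀ x : ℝ, μ (Prod.mk x ⁻¹' {p : ℝ × ℝ | p.1 = p.2}) = 0 := by
      intro x
      have e3 : (Prod.mk x ⁻¹' {p : ℝ × ℝ | p.1 = p.2}) = {x} := by
        ext y; simp [eq_comm]
      rw [e3, hμdef, Measure.restrict_apply (measurableSet_singleton x)]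
      exact measure_mono_null Set.inter_subset_left Real.volume_singleton
    simp only [e2, lintegral_zero]
  have haeS : ∀ᵐ p : ℝ × ℝ ∂(μ.prod μ), 0 < |p.1 - p.2| ∧ |p.1 - p.2| ≤ 1 := by
    filter_upwards [haeBox, haeD] with p hp hne
    obtain ⟨hp1, hp2⟩ := Set.mem_prod.mp hp
    refine ⟨abs_pos.2 (sub_ne_zero.2 hne), ?_⟩
    have : |p.1 - p.2| ≤ a :=
      abs_le.2 ⟨by linarith [hp1.1, hp1.2, hp2.1, hp2.2], by linarith [hp1.1, hp1.2, hp2.1, hp2.2]⟩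
    linarith
  have hdecompAe : ∀ᵐ p ∂(μ.prod μ), g p.1 * g p.2 * Real.log (p.1 - p.2)
      = -(g p.1 * g p.2 * κ p) - g p.1 * g p.2 * max (1 - |p.1 - p.2|) 0 := by
    filter_upwards [haeS] with p hs
    obtain ⟨hs0, hs1⟩ := hs
    have hκval : κ p = -Real.log |p.1 - p.2| - 1 + |p.1 - p.2| := kern hs0 hs1
    have hlog : Real.log (p.1 - p.2) = Real.log |p.1 - p.2| := (Real.log_abs _).symm
    rw [hκval, hlog, max_eq_left (by linarith : (0:ℝ) ≤ 1 - |p.1 - p.2|)]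
    ring
  have hΨ2int : Integrable (fun p : ℝ × ℝ => g p.1 * g p.2 * max (1 - |p.1 - p.2|) 0) (μ.prod μ) := by
    apply Integrable.mono' (integrable_const (C * C))
      ((mgg.mul ((measurable_const.sub (measurable_fst.sub measurable_snd).abs).max
        measurable_const)).aestronglyMeasurable)
    refine Filter.Eventually.of_forall fun p => ?_
    show ‖g p.1 * g p.2 * max (1 - |p.1 - p.2|) 0‖ ≤ C * C
    rw [norm_mul]
    have h1 : ‖max (1 - |p.1 - p.2|) 0‖ ≤ 1 := by
      rw [Real.norm_of_nonneg (le_max_right _ _)]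
      exact max_le (by linarith [abs_nonneg (p.1 - p.2)]) zero_le_one
    calc ‖g p.1 * g p.2‖ * ‖max (1 - |p.1 - p.2|) 0‖
        ≤ (C * C) * 1 := mul_le_mul (hggC p) h1 (norm_nonneg _) (by positivity)
      _ = C * C := by ring
  have hΨ1int : Integrable (fun p : ℝ × ℝ => g p.1 * g p.2 * κ p) (μ.prod μ) := by
    apply (hΦint.neg.sub hΨ2int).congr
    filter_upwards [hdecompAe] with p hp
    simp only [Pi.sub_apply, Pi.neg_apply]
    linarith [hp]
  have hsplit0 : (0:ℝ) = -(∫ p, g p.1 * g p.2 * κ p ∂(μ.prod μ))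
      - ∫ p, g p.1 * g p.2 * max (1 - |p.1 - p.2|) 0 ∂(μ.prod μ) := by
    have e := integral_congr_ae hdecompAe
    rw [hJ] at e
    refine e.trans ?_
    have hIntNeg : Integrable (fun p : ℝ × ℝ => -(g p.1 * g p.2 * κ p)) (μ.prod μ) := hΨ1int.neg
    rw [integral_sub hIntNeg hΨ2int, integral_neg]
  have hQpos : ∀ u : ℝ, 0 < u →
      0 ≤ ∫ p, g p.1 * g p.2 * max (u - |p.1 - p.2|) 0 ∂(μ.prod μ) := by
    intro u hu
    rw [hμdef, (Qfub a g hg C hb u hu).1]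
    exact integral_nonneg fun t => mul_self_nonneg _
  have hT1 : 0 ≤ ∫ p, g p.1 * g p.2 * κ p ∂(μ.prod μ) := by
    set ν := volume.restrict (Ioc (0:ℝ) 1) with hν
    set Λ : (ℝ × ℝ) × ℝ → ℝ :=
      fun q => g q.1.1 * g q.1.2 * (max (q.2 - |q.1.1 - q.1.2|) 0 / q.2 ^ 2) with hΛ
    have m1 : Measurable fun q : (ℝ × ℝ) × ℝ => q.1.1 := measurable_fst.fst
    have m2 : Measurable fun q : (ℝ × ℝ) × ℝ => q.1.2 := measurable_fst.snd
    have mt : Measurable fun q : (ℝ × ℝ) × ℝ => q.2 := measurable_snd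
    have mΛ : Measurable Λ :=
      (((hgm.comp m1).mul (hgm.comp m2)).mul
        (((mt.sub ((m1.sub m2).abs)).max measurable_const).div (mt.pow_const 2)))
    have hnorm : ∀ (p : ℝ × ℝ) (u : ℝ),
        ‖Λ (p, u)‖ = ‖g p.1 * g p.2‖ * (max (u - |p.1 - p.2|) 0 / u ^ 2) := by
      intro p u
      have h2 : (0:ℝ) ≤ max (u - |p.1 - p.2|) 0 / u ^ 2 :=
        div_nonneg (le_max_right _ _) (sq_nonneg u)
      simp only [hΛ]
      rw [norm_mul, Real.norm_of_nonneg h2]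
    have hΛint : Integrable Λ ((μ.prod μ).prod ν) := by
      rw [integrable_prod_iff mΛ.aestronglyMeasurable]
      constructor
      · filter_upwards [haeS] with p hs
        obtain ⟨hs0, _⟩ := hs
        have mker : Measurable fun u : ℝ => Λ (p, u) := by
          simp only [hΛ]
          exact measurable_const.mul
            (((measurable_id.sub measurable_const).max measurable_const).div
              (measurable_id.pow_const 2))
        apply Integrable.mono' (integrable_const (‖g p.1 * g p.2‖ * |p.1 - p.2|⁻¹))
          mker.aestronglyMeasurable
        rw [hν]
        filter_upwards [ae_restrict_mem measurableSet_Ioc] with u hu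
        rw [hnorm p u]
        have hker : max (u - |p.1 - p.2|) 0 / u ^ 2 ≤ |p.1 - p.2|⁻¹ := by
          rcases le_total u |p.1 - p.2| with h | h
          · rw [max_eq_right (by linarith), zero_div]
            positivity
          · rw [max_eq_left (by linarith)]
            rw [div_le_iff₀ (pow_pos hu.1 2)]
            have h1 : |p.1 - p.2| * (u - |p.1 - p.2|) ≤ |p.1 - p.2| * u := by nlinarith
            have h2 : |p.1 - p.2| * u ≤ u * u := by nlinarith [hu.1]
            rw [inv_mul_eq_div, le_div_iff₀ hs0]
            nlinarith [hu.1]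
        exact mul_le_mul_of_nonneg_left hker (norm_nonneg _)
      · apply Integrable.mono' (hLog2.norm.const_mul (C * C))
          ((mΛ.aestronglyMeasurable.norm).integral_prod_right')
        filter_upwards [haeS] with p hs
        obtain ⟨hs0, hs1⟩ := hs
        have hval : (∫ u, ‖Λ (p, u)‖ ∂ν) = ‖g p.1 * g p.2‖ * κ p := by
          calc (∫ u, ‖Λ (p, u)‖ ∂ν)
              = ∫ u, ‖g p.1 * g p.2‖ * (max (u - |p.1 - p.2|) 0 / u ^ 2) ∂ν := by
                apply integral_congr_ae
                exact Filter.Eventually.of_forall fun u => hnorm p u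
            _ = ‖g p.1 * g p.2‖ * κ p := by rw [MeasureTheory.integral_const_mul]
        rw [Real.norm_of_nonneg (integral_nonneg fun u => norm_nonneg _), hval]
        have hκval : κ p = -Real.log |p.1 - p.2| - 1 + |p.1 - p.2| := kern hs0 hs1
        have hκnn : 0 ≤ κ p := by
          rw [hκval]
          have := Real.log_le_sub_one_of_pos hs0
          linarith
        have hle : κ p ≤ ‖Real.log (p.1 - p.2)‖ := by
          rw [hκval, show Real.log (p.1 - p.2) = Real.log |p.1 - p.2| from (Real.log_abs _).symm,
            Real.norm_eq_abs]
          have := neg_abs_le (Real.log |p.1 - p.2|)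
          linarith
        exact mul_le_mul (hggC p) hle hκnn (by positivity)
    have e1 : (fun p : ℝ × ℝ => g p.1 * g p.2 * κ p) = fun p => ∫ u, Λ (p, u) ∂ν := by
      funext p
      simp only [hΛ, hκ]
      rw [MeasureTheory.integral_const_mul]
    rw [e1]
    rw [integral_integral_swap (f := fun p u => Λ (p, u)) hΛint]
    apply integral_nonneg_of_ae
    rw [hν]
    filter_upwards [ae_restrict_mem measurableSet_Ioc] with u hu
    have e2 : (∫ p, Λ (p, u) ∂(μ.prod μ))
        = (∫ p, g p.1 * g p.2 * max (u - |p.1 - p.2|) 0 ∂(μ.prod μ)) / u ^ 2 := by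
      rw [← integral_div]
      apply integral_congr_ae
      refine Filter.Eventually.of_forall fun p => ?_
      simp only [hΛ]
      rw [mul_div_assoc]
    rw [e2]
    exact div_nonneg (hQpos u hu.1) (sq_nonneg u)
  have hQ1 : ∫ p, g p.1 * g p.2 * max (1 - |p.1 - p.2|) 0 ∂(μ.prod μ) = 0 := by
    have h1 := hQpos 1 one_pos
    linarith [hsplit0, hT1, h1]
  -- extraction of h = 0
  obtain ⟨heq, hint⟩ := Qfub a g hg C hb 1 one_pos
  rw [← hμdef] at heq
  rw [hQ1] at heq
  set h : ℝ → ℝ :=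
    fun t => ∫ x in Icc (0:ℝ) a, g x * (if t ≤ x ∧ x ≤ t + 1 then (1:ℝ) else 0) with hh
  have hae0 : ∀ᵐ t : ℝ, h t = 0 := by
    have h0 := (integral_eq_zero_iff_of_nonneg
      (fun t => mul_self_nonneg (h t)) hint).mp heq.symm
    filter_upwards [h0] with t ht
    exact mul_self_eq_zero.mp ht
  set ψ : ℝ → ℝ := fun t => ∫ u in (0:ℝ)..t, g u with hψ
  have hψd : ∀ t : ℝ, HasDerivAt ψ (g t) t := by
    intro t
    exact intervalIntegral.integral_hasDerivAt_right (hg.intervalIntegrable 0 t)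
      (hg.stronglyMeasurableAtFilter volume (nhds t)) hg.continuousAt
  have hrel : ∀ t ∈ Icc (0:ℝ) a, h t = ψ a - ψ t := by
    intro t ht
    have e : ∀ x ∈ Icc (0:ℝ) a,
        g x * (if t ≤ x ∧ x ≤ t + 1 then (1:ℝ) else 0) = (Ici t).indicator g x := by
      intro x hx
      have hiff : (t ≤ x ∧ x ≤ t + 1) ↔ t ≤ x := by
        constructor
        · exact And.left
        · intro h'
          refine ⟨h', ?_⟩
          have : x ≤ 1 := le_trans hx.2 ha1
          linarith [ht.1]
      rw [Set.indicator_apply]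
      simp only [Set.mem_Ici]
      rw [if_congr hiff rfl rfl]
      split <;> simp
    rw [hh]
    simp only
    rw [MeasureTheory.setIntegral_congr_fun measurableSet_Icc e]
    rw [MeasureTheory.setIntegral_indicator measurableSet_Ici]
    have e2 : Icc (0:ℝ) a ∩ Ici t = Icc t a := by
      ext z; simp only [Set.mem_inter_iff, Set.mem_Icc, Set.mem_Ici]
      constructor
      · rintro ⟨⟨_, h2⟩, h3⟩; exact ⟨h3, h2⟩
      · rintro ⟨h1, h2⟩; exact ⟨⟨le_trans ht.1 h1, h2⟩, h1⟩
    rw [e2, MeasureTheory.integral_Icc_eq_integral_Ioc, ← intervalIntegral.integral_of_le ht.2]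
    have := intervalIntegral.integral_add_adjacent_intervals
      (hg.intervalIntegrable (μ := volume) 0 t) (hg.intervalIntegrable (μ := volume) t a)
    simp only [hψ]
    linarith [this]
  have hψc : Continuous ψ := continuous_iff_continuousAt.2 fun t => (hψd t).continuousAt
  have hzero : ∀ t ∈ Icc (0:ℝ) a, ψ a - ψ t = 0 := by
    by_contra hcon
    push_neg at hcon
    obtain ⟨t₀, ht₀, hne⟩ := hcon
    have hρc : Continuous fun t => ψ a - ψ t := continuous_const.sub hψc
    have hδ' : ∃ δ > 0, ∀ t, |t - t₀| < δ → ψ a - ψ t ≠ 0 := by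
      obtain ⟨δ, hδ, hδ2⟩ := Metric.continuousAt_iff.mp hρc.continuousAt
        (ε := |ψ a - ψ t₀|) (abs_pos.2 hne)
      refine ⟨δ, hδ, fun t hts h0 => ?_⟩
      have := hδ2 (show dist t t₀ < δ by rwa [Real.dist_eq])
      rw [Real.dist_eq, h0, zero_sub, abs_neg] at this
      exact lt_irrefl _ this
    obtain ⟨δ, hδ, hδ2⟩ := hδ'
    set l := max 0 (t₀ - δ / 2) with hl
    set rr := min a (t₀ + δ / 2) with hrr
    have hl0 : 0 ≤ l := le_max_left _ _
    have hra : rr ≤ a := min_le_left _ _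
    have hlr : l < rr := by
      rcases lt_or_eq_of_le ht₀.2 with hlt | heq'
      · have h1 : l ≤ t₀ := max_le ht₀.1 (by linarith)
        have h2 : t₀ < rr := lt_min hlt (by linarith)
        linarith
      · have h0a : 0 < t₀ := by rw [heq']; exact ha
        have h1 : l < t₀ := max_lt h0a (by linarith)
        have h2 : t₀ ≤ rr := le_min (le_of_eq heq') (by linarith)
        linarith
    have hne2 : ∀ t ∈ Ioo l rr, h t ≠ 0 := by
      intro t htm
      have h1 : t ∈ Icc (0:ℝ) a := ⟨le_trans hl0 htm.1.le, le_trans htm.2.le hra⟩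
      have h2 : |t - t₀| < δ := by
        have e1 : t₀ - δ / 2 ≤ l := le_max_right _ _
        have e2 : rr ≤ t₀ + δ / 2 := min_le_right _ _
        rw [abs_lt]
        constructor <;> [linarith [htm.1]; linarith [htm.2]]
      rw [hrel t h1]
      exact hδ2 t h2
    have hnull : volume {t : ℝ | h t ≠ 0} = 0 := by
      have h0 := hae0
      rw [MeasureTheory.ae_iff] at h0
      simpa using h0
    have : volume (Ioo l rr) = 0 :=
      measure_mono_null (fun t htm => hne2 t htm) hnull
    rw [Real.volume_Ioo, ENNReal.ofReal_eq_zero] at this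
    linarith
  intro x hx
  have hd1 : HasDerivWithinAt ψ (g x) (Icc (0:ℝ) a) x := (hψd x).hasDerivWithinAt
  have hd2 : HasDerivWithinAt ψ 0 (Icc (0:ℝ) a) x := by
    have hc : HasDerivWithinAt (fun _ : ℝ => ψ a) 0 (Icc (0:ℝ) a) x := hasDerivWithinAt_const _ _ _
    apply hc.congr
    · intro t ht
      have := hzero t ht
      linarith
    · have := hzero x hx
      linarith
  have e1 := hd1.derivWithin (uniqueDiffOn_Icc ha x hx)
  have e2 := hd2.derivWithin (uniqueDiffOn_Icc ha x hx)
  rw [← e1, e2]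


/-- Let `r > 0` and `f ∈ C¹([0,r];ℝ)` with `f(0) = 0`. If
`T[f](x) = -(1/(8π²)) ∫₀ˣ f'(y) log(x-y) dy` vanishes for every `x ∈ [0,r]`, then `f`
vanishes identically on `[0,r]`; i.e. `T` is injective on `{f ∈ C¹([0,r]) : f(0) = 0}`. -/
theorem stmt4 (r : ℝ) (hr : 0 < r) (f f' : ℝ → ℝ)
    (hf : ∀ y ∈ Set.Icc (0:ℝ) r, HasDerivWithinAt f (f' y) (Set.Icc (0:ℝ) r) y)
    (hf' : ContinuousOn f' (Set.Icc (0:ℝ) r))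
    (h0 : f 0 = 0)
    (hT : ∀ x ∈ Set.Icc (0:ℝ) r,
      (-(1 / (8 * Real.pi ^ 2))) * (∫ y in (0:ℝ)..x, f' y * Real.log (x - y)) = 0) :
    ∀ x ∈ Set.Icc (0:ℝ) r, f x = 0 := by
  have hcoef : (-(1 / (8 * Real.pi ^ 2))) ≠ 0 := by
    have := Real.pi_ne_zero
    simp only [ne_eq, neg_eq_zero, div_eq_zero_iff, one_ne_zero, false_or]
    positivity
  have hT0 : ∀ x ∈ Set.Icc (0:ℝ) r, ∫ y in (0:ℝ)..x, f' y * Real.log (x - y) = 0 := by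
    intro x hx
    have := hT x hx
    rcases mul_eq_zero.mp this with h | h
    · exact absurd h hcoef
    · exact h
  -- clamped version of f'
  set cl : ℝ → ℝ := fun y => min (max y 0) r with hcl
  have hclmem : ∀ y, cl y ∈ Icc (0:ℝ) r := by
    intro y
    constructor
    · exact le_min (le_max_right y 0) hr.le
    · exact min_le_right _ _
  have hcleq : ∀ y ∈ Icc (0:ℝ) r, cl y = y := by
    intro y hy
    rw [hcl]
    simp only
    rw [max_eq_left hy.1, min_eq_left hy.2]
  set g₀ : ℝ → ℝ := fun y => f' (cl y) with hg₀
  have hclc : Continuous cl := (continuous_id.max continuous_const).min continuous_const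
  have hg₀c : Continuous g₀ := hf'.comp_continuous hclc hclmem
  obtain ⟨C, hC⟩ := (isCompact_Icc (a := (0:ℝ)) (b := r)).exists_bound_of_continuousOn hf'
  have hg₀b : ∀ y, ‖g₀ y‖ ≤ C := fun y => hC (cl y) (hclmem y)
  have hg₀eq : ∀ y ∈ Icc (0:ℝ) r, g₀ y = f' y := fun y hy => by rw [hg₀]; simp only; rw [hcleq y hy]
  -- main induction
  have main : ∀ n : ℕ, ∀ y ∈ Icc (0:ℝ) r, y < min (n:ℝ) r → f' y = 0 := by
    intro n
    induction n with
    | zero =>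
      intro y hy hlt
      exfalso
      have : min (0:ℝ) r = 0 := min_eq_left hr.le
      rw [Nat.cast_zero, this] at hlt
      linarith [hy.1]
    | succ n ih =>
      rcases le_or_gt r n with hrn | hnr
      · -- r ≤ n : nothing new
        intro y hy hlt
        apply ih y hy
        rw [min_eq_right hrn]
        exact lt_of_lt_of_le hlt (min_le_right _ _)
      · -- n < r
        set a' : ℝ := min (r - (n:ℝ)) 1 with ha'
        have ha'pos : 0 < a' := lt_min (by linarith) one_pos
        have ha'le1 : a' ≤ 1 := min_le_right _ _
        have ha'ler : a' ≤ r - n := min_le_left _ _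
        have hn0 : (0:ℝ) ≤ n := Nat.cast_nonneg n
        -- the shifted function
        have H' : ∀ x ∈ Icc (0:ℝ) a', ∫ y in (0:ℝ)..x, g₀ ((n:ℝ) + y) * Real.log (x - y) = 0 := by
          intro x hx
          have hx0 : 0 ≤ x := hx.1
          have hxr : (n:ℝ) + x ≤ r := by have := hx.2; linarith [ha'ler]
          set φ : ℝ → ℝ := fun s => g₀ s * Real.log (((n:ℝ) + x) - s) with hφ
          have e1 : ∫ y in (0:ℝ)..x, g₀ ((n:ℝ) + y) * Real.log (x - y)
              = ∫ y in (0:ℝ)..x, φ ((n:ℝ) + y) := by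
            apply intervalIntegral.integral_congr
            intro y _
            show g₀ ((n:ℝ) + y) * Real.log (x - y) = φ ((n:ℝ) + y)
            have : φ ((n:ℝ) + y) = g₀ ((n:ℝ) + y) * Real.log (((n:ℝ) + x) - ((n:ℝ) + y)) := rfl
            rw [this, show ((n:ℝ) + x) - ((n:ℝ) + y) = x - y by ring]
          have e2 : ∫ y in (0:ℝ)..x, φ ((n:ℝ) + y) = ∫ s in (n:ℝ)..((n:ℝ) + x), φ s := by
            have := intervalIntegral.integral_comp_add_left (a := (0:ℝ)) (b := x) φ (n:ℝ)
            rw [add_zero] at this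
            exact this
          have h1 : IntervalIntegrable φ volume 0 (n:ℝ) := II_mul_log hg₀c _ _ _
          have h2 : IntervalIntegrable φ volume (n:ℝ) ((n:ℝ) + x) := II_mul_log hg₀c _ _ _
          have e3 : (∫ s in (0:ℝ)..(n:ℝ), φ s) + (∫ s in (n:ℝ)..((n:ℝ)+x), φ s)
              = ∫ s in (0:ℝ)..((n:ℝ)+x), φ s :=
            intervalIntegral.integral_add_adjacent_intervals h1 h2
          have e4 : (∫ s in (0:ℝ)..((n:ℝ)+x), φ s) = 0 := by
            have ecg : ∫ s in (0:ℝ)..((n:ℝ)+x), φ s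
                = ∫ s in (0:ℝ)..((n:ℝ)+x), f' s * Real.log (((n:ℝ)+x) - s) := by
              apply intervalIntegral.integral_congr
              intro s hs
              rw [Set.uIcc_of_le (by linarith : (0:ℝ) ≤ (n:ℝ) + x)] at hs
              show g₀ s * Real.log (((n:ℝ) + x) - s) = f' s * Real.log (((n:ℝ) + x) - s)
              rw [hg₀eq s ⟨hs.1, le_trans hs.2 hxr⟩]
            rw [ecg]
            exact hT0 ((n:ℝ) + x) ⟨by linarith, hxr⟩
          have e5 : (∫ s in (0:ℝ)..(n:ℝ), φ s) = 0 := by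
            rw [intervalIntegral.integral_of_le hn0, MeasureTheory.integral_Ioc_eq_integral_Ioo]
            apply MeasureTheory.integral_eq_zero_of_ae
            filter_upwards [ae_restrict_mem measurableSet_Ioo] with s hs
            have hs0 : f' s = 0 := by
              apply ih s ⟨hs.1.le, by linarith [hs.2]⟩
              rw [min_eq_left hnr.le]
              exact hs.2
            show g₀ s * Real.log (((n:ℝ) + x) - s) = 0
            rw [hg₀eq s ⟨hs.1.le, by linarith [hs.2]⟩, hs0, zero_mul]
          rw [e1, e2, ← sub_eq_zero]
          rw [show (∫ s in (n:ℝ)..((n:ℝ)+x), φ s) - 0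
            = (∫ s in (n:ℝ)..((n:ℝ)+x), φ s) - 0 from rfl]
          rw [sub_zero]
          linarith [e3, e4, e5]
        have hcore := core a' ha'pos ha'le1 (fun y => g₀ ((n:ℝ) + y))
          (hg₀c.comp (continuous_const.add continuous_id))
          C (fun y => hg₀b _) H'
        intro y hy hlt
        rcases lt_or_ge y (n:ℝ) with hyn | hyn
        · apply ih y hy
          rw [min_eq_left hnr.le]
          exact hyn
        · have ht1 : y - (n:ℝ) ∈ Icc (0:ℝ) a' := by
            constructor
            · linarith
            · have h1 : y < min ((n:ℝ)+1) r := by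
                rwa [Nat.cast_succ] at hlt
              have h2 : y < (n:ℝ) + 1 := lt_of_lt_of_le h1 (min_le_left _ _)
              have h3 : y < r := lt_of_lt_of_le h1 (min_le_right _ _)
              rw [ha']
              exact le_min (by linarith) (by linarith)
          have h5 : g₀ ((n:ℝ) + (y - (n:ℝ))) = 0 := hcore (y - (n:ℝ)) ht1
          rw [show (n:ℝ) + (y - (n:ℝ)) = y by ring] at h5
          rw [← hg₀eq y hy]
          exact h5
  -- f' vanishes on [0, r)
  have hf'zero : ∀ y ∈ Icc (0:ℝ) r, y < r → f' y = 0 := by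
    intro y hy hyr
    obtain ⟨n, hn⟩ := exists_nat_gt r
    apply main n y hy
    rw [min_eq_right hn.le]
    exact hyr
  -- f' r = 0 by continuity
  have hf'r : f' r = 0 := by
    have hneBot : (𝓝[Ico (0:ℝ) r] r).NeBot := by
      rw [← mem_closure_iff_nhdsWithin_neBot, closure_Ico hr.ne]
      exact ⟨hr.le, le_rfl⟩
    have h1 : Filter.Tendsto f' (𝓝[Ico (0:ℝ) r] r) (𝓝 (f' r)) :=
      ((hf'.continuousWithinAt ⟨hr.le, le_rfl⟩).mono Ico_subset_Icc_self)
    have h2 : Filter.Tendsto f' (𝓝[Ico (0:ℝ) r] r) (𝓝 0) := by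
      apply Filter.Tendsto.congr' _ tendsto_const_nhds
      filter_upwards [self_mem_nhdsWithin] with y hy
      exact (hf'zero y (Ico_subset_Icc_self hy) hy.2).symm
    exact tendsto_nhds_unique h1 h2
  have hf'all : ∀ y ∈ Icc (0:ℝ) r, f' y = 0 := by
    intro y hy
    rcases lt_or_eq_of_le hy.2 with h | h
    · exact hf'zero y hy h
    · rw [h]; exact hf'r
  -- conclude f = 0
  intro x hx
  have hbound : ∀ y ∈ Icc (0:ℝ) r, ‖f' y‖ ≤ 0 := fun y hy => by rw [hf'all y hy]; simp
  have := (convex_Icc (0:ℝ) r).norm_image_sub_le_of_norm_hasDerivWithin_le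
    hf hbound ⟨le_rfl, hr.le⟩ hx
  rw [zero_mul] at this
  have : f x = f 0 := by
    have h1 : ‖f x - f 0‖ ≤ 0 := this
    have := norm_nonneg (f x - f 0)
    have : ‖f x - f 0‖ = 0 := le_antisymm h1 (norm_nonneg _)
    rwa [norm_eq_zero, sub_eq_zero] at this
  rw [this, h0]
end

section
/- For every x ≠ 0 the improper integral I(x) = lim_{R→∞} ∫₀^R cos(kx) · (log k)/((log k)² + 1) dk exists and equals the absolutely convergent integral (1/x) ∫₀^∞ sin(kx) · ((log k)² − 1)/( k · ((log k)² + 1)² ) dk; moreover |I(x)| ≤ 2/|x| for all x ≠ 0, and I is continuous on ℝ \ {0}. -/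
open MeasureTheory Real Set Filter


private lemma psi_deriv (l : ℝ) :
    HasDerivAt (fun l : ℝ => l / (l ^ 2 + 1)) ((1 - l ^ 2) / (l ^ 2 + 1) ^ 2) l := by
  have h1 : HasDerivAt (fun l : ℝ => l ^ 2 + 1) (2 * l) l := by
    simpa using (hasDerivAt_pow 2 l).add_const 1
  have h2 := (hasDerivAt_id l).div h1 (by positivity)
  refine h2.congr_deriv ?_
  field_simp
  simp only [id]; ring

private lemma psi_abs_le (l : ℝ) : |l / (l ^ 2 + 1)| ≤ 1 / 2 := by
  rw [abs_div, abs_of_pos (by positivity : (0:ℝ) < l ^ 2 + 1), div_le_iff₀ (by positivity)]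
  nlinarith [sq_nonneg (|l| - 1), sq_abs l]

private lemma psi_top : Tendsto (fun l : ℝ => l / (l ^ 2 + 1)) atTop (nhds 0) := by
  apply squeeze_zero_norm' ?_ tendsto_inv_atTop_zero
  filter_upwards [eventually_ge_atTop (1:ℝ)] with l hl
  have hl0 : (0:ℝ) < l := by linarith
  rw [Real.norm_eq_abs, abs_of_nonneg (by positivity)]
  calc l / (l ^ 2 + 1) ≤ l / l ^ 2 :=
        div_le_div_of_nonneg_left (by positivity) (by positivity) (by linarith)
    _ = l⁻¹ := by rw [sq, ← div_div, div_self hl0.ne', one_div]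

private lemma psi_bot : Tendsto (fun l : ℝ => l / (l ^ 2 + 1)) atBot (nhds 0) := by
  apply squeeze_zero_norm' ?_ (tendsto_inv_atTop_zero.comp tendsto_abs_atBot_atTop)
  filter_upwards [eventually_le_atBot (-1:ℝ)] with l hl
  have hl0 : (0:ℝ) < |l| := by rw [abs_pos]; intro h; rw [h] at hl; norm_num at hl
  rw [Real.norm_eq_abs, abs_div, abs_of_pos (by positivity : (0:ℝ) < l ^ 2 + 1)]
  calc |l| / (l ^ 2 + 1) ≤ |l| / |l| ^ 2 :=
        div_le_div_of_nonneg_left (abs_nonneg l) (by positivity)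
          (by rw [sq_abs]; linarith)
    _ = (fun y : ℝ => y⁻¹) |l| := by
        simp only []; rw [sq, ← div_div, div_self hl0.ne', one_div]

private lemma phi_cont : Continuous (fun l : ℝ => |l ^ 2 - 1| / (l ^ 2 + 1) ^ 2) := by
  exact Continuous.div (by continuity) (by continuity) (fun l => by positivity)

private lemma phi_integrable : Integrable (fun l : ℝ => |l ^ 2 - 1| / (l ^ 2 + 1) ^ 2) := by
  apply integrable_inv_one_add_sq.mono' phi_cont.aestronglyMeasurable
  filter_upwards with l
  have h1 : |l ^ 2 - 1| ≤ l ^ 2 + 1 := by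
    rw [abs_le]; constructor <;> nlinarith [sq_nonneg l]
  rw [Real.norm_eq_abs, abs_of_nonneg (by positivity)]
  calc |l ^ 2 - 1| / (l ^ 2 + 1) ^ 2 ≤ (l ^ 2 + 1) / (l ^ 2 + 1) ^ 2 := by gcongr
    _ = (1 + l ^ 2)⁻¹ := by rw [sq ((l:ℝ) ^ 2 + 1), ← div_div, div_self (by positivity), one_div,
        add_comm]

private lemma phi_Iic : ∫ l in Iic (-1:ℝ), |l ^ 2 - 1| / (l ^ 2 + 1) ^ 2 = 1 / 2 := by
  have heq : EqOn (fun l : ℝ => |l ^ 2 - 1| / (l ^ 2 + 1) ^ 2)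
      (fun l : ℝ => (l ^ 2 - 1) / (l ^ 2 + 1) ^ 2) (Iic (-1:ℝ)) := by
    intro l hl
    simp only [mem_Iic] at hl
    have : (0:ℝ) ≤ l ^ 2 - 1 := by nlinarith
    simp [abs_of_nonneg this]
  rw [setIntegral_congr_fun measurableSet_Iic heq]
  have hder : ∀ y ∈ Iio (-1:ℝ), HasDerivAt (fun l : ℝ => -(l / (l ^ 2 + 1)))
      ((y ^ 2 - 1) / (y ^ 2 + 1) ^ 2) y := by
    intro y _
    have := (psi_deriv y).neg
    refine this.congr_deriv ?_
    rw [← neg_div, neg_sub]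
  have hint : IntegrableOn (fun l : ℝ => (l ^ 2 - 1) / (l ^ 2 + 1) ^ 2) (Iic (-1:ℝ)) := by
    exact (phi_integrable.integrableOn.congr_fun heq measurableSet_Iic : _)
  have htend : Tendsto (fun l : ℝ => -(l / (l ^ 2 + 1))) atBot (nhds 0) := by
    simpa using psi_bot.neg
  have := integral_Iic_of_hasDerivAt_of_tendsto
    (Continuous.continuousWithinAt ((continuous_id.div (by continuity) (fun l => by positivity)).neg)) hder hint htend
  rw [this]; norm_num

private lemma phi_Ioi : ∫ l in Ioi (1:ℝ), |l ^ 2 - 1| / (l ^ 2 + 1) ^ 2 = 1 / 2 := by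
  have heq : EqOn (fun l : ℝ => |l ^ 2 - 1| / (l ^ 2 + 1) ^ 2)
      (fun l : ℝ => (l ^ 2 - 1) / (l ^ 2 + 1) ^ 2) (Ioi (1:ℝ)) := by
    intro l hl
    simp only [mem_Ioi] at hl
    have : (0:ℝ) ≤ l ^ 2 - 1 := by nlinarith
    simp [abs_of_nonneg this]
  rw [setIntegral_congr_fun measurableSet_Ioi heq]
  have hder : ∀ y ∈ Ioi (1:ℝ), HasDerivAt (fun l : ℝ => -(l / (l ^ 2 + 1)))
      ((y ^ 2 - 1) / (y ^ 2 + 1) ^ 2) y := by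
    intro y _
    have := (psi_deriv y).neg
    refine this.congr_deriv ?_
    rw [← neg_div, neg_sub]
  have hint : IntegrableOn (fun l : ℝ => (l ^ 2 - 1) / (l ^ 2 + 1) ^ 2) (Ioi (1:ℝ)) := by
    exact (phi_integrable.integrableOn.congr_fun heq measurableSet_Ioi : _)
  have htend : Tendsto (fun l : ℝ => -(l / (l ^ 2 + 1))) atTop (nhds 0) := by
    simpa using psi_top.neg
  have := integral_Ioi_of_hasDerivAt_of_tendsto
    (Continuous.continuousWithinAt ((continuous_id.div (by continuity) (fun l => by positivity)).neg)) hder hint htend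
  rw [this]; norm_num

private lemma phi_Ioc : ∫ l in Ioc (-1:ℝ) 1, |l ^ 2 - 1| / (l ^ 2 + 1) ^ 2 = 1 := by
  rw [← intervalIntegral.integral_of_le (by norm_num : (-1:ℝ) ≤ 1)]
  have heq : EqOn (fun l : ℝ => |l ^ 2 - 1| / (l ^ 2 + 1) ^ 2)
      (fun l : ℝ => (1 - l ^ 2) / (l ^ 2 + 1) ^ 2) (Set.uIcc (-1:ℝ) 1) := by
    intro l hl
    rw [Set.uIcc_of_le (by norm_num : (-1:ℝ) ≤ 1), mem_Icc] at hl
    have : l ^ 2 - 1 ≤ 0 := by nlinarith [hl.1, hl.2]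
    simp [abs_of_nonpos this, neg_sub]
  rw [intervalIntegral.integral_congr heq]
  have hcont : Continuous (fun l : ℝ => (1 - l ^ 2) / (l ^ 2 + 1) ^ 2) :=
    Continuous.div (by continuity) (by continuity) (fun l => by positivity)
  rw [intervalIntegral.integral_eq_sub_of_hasDerivAt (fun y _ => psi_deriv y)
    (hcont.intervalIntegrable _ _)]
  norm_num

private lemma phi_total : (∫ l : ℝ, |l ^ 2 - 1| / (l ^ 2 + 1) ^ 2) = 2 := by
  rw [← intervalIntegral.integral_Iic_add_Ioi (b := (-1:ℝ)) phi_integrable.integrableOn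
    phi_integrable.integrableOn]
  have hu : Ioc (-1:ℝ) 1 ∪ Ioi 1 = Ioi (-1:ℝ) := Ioc_union_Ioi_eq_Ioi (by norm_num)
  rw [← hu, setIntegral_union (Ioc_disjoint_Ioi le_rfl) measurableSet_Ioi
    phi_integrable.integrableOn phi_integrable.integrableOn]
  rw [phi_Iic, phi_Ioc, phi_Ioi]; norm_num

private lemma gfun_key (l : ℝ) :
    |Real.exp l| • (|Real.log (Real.exp l) ^ 2 - 1| /
      (Real.exp l * (Real.log (Real.exp l) ^ 2 + 1) ^ 2)) = |l ^ 2 - 1| / (l ^ 2 + 1) ^ 2 := by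
  rw [Real.log_exp, abs_of_pos (Real.exp_pos l), smul_eq_mul]
  rw [eq_div_iff (by positivity : ((l:ℝ) ^ 2 + 1) ^ 2 ≠ 0)]
  field_simp

private lemma gfun_subst :
    IntegrableOn (fun k : ℝ => |Real.log k ^ 2 - 1| / (k * (Real.log k ^ 2 + 1) ^ 2))
      (Ioi (0:ℝ)) ∧
    (∫ k in Ioi (0:ℝ), |Real.log k ^ 2 - 1| / (k * (Real.log k ^ 2 + 1) ^ 2)) = 2 := by
  have himg : Real.exp '' univ = Ioi (0:ℝ) := by rw [image_univ, Real.range_exp]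
  have hderiv : ∀ y ∈ (univ : Set ℝ), HasDerivWithinAt Real.exp (Real.exp y) univ y :=
    fun y _ => (Real.hasDerivAt_exp y).hasDerivWithinAt
  have hinj : InjOn Real.exp univ := Real.exp_injective.injOn
  constructor
  · rw [← himg, integrableOn_image_iff_integrableOn_abs_deriv_smul MeasurableSet.univ hderiv hinj]
    rw [integrableOn_univ]
    refine phi_integrable.congr (Eventually.of_forall fun l => ?_)
    exact (gfun_key l).symm
  · rw [← himg, integral_image_eq_integral_abs_deriv_smul MeasurableSet.univ hderiv hinj]
    rw [Measure.restrict_univ]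
    simp_rw [gfun_key]
    exact phi_total

private lemma fI_contOn (x : ℝ) :
    ContinuousOn (fun k : ℝ => Real.sin (k * x) * (Real.log k ^ 2 - 1) /
      (k * (Real.log k ^ 2 + 1) ^ 2)) (Ioi (0:ℝ)) := by
  have hlog : ContinuousOn Real.log (Ioi (0:ℝ)) :=
    Real.continuousOn_log.mono (fun k hk => by
      simp only [mem_compl_iff, mem_singleton_iff]
      exact ne_of_gt hk)
  apply ContinuousOn.div
  · exact ((Real.continuous_sin.comp (continuous_id.mul continuous_const)).continuousOn).mul
      (((hlog.pow 2).sub continuousOn_const))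
  · exact continuousOn_id.mul (((hlog.pow 2).add continuousOn_const).pow 2)
  · intro k hk
    have hk' : (0:ℝ) < k := hk
    positivity

private lemma fI_meas (x : ℝ) :
    AEStronglyMeasurable (fun k : ℝ => Real.sin (k * x) * (Real.log k ^ 2 - 1) /
      (k * (Real.log k ^ 2 + 1) ^ 2)) (volume.restrict (Ioi (0:ℝ))) :=
  (fI_contOn x).aestronglyMeasurable measurableSet_Ioi

private lemma fI_bound (x : ℝ) : ∀ k ∈ Ioi (0:ℝ),
    ‖Real.sin (k * x) * (Real.log k ^ 2 - 1) / (k * (Real.log k ^ 2 + 1) ^ 2)‖ ≤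
      |Real.log k ^ 2 - 1| / (k * (Real.log k ^ 2 + 1) ^ 2) := by
  intro k hk
  have hk' : (0:ℝ) < k := hk
  rw [Real.norm_eq_abs, abs_div, abs_of_pos (by positivity :
    (0:ℝ) < k * (Real.log k ^ 2 + 1) ^ 2), abs_mul]
  gcongr
  exact mul_le_of_le_one_left (abs_nonneg _) (Real.abs_sin_le_one _)

private lemma fI_bound_ae (x : ℝ) :
    ∀ᵐ k ∂(volume.restrict (Ioi (0:ℝ))),
      ‖Real.sin (k * x) * (Real.log k ^ 2 - 1) / (k * (Real.log k ^ 2 + 1) ^ 2)‖ ≤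
        |Real.log k ^ 2 - 1| / (k * (Real.log k ^ 2 + 1) ^ 2) := by
  rw [ae_restrict_iff' measurableSet_Ioi]
  exact Eventually.of_forall (fI_bound x)

private lemma fI_integrable (x : ℝ) :
    IntegrableOn (fun k : ℝ => Real.sin (k * x) * (Real.log k ^ 2 - 1) /
      (k * (Real.log k ^ 2 + 1) ^ 2)) (Ioi (0:ℝ)) :=
  gfun_subst.1.mono' (fI_meas x) (fI_bound_ae x)

private lemma fI_int_bound (x : ℝ) :
    |∫ k in Ioi (0:ℝ), Real.sin (k * x) * (Real.log k ^ 2 - 1) /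
      (k * (Real.log k ^ 2 + 1) ^ 2)| ≤ 2 := by
  calc |∫ k in Ioi (0:ℝ), Real.sin (k * x) * (Real.log k ^ 2 - 1) /
      (k * (Real.log k ^ 2 + 1) ^ 2)|
      ≤ ∫ k in Ioi (0:ℝ), |Real.log k ^ 2 - 1| / (k * (Real.log k ^ 2 + 1) ^ 2) := by
        rw [← Real.norm_eq_abs]
        exact norm_integral_le_of_norm_le gfun_subst.1 (fI_bound_ae x)
    _ = 2 := gfun_subst.2

private lemma h_deriv {k : ℝ} (hk : 0 < k) :
    HasDerivAt (fun k : ℝ => Real.log k / (Real.log k ^ 2 + 1))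
      ((1 - Real.log k ^ 2) / (k * (Real.log k ^ 2 + 1) ^ 2)) k := by
  have hl := Real.hasDerivAt_log hk.ne'
  have h3 := (psi_deriv (Real.log k)).comp k hl
  rw [show ((fun l : ℝ => l / (l ^ 2 + 1)) ∘ Real.log) =
    (fun k : ℝ => Real.log k / (Real.log k ^ 2 + 1)) from rfl] at h3
  refine h3.congr_deriv (Eq.symm ?_)
  rw [mul_comm k ((Real.log k ^ 2 + 1) ^ 2), ← div_div, div_eq_mul_inv]

private lemma hsin_deriv (x k : ℝ) :
    HasDerivAt (fun k : ℝ => Real.sin (k * x)) (Real.cos (k * x) * x) k := by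
  have := (Real.hasDerivAt_sin (k * x)).comp k ((hasDerivAt_id k).mul_const x)
  exact this.congr_deriv (by simp)

private lemma key_eq (x : ℝ) (hx : x ≠ 0) (R : ℝ) (hR : (0:ℝ) ≤ R) :
    (∫ k in (0:ℝ)..R, Real.cos (k * x) * (Real.log k / (Real.log k ^ 2 + 1))) =
      Real.sin (R * x) * (Real.log R / (Real.log R ^ 2 + 1)) / x
      + (1 / x) * ∫ k in (0:ℝ)..R, Real.sin (k * x) * (Real.log k ^ 2 - 1) /
          (k * (Real.log k ^ 2 + 1) ^ 2) := by
  set A : ℝ → ℝ := fun k => Real.cos (k * x) * (Real.log k / (Real.log k ^ 2 + 1)) with hA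
  set B : ℝ → ℝ := fun k =>
    Real.sin (k * x) * ((1 - Real.log k ^ 2) / (k * (Real.log k ^ 2 + 1) ^ 2)) / x with hB
  set Φ : ℝ → ℝ := fun k => Real.sin (k * x) * (Real.log k / (Real.log k ^ 2 + 1)) / x with hΦ
  have hlogc : ContinuousOn Real.log (Ioc (0:ℝ) R) :=
    Real.continuousOn_log.mono (fun k hk => by
      simp only [mem_compl_iff, mem_singleton_iff]; exact ne_of_gt hk.1)
  -- interval integrability of A
  have hAint : IntervalIntegrable A volume 0 R := by
    rw [intervalIntegrable_iff_integrableOn_Ioc_of_le hR]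
    apply Measure.integrableOn_of_bounded (M := 1/2) measure_Ioc_lt_top.ne
    · exact (((Real.continuous_cos.comp (continuous_id.mul continuous_const)).measurable).mul
        (Real.measurable_log.div
          ((Real.measurable_log.pow_const 2).add measurable_const))).aestronglyMeasurable
    · refine Eventually.of_forall (fun k => ?_)
      rw [hA, Real.norm_eq_abs, abs_mul]
      calc |Real.cos (k * x)| * |Real.log k / (Real.log k ^ 2 + 1)| ≤ 1 * (1/2) :=
            mul_le_mul (Real.abs_cos_le_one _) (psi_abs_le _) (abs_nonneg _) zero_le_one
        _ = 1/2 := by norm_num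
  -- interval integrability of B
  have hBint : IntervalIntegrable B volume 0 R := by
    rw [intervalIntegrable_iff_integrableOn_Ioc_of_le hR]
    apply Measure.integrableOn_of_bounded (M := 1) measure_Ioc_lt_top.ne
    · exact ((((Real.continuous_sin.comp (continuous_id.mul continuous_const)).measurable).mul
        ((measurable_const.sub (Real.measurable_log.pow_const 2)).div
          (measurable_id.mul (((Real.measurable_log.pow_const 2).add
            measurable_const).pow_const 2)))).div_const x).aestronglyMeasurable
    · rw [ae_restrict_iff' measurableSet_Ioc]
      refine Eventually.of_forall (fun k hk => ?_)
      obtain ⟨hk0, _⟩ := hk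
      have hd : (0:ℝ) < k * (Real.log k ^ 2 + 1) ^ 2 := by positivity
      have h1 : |1 - Real.log k ^ 2| ≤ (Real.log k ^ 2 + 1) ^ 2 := by
        rw [abs_le]
        constructor <;> nlinarith [sq_nonneg (Real.log k), sq_nonneg (Real.log k ^ 2)]
      have hs : |Real.sin (k * x)| ≤ k * |x| := by
        calc |Real.sin (k * x)| ≤ |k * x| := Real.abs_sin_le_abs
          _ = k * |x| := by rw [abs_mul, abs_of_pos hk0]
      rw [hB, Real.norm_eq_abs, abs_div, abs_mul, abs_div, abs_of_pos hd,
        div_le_one (abs_pos.mpr hx)]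
      calc |Real.sin (k * x)| * (|1 - Real.log k ^ 2| / (k * (Real.log k ^ 2 + 1) ^ 2))
          ≤ (k * |x|) * ((Real.log k ^ 2 + 1) ^ 2 / (k * (Real.log k ^ 2 + 1) ^ 2)) := by
            gcongr
        _ = |x| := by field_simp
  -- continuity of Φ on [0, R]
  have hbΦ : ∀ k : ℝ, ‖Φ k‖ ≤ |k| / 2 := by
    intro k
    rw [hΦ, Real.norm_eq_abs, abs_div, abs_mul]
    calc |Real.sin (k * x)| * |Real.log k / (Real.log k ^ 2 + 1)| / |x|
        ≤ (|k| * |x|) * (1/2) / |x| := by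
          gcongr
          · calc |Real.sin (k * x)| ≤ |k * x| := Real.abs_sin_le_abs
              _ = |k| * |x| := abs_mul k x
          · exact psi_abs_le _
      _ = |k| / 2 := by
          field_simp [abs_ne_zero.mpr hx]
  have hΦcont : ContinuousOn Φ (Icc 0 R) := by
    intro k hk
    rcases eq_or_ne k 0 with hk0 | hk0
    · subst hk0
      have hΦ0 : Φ 0 = 0 := by simp [hΦ]
      rw [ContinuousWithinAt, hΦ0]
      apply squeeze_zero_norm hbΦ
      have h2 : Tendsto (fun k : ℝ => |k| / 2) (nhds 0) (nhds 0) := by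
        have := (continuous_abs.div_const 2).tendsto (0:ℝ)
        simpa using this
      exact h2.mono_left nhdsWithin_le_nhds
    · apply ContinuousAt.continuousWithinAt
      apply ContinuousAt.div_const
      apply ContinuousAt.mul
      · exact (Real.continuous_sin.comp (continuous_id.mul continuous_const)).continuousAt
      · exact ((Real.continuousAt_log hk0).div
          (((Real.continuousAt_log hk0).pow 2).add continuousAt_const)
          (by positivity))
  -- derivative of Φ on (0, R)
  have hΦderiv : ∀ k ∈ Ioo (0:ℝ) R, HasDerivAt Φ (A k + B k) k := by
    intro k hk
    have := ((hsin_deriv x k).mul (h_deriv hk.1)).div_const x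
    refine this.congr_deriv ?_
    rw [hA, hB]
    have h1 : Real.log k ^ 2 + 1 ≠ 0 := by positivity
    have h2 : k ≠ 0 := ne_of_gt hk.1
    field_simp
  have hFTC := intervalIntegral.integral_eq_sub_of_hasDeriv_right_of_le hR hΦcont
    (fun k hk => (hΦderiv k hk).hasDerivWithinAt) (hAint.add hBint)
  have hΦ0 : Φ 0 = 0 := by simp [hΦ]
  rw [hΦ0, sub_zero, intervalIntegral.integral_add hAint hBint] at hFTC
  have hBeq : B = fun k => (-(1/x)) * (Real.sin (k * x) * (Real.log k ^ 2 - 1) /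
      (k * (Real.log k ^ 2 + 1) ^ 2)) := by
    funext k
    rw [hB]
    ring
  have hBint' : (∫ k in (0:ℝ)..R, B k) = (-(1/x)) * ∫ k in (0:ℝ)..R,
      Real.sin (k * x) * (Real.log k ^ 2 - 1) / (k * (Real.log k ^ 2 + 1) ^ 2) := by
    rw [hBeq]
    exact intervalIntegral.integral_const_mul _ _
  have : (∫ k in (0:ℝ)..R, A k) = Φ R - ∫ k in (0:ℝ)..R, B k := by linarith [hFTC]
  rw [this, hBint', hΦ]
  ring

private lemma tendsto_main (x : ℝ) (hx : x ≠ 0) :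
    Tendsto (fun R => ∫ k in (0:ℝ)..R, Real.cos (k * x) *
        (Real.log k / (Real.log k ^ 2 + 1))) atTop
      (nhds ((1 / x) * ∫ k in Ioi (0:ℝ),
        Real.sin (k * x) * (Real.log k ^ 2 - 1) / (k * (Real.log k ^ 2 + 1) ^ 2))) := by
  have h1 : Tendsto (fun R : ℝ => Real.sin (R * x) * (Real.log R / (Real.log R ^ 2 + 1)) / x)
      atTop (nhds 0) := by
    apply squeeze_zero_norm (a := fun R : ℝ => |Real.log R / (Real.log R ^ 2 + 1)| / |x|) ?_ ?_
    · intro R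
      rw [Real.norm_eq_abs, abs_div, abs_mul]
      exact (div_le_div_iff_of_pos_right (abs_pos.mpr hx)).mpr
        (mul_le_of_le_one_left (abs_nonneg _) (Real.abs_sin_le_one _))
    · have h2 := ((psi_top.comp Real.tendsto_log_atTop).abs).div_const |x|
      simpa using h2
  have h2 := intervalIntegral_tendsto_integral_Ioi 0 (fI_integrable x) tendsto_id
  have h3 := h1.add (h2.const_mul (1 / x))
  rw [zero_add] at h3
  apply Tendsto.congr' ?_ h3
  filter_upwards [eventually_ge_atTop (0:ℝ)] with R hR
  exact (key_eq x hx R hR).symm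

private lemma int_cont : Continuous (fun x : ℝ => ∫ k in Ioi (0:ℝ),
    Real.sin (k * x) * (Real.log k ^ 2 - 1) / (k * (Real.log k ^ 2 + 1) ^ 2)) := by
  apply continuous_of_dominated (fun x => fI_meas x) (fun x => fI_bound_ae x) gfun_subst.1
  refine Eventually.of_forall (fun k => ?_)
  exact ((Real.continuous_sin.comp (continuous_const.mul continuous_id)).mul
    continuous_const).div_const _

private theorem stmt5' :
    (∀ x : ℝ, x ≠ 0 →
      MeasureTheory.IntegrableOn
        (fun k => Real.sin (k * x) * ((Real.log k) ^ 2 - 1) /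
          (k * ((Real.log k) ^ 2 + 1) ^ 2)) (Set.Ioi (0:ℝ))) ∧
    (∀ x : ℝ, x ≠ 0 →
      Filter.Tendsto
        (fun R => ∫ k in (0:ℝ)..R, Real.cos (k * x) *
          (Real.log k / ((Real.log k) ^ 2 + 1)))
        Filter.atTop
        (nhds ((1 / x) * ∫ k in Set.Ioi (0:ℝ),
          Real.sin (k * x) * ((Real.log k) ^ 2 - 1) /
            (k * ((Real.log k) ^ 2 + 1) ^ 2)))) ∧
    (∀ x : ℝ, x ≠ 0 →
      |(1 / x) * ∫ k in Set.Ioi (0:ℝ),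
          Real.sin (k * x) * ((Real.log k) ^ 2 - 1) /
            (k * ((Real.log k) ^ 2 + 1) ^ 2)| ≤ 2 / |x|) ∧
    ContinuousOn
      (fun x => (1 / x) * ∫ k in Set.Ioi (0:ℝ),
        Real.sin (k * x) * ((Real.log k) ^ 2 - 1) /
          (k * ((Real.log k) ^ 2 + 1) ^ 2))
      {x : ℝ | x ≠ 0} := by
  refine ⟨fun x _ => fI_integrable x, fun x hx => tendsto_main x hx, fun x hx => ?_, ?_⟩
  · rw [abs_mul, abs_div, abs_one]
    calc 1 / |x| * |∫ k in Ioi (0:ℝ), Real.sin (k * x) * (Real.log k ^ 2 - 1) /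
          (k * (Real.log k ^ 2 + 1) ^ 2)| ≤ 1 / |x| * 2 := by
          gcongr
          exact fI_int_bound x
      _ = 2 / |x| := by ring
  · exact (continuousOn_const.div continuousOn_id (fun x hx => hx)).mul int_cont.continuousOn

/-- For every `x ≠ 0` the improper integral
`I(x) = lim_{R→∞} ∫₀^R cos(kx) log k/((log k)²+1) dk` exists and equals the absolutely
convergent integral `(1/x) ∫₀^∞ sin(kx)((log k)²−1)/(k((log k)²+1)²) dk`; moreover
`|I(x)| ≤ 2/|x|` for all `x ≠ 0`, and `I` is continuous on `ℝ \ {0}`. -/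
theorem stmt5 :
    (∀ x : ℝ, x ≠ 0 →
      MeasureTheory.IntegrableOn
        (fun k => Real.sin (k * x) * ((Real.log k) ^ 2 - 1) /
          (k * ((Real.log k) ^ 2 + 1) ^ 2)) (Set.Ioi (0:ℝ))) ∧
    (∀ x : ℝ, x ≠ 0 →
      Filter.Tendsto
        (fun R => ∫ k in (0:ℝ)..R, Real.cos (k * x) *
          (Real.log k / ((Real.log k) ^ 2 + 1)))
        Filter.atTop
        (nhds ((1 / x) * ∫ k in Set.Ioi (0:ℝ),
          Real.sin (k * x) * ((Real.log k) ^ 2 - 1) /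
            (k * ((Real.log k) ^ 2 + 1) ^ 2)))) ∧
    (∀ x : ℝ, x ≠ 0 →
      |(1 / x) * ∫ k in Set.Ioi (0:ℝ),
          Real.sin (k * x) * ((Real.log k) ^ 2 - 1) /
            (k * ((Real.log k) ^ 2 + 1) ^ 2)| ≤ 2 / |x|) ∧
    ContinuousOn
      (fun x => (1 / x) * ∫ k in Set.Ioi (0:ℝ),
        Real.sin (k * x) * ((Real.log k) ^ 2 - 1) /
          (k * ((Real.log k) ^ 2 + 1) ^ 2))
      {x : ℝ | x ≠ 0} := by
  exact stmt5'
end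

section
/- For every x ≠ 0 the improper integral J(x) = lim_{R→∞} ∫₀^R sin(kx)/((log k)² + 1) dk exists and equals the absolutely convergent integral (1/x) ∫₀^∞ (1 − cos(kx)) · 2 log k /( k · ((log k)² + 1)² ) dk; moreover |J(x)| ≤ 4/|x| for all x ≠ 0, and J is continuous on ℝ \ {0}. -/
open MeasureTheory Real Set Filter

noncomputable def phi (x k : ℝ) : ℝ :=
  (1 - Real.cos (k * x)) * (2 * Real.log k) / (k * ((Real.log k) ^ 2 + 1) ^ 2)

noncomputable def psi (k : ℝ) : ℝ := 4 * |Real.log k| / (k * ((Real.log k) ^ 2 + 1) ^ 2)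

lemma aux_integrable : Integrable (fun l : ℝ => 4 * |l| / ((l ^ 2 + 1) ^ 2)) := by
  have hmeas : AEStronglyMeasurable (fun l : ℝ => 4 * |l| / ((l ^ 2 + 1) ^ 2)) volume := by
    apply Continuous.aestronglyMeasurable
    apply Continuous.div (by continuity) (by continuity)
    intro l; positivity
  refine (integrable_inv_one_add_sq.const_mul 2).mono' hmeas (ae_of_all _ fun l => ?_)
  have h1 : (0:ℝ) < l ^ 2 + 1 := by positivity
  have h0 : (0:ℝ) ≤ 4 * |l| / ((l ^ 2 + 1) ^ 2) := by positivity
  rw [Real.norm_eq_abs, abs_of_nonneg h0, mul_comm (2:ℝ), ← div_eq_inv_mul,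
    div_le_div_iff₀ (by positivity) (by positivity)]
  nlinarith [sq_abs l, sq_nonneg (|l| - 1), sq_nonneg l, abs_nonneg l, sq_nonneg (l^2)]

lemma aux_integrableOn_Ioi : IntegrableOn (fun l : ℝ => 4 * l / ((l ^ 2 + 1) ^ 2)) (Ioi 0) := by
  refine (aux_integrable.integrableOn).congr_fun (fun l hl => ?_) measurableSet_Ioi
  dsimp only
  rw [abs_of_nonneg (le_of_lt hl)]

lemma aux_integral_Ioi : ∫ l in Ioi (0:ℝ), 4 * l / ((l ^ 2 + 1) ^ 2) = 2 := by
  have hderiv : ∀ l ∈ Ioi (0:ℝ), HasDerivAt (fun l : ℝ => -2 / (l ^ 2 + 1))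
      (4 * l / ((l ^ 2 + 1) ^ 2)) l := by
    intro l _
    have h : HasDerivAt (fun l : ℝ => l ^ 2 + 1) (2 * l) l := by
      simpa using (hasDerivAt_pow 2 l).add_const 1
    have h2 := (h.inv (by positivity)).const_mul (-2 : ℝ)
    simp only [div_eq_mul_inv]
    refine h2.congr_deriv ?_
    field_simp; ring
  have hcont : ContinuousWithinAt (fun l : ℝ => -2 / (l ^ 2 + 1)) (Ici 0) 0 := by
    apply Continuous.continuousWithinAt
    exact continuous_const.div (by continuity) (fun l => by positivity)
  have htend : Tendsto (fun l : ℝ => -2 / (l ^ 2 + 1)) atTop (nhds 0) := by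
    have h1 : Tendsto (fun l : ℝ => l ^ 2 + 1) atTop atTop :=
      (tendsto_pow_atTop two_ne_zero).atTop_add tendsto_const_nhds
    have := h1.inv_tendsto_atTop.const_mul (-2 : ℝ)
    simpa [div_eq_mul_inv] using this
  have := integral_Ioi_of_hasDerivAt_of_tendsto hcont hderiv aux_integrableOn_Ioi htend
  rw [this]; norm_num

lemma aux_integral : ∫ l : ℝ, 4 * |l| / ((l ^ 2 + 1) ^ 2) = 4 := by
  have h := integral_comp_abs (f := fun t : ℝ => 4 * t / ((t ^ 2 + 1) ^ 2))
  simp only [sq_abs] at h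
  rw [h, aux_integral_Ioi]; norm_num

lemma exp_deriv' : ∀ l ∈ (univ : Set ℝ), HasDerivWithinAt Real.exp (Real.exp l) univ l :=
  fun l _ => (Real.hasDerivAt_exp l).hasDerivWithinAt

lemma exp_image : Real.exp '' (univ : Set ℝ) = Ioi (0:ℝ) := by
  rw [image_univ, Real.range_exp]

lemma psi_comp : ∀ l : ℝ, |Real.exp l| • psi (Real.exp l) = 4 * |l| / ((l ^ 2 + 1) ^ 2) := by
  intro l
  have he : Real.exp l ≠ 0 := (Real.exp_pos l).ne'
  rw [abs_of_pos (Real.exp_pos l)]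
  simp only [psi, Real.log_exp, smul_eq_mul]
  field_simp

lemma psi_integrableOn : IntegrableOn psi (Ioi (0:ℝ)) := by
  rw [← exp_image,
    integrableOn_image_iff_integrableOn_abs_deriv_smul MeasurableSet.univ exp_deriv'
      (Real.exp_injective.injOn) psi]
  rw [show (fun x => |Real.exp x| • psi (Real.exp x)) = fun l : ℝ => 4 * |l| / ((l ^ 2 + 1) ^ 2)
    from funext psi_comp, integrableOn_univ]
  exact aux_integrable

lemma psi_integral : ∫ k in Ioi (0:ℝ), psi k = 4 := by
  rw [← exp_image,
    integral_image_eq_integral_abs_deriv_smul MeasurableSet.univ exp_deriv'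
      (Real.exp_injective.injOn) psi]
  rw [show (fun l => |Real.exp l| • psi (Real.exp l)) = fun l : ℝ => 4 * |l| / ((l ^ 2 + 1) ^ 2)
    from funext psi_comp, setIntegral_univ]
  exact aux_integral

lemma phi_contOn (x : ℝ) : ContinuousOn (phi x) (Ioi (0:ℝ)) := by
  intro k hk
  have hk0 : k ≠ 0 := ne_of_gt hk
  have hlog : ContinuousAt Real.log k := Real.continuousAt_log hk0
  apply ContinuousAt.continuousWithinAt
  have hd : k * ((Real.log k) ^ 2 + 1) ^ 2 ≠ 0 := by positivity
  have h1 : ContinuousAt (fun k : ℝ => 1 - Real.cos (k * x)) k :=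
    (continuous_const.sub (Real.continuous_cos.comp (continuous_id.mul continuous_const))).continuousAt
  have h2 : ContinuousAt (fun k : ℝ => 2 * Real.log k) k := continuousAt_const.mul hlog
  have h3 : ContinuousAt (fun k : ℝ => k * ((Real.log k) ^ 2 + 1) ^ 2) k :=
    continuousAt_id.mul (((hlog.pow 2).add continuousAt_const).pow 2)
  exact (h1.mul h2).div h3 hd

lemma phi_meas (x : ℝ) : AEStronglyMeasurable (phi x) (volume.restrict (Ioi (0:ℝ))) :=
  (phi_contOn x).aestronglyMeasurable measurableSet_Ioi

lemma cos_le_two (y : ℝ) : |1 - Real.cos y| ≤ 2 := by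
  rw [abs_le]
  constructor <;> nlinarith [Real.neg_one_le_cos y, Real.cos_le_one y]

lemma phi_bound (x : ℝ) : ∀ k ∈ Ioi (0:ℝ), ‖phi x k‖ ≤ psi k := by
  intro k hk
  have hk' : (0:ℝ) < k := hk
  have hd : (0:ℝ) < k * ((Real.log k) ^ 2 + 1) ^ 2 := by positivity
  rw [Real.norm_eq_abs, phi, psi, abs_div, abs_of_pos hd]
  gcongr
  rw [abs_mul, abs_mul]
  calc |1 - Real.cos (k * x)| * (|2| * |Real.log k|) ≤ 2 * (|2| * |Real.log k|) := by
        gcongr; exact cos_le_two _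
    _ = 4 * |Real.log k| := by rw [abs_two]; ring

lemma phi_integrableOn (x : ℝ) : IntegrableOn (phi x) (Ioi (0:ℝ)) := by
  refine psi_integrableOn.mono' (phi_meas x) ?_
  rw [ae_restrict_iff' measurableSet_Ioi]
  exact ae_of_all _ (phi_bound x)

lemma phi_integral_bound (x : ℝ) : |∫ k in Ioi (0:ℝ), phi x k| ≤ 4 := by
  calc |∫ k in Ioi (0:ℝ), phi x k| ≤ ∫ k in Ioi (0:ℝ), |phi x k| := by
        simpa [Real.norm_eq_abs] using
          norm_integral_le_integral_norm (μ := volume.restrict (Ioi (0:ℝ))) (phi x)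
    _ ≤ ∫ k in Ioi (0:ℝ), psi k := by
        refine setIntegral_mono_on ((phi_integrableOn x).abs) psi_integrableOn
          measurableSet_Ioi (fun k hk => ?_)
        simpa [Real.norm_eq_abs] using phi_bound x k hk
    _ = 4 := psi_integral

noncomputable def Fb (x k : ℝ) : ℝ := (1 - Real.cos (k * x)) / (x * ((Real.log k) ^ 2 + 1))

lemma Fb_deriv (x : ℝ) (hx : x ≠ 0) {k : ℝ} (hk : 0 < k) :
    HasDerivAt (Fb x) (Real.sin (k * x) / ((Real.log k) ^ 2 + 1) - (1 / x) * phi x k) k := by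
  have hk0 : k ≠ 0 := ne_of_gt hk
  have hN : HasDerivAt (fun k : ℝ => 1 - Real.cos (k * x)) (Real.sin (k * x) * x) k := by
    have h1 : HasDerivAt (fun k : ℝ => k * x) x k := by
      simpa using (hasDerivAt_id k).mul_const x
    simpa using ((Real.hasDerivAt_cos (k * x)).comp k h1).const_sub 1
  have hlog : HasDerivAt Real.log k⁻¹ k := Real.hasDerivAt_log hk0
  have hD : HasDerivAt (fun k : ℝ => x * ((Real.log k) ^ 2 + 1))
      (x * (2 * Real.log k * k⁻¹)) k := by
    have h2 : HasDerivAt (fun k : ℝ => (Real.log k) ^ 2 + 1) (2 * Real.log k * k⁻¹) k := by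
      simpa using ((hlog.pow 2).add_const 1)
    exact h2.const_mul x
  have hD0 : x * ((Real.log k) ^ 2 + 1) ≠ 0 := by
    apply mul_ne_zero hx; positivity
  have h := hN.div hD hD0
  refine h.congr_deriv ?_
  rw [phi]
  have h1 : ((Real.log k) ^ 2 + 1) ≠ 0 := by positivity
  field_simp

lemma Fb_cont (x : ℝ) (hx : x ≠ 0) (R : ℝ) : ContinuousOn (Fb x) (Icc 0 R) := by
  intro k hk
  rcases eq_or_ne k 0 with rfl | hk0
  · have hFb0 : Fb x 0 = 0 := by simp [Fb]
    rw [ContinuousWithinAt, hFb0]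
    apply squeeze_zero_norm (a := fun k => (1 - Real.cos (k * x)) / |x|)
    · intro k
      have hc : Real.cos (k * x) ≤ 1 := Real.cos_le_one _
      have h1 : (1:ℝ) ≤ (Real.log k) ^ 2 + 1 := by nlinarith [sq_nonneg (Real.log k)]
      have hxpos : (0:ℝ) < |x| := abs_pos.mpr hx
      rw [Real.norm_eq_abs, Fb, abs_div, abs_mul,
        abs_of_nonneg (by linarith : (0:ℝ) ≤ 1 - Real.cos (k * x)),
        abs_of_pos (by positivity : (0:ℝ) < (Real.log k) ^ 2 + 1)]
      exact div_le_div_of_nonneg_left (by linarith) hxpos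
        (by nlinarith [sq_nonneg (Real.log k)])
    · have : ContinuousWithinAt (fun k : ℝ => (1 - Real.cos (k * x)) / |x|) (Icc 0 R) 0 :=
        (((continuous_const.sub (Real.continuous_cos.comp
          (continuous_id.mul continuous_const))).div_const |x|)).continuousWithinAt
      simpa [ContinuousWithinAt] using this
  · apply ContinuousAt.continuousWithinAt
    have hlog : ContinuousAt Real.log k := Real.continuousAt_log hk0
    have hd : x * ((Real.log k) ^ 2 + 1) ≠ 0 := by apply mul_ne_zero hx; positivity
    exact ((continuous_const.sub (Real.continuous_cos.comp
      (continuous_id.mul continuous_const))).continuousAt).div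
      (continuousAt_const.mul ((hlog.pow 2).add continuousAt_const)) hd

lemma sin_cont (x R : ℝ) :
    ContinuousOn (fun k => Real.sin (k * x) / ((Real.log k) ^ 2 + 1)) (Icc 0 R) := by
  intro k hk
  rcases eq_or_ne k 0 with rfl | hk0
  · have h0 : Real.sin ((0:ℝ) * x) / ((Real.log 0) ^ 2 + 1) = 0 := by simp
    rw [ContinuousWithinAt, h0]
    apply squeeze_zero_norm (a := fun k : ℝ => |Real.sin (k * x)|)
    · intro k
      have h1 : (1:ℝ) ≤ (Real.log k) ^ 2 + 1 := by nlinarith [sq_nonneg (Real.log k)]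
      rw [Real.norm_eq_abs, abs_div, abs_of_pos (by positivity : (0:ℝ) < (Real.log k) ^ 2 + 1)]
      calc |Real.sin (k * x)| / ((Real.log k) ^ 2 + 1) ≤ |Real.sin (k * x)| / 1 := by
            gcongr
        _ = |Real.sin (k * x)| := div_one _
    · have : ContinuousWithinAt (fun k : ℝ => |Real.sin (k * x)|) (Icc 0 R) 0 :=
        ((Real.continuous_sin.comp (continuous_id.mul continuous_const)).abs).continuousWithinAt
      simpa [ContinuousWithinAt] using this
  · apply ContinuousAt.continuousWithinAt
    have hlog : ContinuousAt Real.log k := Real.continuousAt_log hk0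
    exact ((Real.continuous_sin.comp (continuous_id.mul continuous_const)).continuousAt).div
      ((hlog.pow 2).add continuousAt_const) (by positivity)

lemma phi_intervalIntegrable (x : ℝ) {R : ℝ} (hR : 0 ≤ R) :
    IntervalIntegrable (phi x) volume 0 R := by
  rw [intervalIntegrable_iff_integrableOn_Ioc_of_le hR]
  exact (phi_integrableOn x).mono_set Ioc_subset_Ioi_self

lemma key_identity (x : ℝ) (hx : x ≠ 0) {R : ℝ} (hR : 0 ≤ R) :
    ∫ k in (0:ℝ)..R, Real.sin (k * x) / ((Real.log k) ^ 2 + 1)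
      = Fb x R + (1 / x) * ∫ k in (0:ℝ)..R, phi x k := by
  have hsin_ii : IntervalIntegrable
      (fun k => Real.sin (k * x) / ((Real.log k) ^ 2 + 1)) volume 0 R :=
    (sin_cont x R).intervalIntegrable_of_Icc hR
  have hphi_ii : IntervalIntegrable (fun k => (1 / x) * phi x k) volume 0 R :=
    (phi_intervalIntegrable x hR).const_mul _
  have hderiv : ∀ k ∈ Ioo (0:ℝ) R, HasDerivAt (Fb x)
      (Real.sin (k * x) / ((Real.log k) ^ 2 + 1) - (1 / x) * phi x k) k :=
    fun k hk => Fb_deriv x hx hk.1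
  have hftc := intervalIntegral.integral_eq_sub_of_hasDerivAt_of_le hR
    (Fb_cont x hx R) hderiv (hsin_ii.sub hphi_ii)
  have hFb0 : Fb x 0 = 0 := by simp [Fb]
  rw [intervalIntegral.integral_sub hsin_ii hphi_ii, hFb0, sub_zero] at hftc
  have hcm : ∫ k in (0:ℝ)..R, (1 / x) * phi x k = (1 / x) * ∫ k in (0:ℝ)..R, phi x k :=
    intervalIntegral.integral_const_mul _ _
  rw [hcm] at hftc
  linarith

lemma Fb_tendsto (x : ℝ) (hx : x ≠ 0) : Tendsto (Fb x) atTop (nhds 0) := by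
  apply squeeze_zero_norm (a := fun R : ℝ => (2 / |x|) * ((Real.log R) ^ 2 + 1)⁻¹)
  · intro R
    have hxpos : (0:ℝ) < |x| := abs_pos.mpr hx
    have h1 : (0:ℝ) < (Real.log R) ^ 2 + 1 := by positivity
    rw [Real.norm_eq_abs, Fb, abs_div, abs_mul, abs_of_pos h1]
    calc |1 - Real.cos (R * x)| / (|x| * ((Real.log R) ^ 2 + 1))
        ≤ 2 / (|x| * ((Real.log R) ^ 2 + 1)) := by
          gcongr
          exact cos_le_two _
      _ = (2 / |x|) * ((Real.log R) ^ 2 + 1)⁻¹ := by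
          rw [← div_div, div_eq_mul_inv (2 / |x|)]
  · have h1 : Tendsto (fun R : ℝ => (Real.log R) ^ 2 + 1) atTop atTop :=
      (((tendsto_pow_atTop two_ne_zero).comp Real.tendsto_log_atTop).atTop_add
        tendsto_const_nhds)
    have := h1.inv_tendsto_atTop.const_mul (2 / |x|)
    simpa using this

lemma J0_continuous : Continuous (fun x => ∫ k in Ioi (0:ℝ), phi x k) := by
  rw [continuous_iff_continuousAt]
  intro x₀
  apply continuousAt_of_dominated (bound := psi)
  · exact Eventually.of_forall fun x => phi_meas x
  · refine Eventually.of_forall fun x => ?_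
    rw [ae_restrict_iff' measurableSet_Ioi]
    exact ae_of_all _ (phi_bound x)
  · exact psi_integrableOn
  · refine ae_of_all _ fun k => ?_
    rcases eq_or_ne (k * ((Real.log k) ^ 2 + 1) ^ 2) 0 with hd | hd
    · have : (fun x => phi x k) = fun _ => 0 := by
        funext x; rw [phi, hd, div_zero]
      rw [this]; exact continuousAt_const
    · exact (((continuous_const.sub (Real.continuous_cos.comp
        (continuous_const.mul continuous_id))).mul continuous_const).div_const _).continuousAt

/-- For every `x ≠ 0` the improper integral
`J(x) = lim_{R→∞} ∫₀^R sin(kx)/((log k)²+1) dk` exists and equals the absolutely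
convergent integral `(1/x) ∫₀^∞ (1 − cos(kx)) · 2 log k/(k((log k)²+1)²) dk`; moreover
`|J(x)| ≤ 4/|x|` for all `x ≠ 0`, and `J` is continuous on `ℝ \ {0}`. -/
theorem stmt7 :
    (∀ x : ℝ, x ≠ 0 →
      MeasureTheory.IntegrableOn
        (fun k => (1 - Real.cos (k * x)) * (2 * Real.log k) /
          (k * ((Real.log k) ^ 2 + 1) ^ 2)) (Set.Ioi (0:ℝ))) ∧
    (∀ x : ℝ, x ≠ 0 →
      Filter.Tendsto
        (fun R => ∫ k in (0:ℝ)..R, Real.sin (k * x) / ((Real.log k) ^ 2 + 1))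
        Filter.atTop
        (nhds ((1 / x) * ∫ k in Set.Ioi (0:ℝ),
          (1 - Real.cos (k * x)) * (2 * Real.log k) /
            (k * ((Real.log k) ^ 2 + 1) ^ 2)))) ∧
    (∀ x : ℝ, x ≠ 0 →
      |(1 / x) * ∫ k in Set.Ioi (0:ℝ),
          (1 - Real.cos (k * x)) * (2 * Real.log k) /
            (k * ((Real.log k) ^ 2 + 1) ^ 2)| ≤ 4 / |x|) ∧
    ContinuousOn
      (fun x => (1 / x) * ∫ k in Set.Ioi (0:ℝ),
        (1 - Real.cos (k * x)) * (2 * Real.log k) /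
          (k * ((Real.log k) ^ 2 + 1) ^ 2))
      {x : ℝ | x ≠ 0} := by
  refine ⟨fun x _ => phi_integrableOn x, fun x hx => ?_, fun x hx => ?_, ?_⟩
  · have h := (Fb_tendsto x hx).add
      ((intervalIntegral_tendsto_integral_Ioi 0 (phi_integrableOn x) tendsto_id).const_mul (1 / x))
    rw [zero_add] at h
    refine Tendsto.congr' ?_ h
    filter_upwards [Ici_mem_atTop (0:ℝ)] with R hR
    exact (key_identity x hx hR).symm
  · have h := phi_integral_bound x
    calc |(1 / x) * ∫ k in Ioi (0:ℝ), phi x k|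
        = |1 / x| * |∫ k in Ioi (0:ℝ), phi x k| := abs_mul _ _
      _ ≤ |1 / x| * 4 := by gcongr
      _ = 4 / |x| := by rw [abs_div, abs_one]; ring
  · have h1 : ContinuousOn (fun x : ℝ => 1 / x) {x : ℝ | x ≠ 0} := by
      exact continuousOn_const.div continuousOn_id (fun x hx => hx)
    exact h1.mul J0_continuous.continuousOn
end

section
/- Let J(x) = (1/x) ∫₀^∞ (1 − cos(kx)) · 2 log k /( k · ((log k)² + 1)² ) dk for x > 0. Then there exist constants C > 0 and ε ∈ (0,1) such that for all x ∈ (0,ε) one has |J(x)| ≤ C ( 1 + 1/( x (4 + (log x)²) ) ). In particular, J is Lebesgue integrable on (0,ε). -/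
open MeasureTheory Real Set Filter Topology

noncomputable def Jint (x k : ℝ) : ℝ :=
  (1 - Real.cos (k * x)) * (2 * Real.log k) / (k * ((Real.log k) ^ 2 + 1) ^ 2)

noncomputable def Gfun (k : ℝ) : ℝ := -(((Real.log k) ^ 2 + 1)⁻¹)

noncomputable def Gder (k : ℝ) : ℝ := 2 * Real.log k / (k * ((Real.log k) ^ 2 + 1) ^ 2)

lemma hasDeriv_Gfun {k : ℝ} (hk : 0 < k) : HasDerivAt Gfun (Gder k) k := by
  have h1 : HasDerivAt Real.log k⁻¹ k := Real.hasDerivAt_log hk.ne'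
  have h2 : HasDerivAt (fun y : ℝ => (Real.log y) ^ 2 + 1) (2 * Real.log k * k⁻¹) k := by
    simpa using (h1.pow 2).add_const 1
  have h3 : ((Real.log k) ^ 2 + 1 : ℝ) ≠ 0 := by positivity
  have h4 := (h2.inv h3).neg
  have h5 : -(-(2 * Real.log k * k⁻¹) / ((Real.log k) ^ 2 + 1) ^ 2) = Gder k := by
    unfold Gder
    field_simp
  rw [h5] at h4
  exact h4

lemma tendsto_Gfun : Tendsto Gfun atTop (𝓝 0) := by
  have h : Tendsto (fun k : ℝ => (Real.log k) ^ 2 + 1) atTop atTop :=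
    tendsto_atTop_add_const_right _ 1
      ((tendsto_pow_atTop two_ne_zero).comp Real.tendsto_log_atTop)
  have := h.inv_tendsto_atTop.neg
  unfold Gfun
  simpa [Gfun, Function.comp] using this

lemma Gder_nonneg {k : ℝ} (hk : 1 ≤ k) : 0 ≤ Gder k := by
  have h0 : (0:ℝ) < k := lt_of_lt_of_le one_pos hk
  have h1 : 0 ≤ Real.log k := Real.log_nonneg hk
  unfold Gder
  positivity

lemma tail_integrable {b : ℝ} (hb : 1 ≤ b) : IntegrableOn Gder (Ioi b) := by
  have hb0 : (0:ℝ) < b := lt_of_lt_of_le one_pos hb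
  exact integrableOn_Ioi_deriv_of_nonneg
    (hasDeriv_Gfun hb0).continuousAt.continuousWithinAt
    (fun k hk => hasDeriv_Gfun (hb0.trans hk))
    (fun k hk => Gder_nonneg (hb.trans hk.le)) tendsto_Gfun

lemma tail_integral {b : ℝ} (hb : 1 ≤ b) :
    ∫ k in Ioi b, Gder k = (((Real.log b) ^ 2 + 1)⁻¹ : ℝ) := by
  have hb0 : (0:ℝ) < b := lt_of_lt_of_le one_pos hb
  have := integral_Ioi_of_hasDerivAt_of_nonneg
    (hasDeriv_Gfun hb0).continuousAt.continuousWithinAt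
    (fun k hk => hasDeriv_Gfun (hb0.trans hk))
    (fun k hk => Gder_nonneg (hb.trans hk.le)) tendsto_Gfun
  simpa [Gfun] using this

lemma meas_Jint : Measurable (Function.uncurry Jint) := by
  unfold Function.uncurry Jint
  measurability

lemma meas_Jx (x : ℝ) : Measurable (Jint x) := by
  unfold Jint
  measurability

lemma one_sub_cos_le (u : ℝ) : 1 - Real.cos u ≤ u ^ 2 / 2 := by
  rcases eq_or_ne u 0 with rfl | hu
  · simp
  · linarith [Real.one_sub_sq_div_two_lt_cos hu]

lemma one_sub_cos_nonneg (u : ℝ) : 0 ≤ 1 - Real.cos u := by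
  linarith [Real.cos_le_one u]

lemma one_sub_cos_le_two (u : ℝ) : 1 - Real.cos u ≤ 2 := by
  linarith [Real.neg_one_le_cos u]

lemma Jint_abs_le (x : ℝ) {k : ℝ} (hk0 : 0 < k) :
    |Jint x k| ≤ x ^ 2 * k * |Real.log k| / ((Real.log k) ^ 2 + 1) ^ 2 := by
  set t := Real.log k with ht
  have hd : 0 < k * (t ^ 2 + 1) ^ 2 := by positivity
  have h1 : (1 - Real.cos (k * x)) * |2 * t| ≤ (k * x) ^ 2 / 2 * (2 * |t|) := by
    have h2 : |2 * t| = 2 * |t| := by rw [abs_mul]; norm_num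
    rw [h2]
    exact mul_le_mul_of_nonneg_right (one_sub_cos_le _) (by positivity)
  calc |Jint x k| = (1 - Real.cos (k * x)) * |2 * t| / (k * (t ^ 2 + 1) ^ 2) := by
        unfold Jint
        rw [abs_div, abs_of_pos hd, abs_mul, abs_of_nonneg (one_sub_cos_nonneg _)]
    _ ≤ (k * x) ^ 2 / 2 * (2 * |t|) / (k * (t ^ 2 + 1) ^ 2) := by gcongr
    _ = x ^ 2 * k * |t| / (t ^ 2 + 1) ^ 2 := by
        field_simp

lemma Jint_abs_le_two (x : ℝ) {k : ℝ} (hk : 1 ≤ k) : |Jint x k| ≤ 2 * Gder k := by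
  have hk0 : (0:ℝ) < k := lt_of_lt_of_le one_pos hk
  have hl : 0 ≤ Real.log k := Real.log_nonneg hk
  have hd : 0 < k * ((Real.log k) ^ 2 + 1) ^ 2 := by positivity
  have h2 : (0:ℝ) ≤ 2 * Real.log k / (k * ((Real.log k) ^ 2 + 1) ^ 2) := by positivity
  calc |Jint x k|
      = (1 - Real.cos (k * x)) * (2 * Real.log k) / (k * ((Real.log k) ^ 2 + 1) ^ 2) := by
        unfold Jint
        rw [abs_div, abs_of_pos hd, abs_mul, abs_of_nonneg (one_sub_cos_nonneg _),
          abs_of_nonneg (by positivity : (0:ℝ) ≤ 2 * Real.log k)]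
    _ = (1 - Real.cos (k * x)) * (2 * Real.log k / (k * ((Real.log k) ^ 2 + 1) ^ 2)) := by
        ring
    _ ≤ 2 * (2 * Real.log k / (k * ((Real.log k) ^ 2 + 1) ^ 2)) :=
        mul_le_mul_of_nonneg_right (one_sub_cos_le_two _) h2
    _ = 2 * Gder k := rfl

set_option maxHeartbeats 1000000 in
lemma Jbound {x : ℝ} (hx0 : 0 < x) (hxe : x < Real.exp (-2)) :
    |∫ k in Ioi (0:ℝ), Jint x k| ≤ 100 * (x + 1 / (4 + (Real.log x) ^ 2)) := by
  set L : ℝ := -Real.log x with hLdef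
  have hL : 2 < L := by
    have h := (Real.log_lt_iff_lt_exp hx0).2 hxe
    simp only [hLdef]
    linarith
  have hxL : x = Real.exp (-L) := by
    rw [hLdef, neg_neg, Real.exp_log hx0]
  set a : ℝ := Real.exp (L / 2) with hadef
  set b : ℝ := Real.exp L with hbdef
  have ha0 : (0:ℝ) < a := Real.exp_pos _
  have hb0 : (0:ℝ) < b := Real.exp_pos _
  have hab : a < b := Real.exp_lt_exp.2 (by linarith)
  have ha1 : 1 < a := by
    rw [hadef, show (1:ℝ) = Real.exp 0 from (Real.exp_zero).symm]
    exact Real.exp_lt_exp.2 (by linarith)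
  have hb1 : 1 < b := lt_trans ha1 hab
  have hxb : x * b = 1 := by
    rw [hxL, hbdef, ← Real.exp_add]
    simp
  have hla : Real.log a = L / 2 := Real.log_exp _
  have hlb : Real.log b = L := Real.log_exp _
  have haa : a * a = b := by
    rw [hadef, hbdef, ← Real.exp_add]
    norm_num
  -- pointwise bounds
  have habs : ∀ t : ℝ, |t| / (t ^ 2 + 1) ^ 2 ≤ 1 / 2 := by
    intro t
    rw [div_le_div_iff₀ (by positivity) (by norm_num)]
    nlinarith [sq_nonneg (|t| - 1), sq_abs t, sq_nonneg t, sq_nonneg (t ^ 2 + 1)]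
  have bound1 : ∀ k ∈ Ioc (0:ℝ) a, ‖Jint x k‖ ≤ x ^ 2 * a / 2 := by
    intro k hk
    rw [Real.norm_eq_abs]
    calc |Jint x k| ≤ x ^ 2 * k * |Real.log k| / ((Real.log k) ^ 2 + 1) ^ 2 :=
          Jint_abs_le x hk.1
      _ = x ^ 2 * k * (|Real.log k| / ((Real.log k) ^ 2 + 1) ^ 2) := by ring
      _ ≤ x ^ 2 * k * (1 / 2) :=
          mul_le_mul_of_nonneg_left (habs _) (mul_nonneg (sq_nonneg x) hk.1.le)
      _ ≤ x ^ 2 * a * (1 / 2) := by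
          have := hk.2
          nlinarith [sq_nonneg x]
      _ = x ^ 2 * a / 2 := by ring
  have bound2 : ∀ k ∈ Ioc a b, ‖Jint x k‖ ≤ x ^ 2 * b * L / (1 + L ^ 2 / 4) ^ 2 := by
    intro k hk
    have hka : a < k := hk.1
    have hk0 : (0:ℝ) < k := lt_trans ha0 hka
    have hlk1 : Real.log k ≤ L := by
      rw [← hlb]; exact Real.log_le_log hk0 hk.2
    have hlk2 : L / 2 ≤ Real.log k := by
      rw [← hla]; exact Real.log_le_log ha0 hka.le
    have hlkpos : 0 < Real.log k := lt_of_lt_of_le (by linarith) hlk2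
    rw [Real.norm_eq_abs]
    calc |Jint x k| ≤ x ^ 2 * k * |Real.log k| / ((Real.log k) ^ 2 + 1) ^ 2 :=
          Jint_abs_le x hk0
      _ ≤ x ^ 2 * b * L / (1 + L ^ 2 / 4) ^ 2 := by
          rw [abs_of_pos hlkpos]
          apply div_le_div₀ (by positivity)
          · have e1 : x ^ 2 * k * Real.log k ≤ x ^ 2 * b * Real.log k :=
              mul_le_mul_of_nonneg_right
                (mul_le_mul_of_nonneg_left hk.2 (sq_nonneg x)) hlkpos.le
            have e2 : x ^ 2 * b * Real.log k ≤ x ^ 2 * b * L :=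
              mul_le_mul_of_nonneg_left hlk1 (mul_nonneg (sq_nonneg x) hb0.le)
            linarith
          · positivity
          · have h1 : 1 + L ^ 2 / 4 ≤ (Real.log k) ^ 2 + 1 := by nlinarith
            have h2 : (0:ℝ) ≤ 1 + L ^ 2 / 4 := by positivity
            calc (1 + L ^ 2 / 4) ^ 2 ≤ ((Real.log k) ^ 2 + 1) ^ 2 := by nlinarith
              _ = ((Real.log k) ^ 2 + 1) ^ 2 := rfl
  have bound3 : ∀ k ∈ Ioi b, ‖Jint x k‖ ≤ 2 * Gder k := by
    intro k hk
    rw [Real.norm_eq_abs]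
    exact Jint_abs_le_two x (le_trans hb1.le (le_of_lt hk))
  -- integrability
  have hmx : ∀ s : Set ℝ, AEStronglyMeasurable (Jint x) (volume.restrict s) :=
    fun s => (meas_Jx x).aestronglyMeasurable
  have hint1 : IntegrableOn (Jint x) (Ioc 0 a) := by
    refine Integrable.mono' (g := fun _ => x ^ 2 * a / 2) ?_ (hmx _) ?_
    · exact integrableOn_const measure_Ioc_lt_top.ne
    · exact (ae_restrict_iff' measurableSet_Ioc).2 (ae_of_all _ bound1)
  have hint2 : IntegrableOn (Jint x) (Ioc a b) := by
    refine Integrable.mono' (g := fun _ => x ^ 2 * b * L / (1 + L ^ 2 / 4) ^ 2) ?_ (hmx _) ?_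
    · exact integrableOn_const measure_Ioc_lt_top.ne
    · exact (ae_restrict_iff' measurableSet_Ioc).2 (ae_of_all _ bound2)
  have hGint : IntegrableOn (fun k => 2 * Gder k) (Ioi b) := (tail_integrable hb1.le).const_mul 2
  have hint3 : IntegrableOn (Jint x) (Ioi b) := by
    refine Integrable.mono' hGint (hmx _) ?_
    exact (ae_restrict_iff' measurableSet_Ioi).2 (ae_of_all _ bound3)
  have hint12 : IntegrableOn (Jint x) (Ioc 0 b) := by
    rw [← Ioc_union_Ioc_eq_Ioc ha0.le hab.le]
    exact hint1.union hint2
  -- split the integral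
  have hsplit : (∫ k in Ioi (0:ℝ), Jint x k)
      = (∫ k in Ioc (0:ℝ) a, Jint x k) + (∫ k in Ioc a b, Jint x k)
        + (∫ k in Ioi b, Jint x k) := by
    rw [← Ioc_union_Ioi_eq_Ioi hb0.le,
      setIntegral_union Ioc_disjoint_Ioi_same measurableSet_Ioi hint12 hint3,
      ← Ioc_union_Ioc_eq_Ioc ha0.le hab.le,
      setIntegral_union (Ioc_disjoint_Ioc_of_le le_rfl) measurableSet_Ioc hint1 hint2]
  -- estimates
  have hE1 : |∫ k in Ioc (0:ℝ) a, Jint x k| ≤ x / 2 := by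
    have h := norm_setIntegral_le_of_norm_le_const (μ := volume) measure_Ioc_lt_top bound1
    rw [Real.norm_eq_abs, measureReal_def] at h
    have hvol : ((volume (Ioc (0:ℝ) a)).toReal) = a := by
      rw [Real.volume_Ioc, ENNReal.toReal_ofReal (by linarith)]
      ring
    rw [hvol] at h
    refine h.trans ?_
    have : x ^ 2 * a / 2 * a = x * (x * b) / 2 := by rw [← haa]; ring
    rw [this, hxb]
    linarith
  have hE2 : |∫ k in Ioc a b, Jint x k| ≤ 16 / (4 + L ^ 2) := by
    have h := norm_setIntegral_le_of_norm_le_const (μ := volume) measure_Ioc_lt_top bound2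
    rw [Real.norm_eq_abs, measureReal_def] at h
    have hvol : ((volume (Ioc a b)).toReal) = b - a := by
      rw [Real.volume_Ioc, ENNReal.toReal_ofReal (by linarith)]
    rw [hvol] at h
    have hC2 : (0:ℝ) ≤ x ^ 2 * b * L / (1 + L ^ 2 / 4) ^ 2 := by positivity
    have h2 : x ^ 2 * b * L / (1 + L ^ 2 / 4) ^ 2 * (b - a)
        ≤ x ^ 2 * b * L / (1 + L ^ 2 / 4) ^ 2 * b :=
      mul_le_mul_of_nonneg_left (by linarith) hC2
    have h3 : x ^ 2 * b * L / (1 + L ^ 2 / 4) ^ 2 * b = (x * b) ^ 2 * (L / (1 + L ^ 2 / 4) ^ 2) := by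
      field_simp
    rw [hxb] at h3
    have h4 : L / (1 + L ^ 2 / 4) ^ 2 ≤ 16 / (4 + L ^ 2) := by
      rw [div_le_div_iff₀ (by positivity) (by positivity)]
      nlinarith [sq_nonneg L, sq_nonneg (L - 2), sq_nonneg (L ^ 2 - 2)]
    calc |∫ k in Ioc a b, Jint x k| ≤ x ^ 2 * b * L / (1 + L ^ 2 / 4) ^ 2 * (b - a) := h
      _ ≤ x ^ 2 * b * L / (1 + L ^ 2 / 4) ^ 2 * b := h2
      _ = 1 ^ 2 * (L / (1 + L ^ 2 / 4) ^ 2) := h3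
      _ = L / (1 + L ^ 2 / 4) ^ 2 := by ring
      _ ≤ 16 / (4 + L ^ 2) := h4
  have hE3 : |∫ k in Ioi b, Jint x k| ≤ 8 / (4 + L ^ 2) := by
    have h1 : |∫ k in Ioi b, Jint x k| ≤ ∫ k in Ioi b, ‖Jint x k‖ := by
      rw [← Real.norm_eq_abs]
      exact norm_integral_le_integral_norm _
    have h2 : (∫ k in Ioi b, ‖Jint x k‖) ≤ ∫ k in Ioi b, 2 * Gder k :=
      setIntegral_mono_on hint3.norm hGint measurableSet_Ioi bound3
    have h3 : (∫ k in Ioi b, 2 * Gder k) = 2 * ((L ^ 2 + 1)⁻¹) := by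
      rw [integral_const_mul, tail_integral hb1.le, hlb]
    have h4 : 2 * ((L ^ 2 + 1)⁻¹ : ℝ) ≤ 8 / (4 + L ^ 2) := by
      rw [show 2 * ((L ^ 2 + 1)⁻¹ : ℝ) = 2 / (L ^ 2 + 1) by ring,
        div_le_div_iff₀ (by positivity) (by positivity)]
      nlinarith [sq_nonneg L]
    calc |∫ k in Ioi b, Jint x k| ≤ ∫ k in Ioi b, ‖Jint x k‖ := h1
      _ ≤ ∫ k in Ioi b, 2 * Gder k := h2
      _ = 2 * ((L ^ 2 + 1)⁻¹) := h3
      _ ≤ 8 / (4 + L ^ 2) := h4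
  have hlogsq : (Real.log x) ^ 2 = L ^ 2 := by
    rw [hLdef]; ring
  rw [hsplit, hlogsq]
  have hinv : (0:ℝ) ≤ 1 / (4 + L ^ 2) := by positivity
  calc |(∫ k in Ioc (0:ℝ) a, Jint x k) + (∫ k in Ioc a b, Jint x k) + (∫ k in Ioi b, Jint x k)|
      ≤ |(∫ k in Ioc (0:ℝ) a, Jint x k) + (∫ k in Ioc a b, Jint x k)|
        + |∫ k in Ioi b, Jint x k| := abs_add_le _ _
    _ ≤ |∫ k in Ioc (0:ℝ) a, Jint x k| + |∫ k in Ioc a b, Jint x k|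
        + |∫ k in Ioi b, Jint x k| := by linarith [abs_add_le (∫ k in Ioc (0:ℝ) a, Jint x k) (∫ k in Ioc a b, Jint x k)]
    _ ≤ x / 2 + 16 / (4 + L ^ 2) + 8 / (4 + L ^ 2) := by linarith
    _ ≤ 100 * (x + 1 / (4 + L ^ 2)) := by
        have h16 : (16:ℝ) / (4 + L ^ 2) = 16 * (1 / (4 + L ^ 2)) := by ring
        have h8 : (8:ℝ) / (4 + L ^ 2) = 8 * (1 / (4 + L ^ 2)) := by ring
        rw [h16, h8]
        nlinarith [hinv, hx0.le]

lemma Jfull {x : ℝ} (hx0 : 0 < x) (hxe : x < Real.exp (-2)) :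
    |(1 / x) * ∫ k in Ioi (0:ℝ), Jint x k|
      ≤ 100 * (1 + 1 / (x * (4 + (Real.log x) ^ 2))) := by
  have hb := Jbound hx0 hxe
  have hD : (0:ℝ) < 4 + (Real.log x) ^ 2 := by positivity
  rw [abs_mul, abs_of_pos (by positivity : (0:ℝ) < 1 / x)]
  have h2 := mul_le_mul_of_nonneg_left hb (le_of_lt (by positivity : (0:ℝ) < 1 / x))
  refine h2.trans (le_of_eq ?_)
  field_simp

/-- Let `J(x) = (1/x) ∫₀^∞ (1 − cos(kx)) · 2 log k/(k((log k)²+1)²) dk` for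
`x > 0`. Then there are `C > 0` and `ε ∈ (0,1)` such that for all `x ∈ (0,ε)`,
`|J(x)| ≤ C (1 + 1/(x (4 + (log x)²)))`; in particular `J` is Lebesgue integrable
on `(0,ε)`. -/
theorem stmt8 :
    ∃ C : ℝ, 0 < C ∧ ∃ ε ∈ Set.Ioo (0:ℝ) 1,
      (∀ x ∈ Set.Ioo (0:ℝ) ε,
        |(1 / x) * ∫ k in Set.Ioi (0:ℝ),
            (1 - Real.cos (k * x)) * (2 * Real.log k) /
              (k * ((Real.log k) ^ 2 + 1) ^ 2)|
          ≤ C * (1 + 1 / (x * (4 + (Real.log x) ^ 2)))) ∧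
      MeasureTheory.IntegrableOn
        (fun x => (1 / x) * ∫ k in Set.Ioi (0:ℝ),
          (1 - Real.cos (k * x)) * (2 * Real.log k) /
            (k * ((Real.log k) ^ 2 + 1) ^ 2))
        (Set.Ioo (0:ℝ) ε) := by
  refine ⟨100, by norm_num, Real.exp (-2),
    ⟨Real.exp_pos _, Real.exp_lt_one_iff.2 (by norm_num)⟩, ?_, ?_⟩
  · intro x hx
    exact Jfull hx.1 hx.2
  · have hmeas : AEStronglyMeasurable
        (fun x => (1 / x) * ∫ k in Set.Ioi (0:ℝ), Jint x k)
        (volume.restrict (Ioo 0 (Real.exp (-2)))) := by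
      have h1 : StronglyMeasurable (fun x => ∫ k in Set.Ioi (0:ℝ), Jint x k) :=
        meas_Jint.stronglyMeasurable.integral_prod_right
      exact ((measurable_const.div measurable_id).mul h1.measurable).aestronglyMeasurable
    have himg : Real.exp '' (Iio (-2:ℝ)) = Ioo 0 (Real.exp (-2)) := by
      ext y
      constructor
      · rintro ⟨u, hu, rfl⟩
        exact ⟨Real.exp_pos u, Real.exp_lt_exp.2 hu⟩
      · rintro ⟨h0, h1⟩
        exact ⟨Real.log y, (Real.log_lt_iff_lt_exp h0).2 h1, Real.exp_log h0⟩
    have hh : IntegrableOn (fun y => 1 / (y * (4 + (Real.log y) ^ 2)))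
        (Ioo 0 (Real.exp (-2))) := by
      rw [← himg]
      rw [integrableOn_image_iff_integrableOn_abs_deriv_smul measurableSet_Iio
        (fun u _ => (Real.hasDerivAt_exp u).hasDerivWithinAt) Real.exp_injective.injOn]
      have heq : (fun u => |Real.exp u| • (1 / (Real.exp u * (4 + (Real.log (Real.exp u)) ^ 2))))
          = fun u : ℝ => 1 / (4 + u ^ 2) := by
        funext u
        rw [smul_eq_mul, abs_of_pos (Real.exp_pos u), Real.log_exp]
        have h0 : Real.exp u ≠ 0 := (Real.exp_pos u).ne'
        have h1 : (4 + u ^ 2 : ℝ) ≠ 0 := by positivity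
        field_simp
      rw [heq]
      refine Integrable.mono' (g := fun u : ℝ => (1 + u ^ 2)⁻¹)
        integrable_inv_one_add_sq.integrableOn ?_ ?_
      · exact (Measurable.aestronglyMeasurable (by fun_prop))
      · refine ae_of_all _ fun u => ?_
        rw [Real.norm_eq_abs, abs_of_pos (by positivity : (0:ℝ) < 1 / (4 + u ^ 2)), one_div]
        exact inv_anti₀ (by positivity) (by nlinarith [sq_nonneg u])
    have hB : IntegrableOn (fun x => 100 * (1 + 1 / (x * (4 + (Real.log x) ^ 2))))
        (Ioo 0 (Real.exp (-2))) := by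
      have h1 : IntegrableOn (fun _ : ℝ => (100:ℝ)) (Ioo 0 (Real.exp (-2))) :=
        integrableOn_const measure_Ioo_lt_top.ne
      have h2 := h1.add (hh.const_mul 100)
      have heq : (fun x : ℝ => 100 * (1 + 1 / (x * (4 + (Real.log x) ^ 2))))
          = fun x : ℝ => 100 + 100 * (1 / (x * (4 + (Real.log x) ^ 2))) := by
        funext y; ring
      rw [heq]
      exact h2
    refine Integrable.mono' hB hmeas ?_
    refine (ae_restrict_iff' measurableSet_Ioo).2 (ae_of_all _ fun x hx => ?_)
    rw [Real.norm_eq_abs]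
    exact Jfull hx.1 hx.2
end

section
/- Let k ≥ 0, let W and h be continuous real-valued functions on [τ₀,∞), and let f ∈ C²([τ₀,∞);ℝ) solve f'' + (k² + W) f = h with f(τ₀) = f₀ and f'(τ₀) = f₀'. Then for every τ ≥ τ₀, |f(τ)| ≤ ( |f₀| + (τ−τ₀)|f₀'| + (τ−τ₀)² · sup_{η∈[τ₀,τ]} |h(η)| ) · exp( (τ−τ₀)² · sup_{η∈[τ₀,τ]} |W(η)| ). -/
open MeasureTheory Real Set

/-- Retarded kernel `sin(kx)/k`, extended to `x` at `k = 0`. -/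
noncomputable def Sk (k x : ℝ) : ℝ := if k = 0 then x else Real.sin (k * x) / k

lemma Sk_zero (k : ℝ) : Sk k 0 = 0 := by
  unfold Sk; split_ifs <;> simp

lemma hasDerivAt_Sk (k x : ℝ) : HasDerivAt (Sk k) (Real.cos (k * x)) x := by
  rcases eq_or_ne k 0 with rfl | hk
  · have heq : Sk 0 = fun y : ℝ => y := by funext y; simp [Sk]
    rw [heq]
    simpa using hasDerivAt_id' x
  · have h1 : HasDerivAt (fun y : ℝ => Real.sin (k * y)) (Real.cos (k * x) * k) x := by
      simpa [mul_comm, Function.comp_def] using (Real.hasDerivAt_sin (k * x)).comp x ((hasDerivAt_id x).const_mul k)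
    have h2 := h1.div_const k
    have heq : Sk k = fun y : ℝ => Real.sin (k * y) / k := by
      funext y; simp [Sk, hk]
    rw [heq]
    simpa [mul_div_assoc, div_self hk] using h2

lemma continuous_Sk (k : ℝ) : Continuous (Sk k) := by
  rw [continuous_iff_continuousAt]
  exact fun x => (hasDerivAt_Sk k x).continuousAt

lemma hasDerivAt_cosk (k x : ℝ) :
    HasDerivAt (fun y : ℝ => Real.cos (k * y)) (-(k ^ 2 * Sk k x)) x := by
  have h1 : HasDerivAt (fun y : ℝ => Real.cos (k * y)) (-Real.sin (k * x) * k) x := by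
    simpa [mul_comm, Function.comp_def] using (Real.hasDerivAt_cos (k * x)).comp x ((hasDerivAt_id x).const_mul k)
  convert h1 using 1
  rcases eq_or_ne k 0 with rfl | hk
  · simp [Sk]
  · have hkk : k * (Real.sin (k * x) / k) = Real.sin (k * x) := by field_simp
    rw [Sk, if_neg hk, pow_two, mul_assoc, hkk]
    ring

lemma abs_Sk_le (k : ℝ) {x : ℝ} (hx : 0 ≤ x) : |Sk k x| ≤ x := by
  unfold Sk; split_ifs with hk
  · simp [abs_of_nonneg hx]
  · rw [abs_div, div_le_iff₀ (abs_pos.mpr hk)]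
    calc |Real.sin (k * x)| ≤ |k * x| := Real.abs_sin_le_abs
      _ = x * |k| := by rw [abs_mul, abs_of_nonneg hx]; ring

/-- Let `k ≥ 0`, `W, h` continuous on `[τ₀,∞)`, and `f ∈ C²([τ₀,∞))`
solving `f'' + (k² + W) f = h` with `f(τ₀) = f₀`, `f'(τ₀) = f₀'`. Then for every
`τ ≥ τ₀`,
`|f(τ)| ≤ (|f₀| + (τ−τ₀)|f₀'| + (τ−τ₀)² sup_{[τ₀,τ]}|h|) · exp((τ−τ₀)² sup_{[τ₀,τ]}|W|)`. -/
theorem stmt11 (k τ₀ f₀ f₀' : ℝ) (hk : 0 ≤ k) (W h f f' : ℝ → ℝ)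
    (hW : ContinuousOn W (Set.Ici τ₀)) (hh : ContinuousOn h (Set.Ici τ₀))
    (hf : ∀ τ ∈ Set.Ici τ₀, HasDerivWithinAt f (f' τ) (Set.Ici τ₀) τ)
    (hf' : ∀ τ ∈ Set.Ici τ₀,
      HasDerivWithinAt f' (h τ - (k ^ 2 + W τ) * f τ) (Set.Ici τ₀) τ)
    (hi0 : f τ₀ = f₀) (hi1 : f' τ₀ = f₀') :
    ∀ τ ∈ Set.Ici τ₀,
      |f τ| ≤ (|f₀| + (τ - τ₀) * |f₀'| +
          (τ - τ₀) ^ 2 * ⨆ η : Set.Icc τ₀ τ, |h (η : ℝ)|) *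
        Real.exp ((τ - τ₀) ^ 2 * ⨆ η : Set.Icc τ₀ τ, |W (η : ℝ)|) := by
  have hfc : ContinuousOn f (Set.Ici τ₀) := fun s hs => (hf s hs).continuousWithinAt
  have hf'c : ContinuousOn f' (Set.Ici τ₀) := fun s hs => (hf' s hs).continuousWithinAt
  intro τ hτ
  rw [Set.mem_Ici] at hτ
  haveI : Nonempty (Set.Icc τ₀ τ) := (Set.nonempty_Icc.mpr hτ).to_subtype
  set H := ⨆ η : Set.Icc τ₀ τ, |h (η : ℝ)| with hHdef
  set M := ⨆ η : Set.Icc τ₀ τ, |W (η : ℝ)| with hMdef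
  have hIcc : Set.Icc τ₀ τ ⊆ Set.Ici τ₀ := Set.Icc_subset_Ici_self
  have hbddH : BddAbove (Set.range fun η : Set.Icc τ₀ τ => |h (η : ℝ)|) := by
    have h1 : BddAbove ((fun s => |h s|) '' Set.Icc τ₀ τ) :=
      (isCompact_Icc.image_of_continuousOn ((hh.mono hIcc).abs)).bddAbove
    rw [Set.image_eq_range] at h1
    exact h1
  have hbddM : BddAbove (Set.range fun η : Set.Icc τ₀ τ => |W (η : ℝ)|) := by
    have h1 : BddAbove ((fun s => |W s|) '' Set.Icc τ₀ τ) :=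
      (isCompact_Icc.image_of_continuousOn ((hW.mono hIcc).abs)).bddAbove
    rw [Set.image_eq_range] at h1
    exact h1
  have hHb : ∀ s ∈ Set.Icc τ₀ τ, |h s| ≤ H := fun s hs => le_ciSup hbddH ⟨s, hs⟩
  have hMb : ∀ s ∈ Set.Icc τ₀ τ, |W s| ≤ M := fun s hs => le_ciSup hbddM ⟨s, hs⟩
  have hH0 : 0 ≤ H := le_trans (abs_nonneg _) (hHb τ₀ ⟨le_refl _, hτ⟩)
  have hM0 : 0 ≤ M := le_trans (abs_nonneg _) (hMb τ₀ ⟨le_refl _, hτ⟩)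
  have hτ0 : 0 ≤ τ - τ₀ := sub_nonneg.mpr hτ
  set C := |f₀| + (τ - τ₀) * |f₀'| + (τ - τ₀) ^ 2 * H with hCdef
  set K := (τ - τ₀) * M with hKdef
  have hC0 : 0 ≤ C := by positivity
  have hK0 : 0 ≤ K := by positivity
  -- a globally continuous extension of |f|
  set g : ℝ → ℝ := fun s => |f (max s τ₀)| with hgdef
  have hgc : Continuous g := by
    apply Continuous.abs
    exact hfc.comp_continuous (continuous_id.max continuous_const) fun x => Set.mem_Ici.mpr (le_max_right _ _)
  have hgeq : ∀ s, τ₀ ≤ s → g s = |f s| := by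
    intro s hs; simp [hgdef, max_eq_left hs]
  set F : ℝ → ℝ := fun σ => ∫ s in τ₀..σ, g s with hFdef
  have hFd : ∀ σ, HasDerivAt F (g σ) σ := fun σ => (hgc.integral_hasStrictDerivAt τ₀ σ).hasDerivAt
  have hF0 : F τ₀ = 0 := by simp [hFdef]
  have hFnonneg : ∀ σ, τ₀ ≤ σ → 0 ≤ F σ := fun σ hσ =>
    intervalIntegral.integral_nonneg hσ fun s _ => abs_nonneg _
  -- Key integral inequality via the retarded representation
  have key : ∀ σ ∈ Set.Icc τ₀ τ, |f σ| ≤ K * F σ + C := by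
    intro σ hσmem
    obtain ⟨hσ1, hσ2⟩ := hσmem
    set Φ : ℝ → ℝ := fun s => f s * Real.cos (k * (σ - s)) + f' s * Sk k (σ - s) with hΦ
    set G : ℝ → ℝ := fun s => Sk k (σ - s) * (h s - W s * f s) with hG
    have hcos : Continuous fun s : ℝ => Real.cos (k * (σ - s)) := by fun_prop
    have hS : Continuous fun s : ℝ => Sk k (σ - s) :=
      (continuous_Sk k).comp (continuous_const.sub continuous_id)
    have hsubI : Set.Icc τ₀ σ ⊆ Set.Ici τ₀ := Set.Icc_subset_Ici_self
    have hΦc : ContinuousOn Φ (Set.Icc τ₀ σ) :=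
      ((hfc.mono hsubI).mul hcos.continuousOn).add ((hf'c.mono hsubI).mul hS.continuousOn)
    have hGc : ContinuousOn G (Set.Icc τ₀ σ) :=
      hS.continuousOn.mul ((hh.mono hsubI).sub ((hW.mono hsubI).mul (hfc.mono hsubI)))
    have hΦd : ∀ s ∈ Set.Ioo τ₀ σ, HasDerivAt Φ (G s) s := by
      intro s hs
      have hsI : s ∈ Set.Ici τ₀ := le_of_lt hs.1
      have hnb : Set.Ici τ₀ ∈ nhds s := Ici_mem_nhds hs.1
      have hfd : HasDerivAt f (f' s) s := (hf s hsI).hasDerivAt hnb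
      have hf'd : HasDerivAt f' (h s - (k ^ 2 + W s) * f s) s := (hf' s hsI).hasDerivAt hnb
      have hin : HasDerivAt (fun y : ℝ => σ - y) (-1) s := by
        simpa using (hasDerivAt_id s).const_sub σ
      have hcosd : HasDerivAt (fun y : ℝ => Real.cos (k * (σ - y))) (k ^ 2 * Sk k (σ - s)) s := by
        have := (hasDerivAt_cosk k (σ - s)).comp s hin
        simpa [Function.comp_def] using this
      have hSd : HasDerivAt (fun y : ℝ => Sk k (σ - y)) (-Real.cos (k * (σ - s))) s := by
        have := (hasDerivAt_Sk k (σ - s)).comp s hin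
        simpa [Function.comp_def] using this
      have hsum := (hfd.mul hcosd).add (hf'd.mul hSd)
      refine hsum.congr_deriv ?_
      simp only [hG]
      ring
    have hGint : IntervalIntegrable G volume τ₀ σ := by
      apply ContinuousOn.intervalIntegrable
      rwa [Set.uIcc_of_le hσ1]
    have hFTC := intervalIntegral.integral_eq_sub_of_hasDerivAt_of_le hσ1 hΦc hΦd hGint
    have hΦσ : Φ σ = f σ := by simp [hΦ, Sk_zero]
    have hΦτ₀ : Φ τ₀ = f₀ * Real.cos (k * (σ - τ₀)) + f₀' * Sk k (σ - τ₀) := by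
      simp [hΦ, hi0, hi1]
    have hrep : f σ = f₀ * Real.cos (k * (σ - τ₀)) + f₀' * Sk k (σ - τ₀) +
        ∫ s in τ₀..σ, G s := by
      rw [hFTC, hΦσ, hΦτ₀]; ring
    have hptwise : ∀ s ∈ Set.Icc τ₀ σ, |G s| ≤ (τ - τ₀) * H + K * g s := by
      intro s hs
      have hs' : s ∈ Set.Icc τ₀ τ := ⟨hs.1, le_trans hs.2 hσ2⟩
      have h1 : |Sk k (σ - s)| ≤ σ - s := abs_Sk_le k (sub_nonneg.mpr hs.2)
      have h2 : σ - s ≤ τ - τ₀ := by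
        have := hs.1; linarith
      calc |G s| = |Sk k (σ - s)| * |h s - W s * f s| := abs_mul _ _
        _ ≤ (τ - τ₀) * (|h s| + |W s| * |f s|) := by
            apply mul_le_mul (h1.trans h2) _ (abs_nonneg _) hτ0
            calc |h s - W s * f s| ≤ |h s| + |W s * f s| := abs_sub _ _
              _ = |h s| + |W s| * |f s| := by rw [abs_mul]
        _ ≤ (τ - τ₀) * (H + M * |f s|) := by
            apply mul_le_mul_of_nonneg_left _ hτ0
            exact add_le_add (hHb s hs') (mul_le_mul_of_nonneg_right (hMb s hs') (abs_nonneg _))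
        _ = (τ - τ₀) * H + K * |f s| := by rw [hKdef]; ring
        _ = (τ - τ₀) * H + K * g s := by rw [hgeq s hs.1]
    have hgint : IntervalIntegrable (fun s => K * g s) volume τ₀ σ :=
      ((continuous_const.mul hgc).intervalIntegrable _ _)
    have habs : |∫ s in τ₀..σ, G s| ≤ (τ - τ₀) * H * (σ - τ₀) + K * F σ := by
      calc |∫ s in τ₀..σ, G s| ≤ ∫ s in τ₀..σ, |G s| :=
            intervalIntegral.abs_integral_le_integral_abs hσ1
        _ ≤ ∫ s in τ₀..σ, ((τ - τ₀) * H + K * g s) :=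
            intervalIntegral.integral_mono_on hσ1 hGint.abs
              (intervalIntegrable_const.add hgint) hptwise
        _ = (τ - τ₀) * H * (σ - τ₀) + K * F σ := by
            rw [intervalIntegral.integral_add intervalIntegrable_const hgint,
              intervalIntegral.integral_const, intervalIntegral.integral_const_mul]
            simp [hFdef]
            ring
    have hcb : |f₀ * Real.cos (k * (σ - τ₀))| ≤ |f₀| := by
      rw [abs_mul]
      calc |f₀| * |Real.cos (k * (σ - τ₀))| ≤ |f₀| * 1 :=
            mul_le_mul_of_nonneg_left (Real.abs_cos_le_one _) (abs_nonneg _)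
        _ = |f₀| := mul_one _
    have hsb : |f₀' * Sk k (σ - τ₀)| ≤ (τ - τ₀) * |f₀'| := by
      rw [abs_mul, mul_comm]
      apply mul_le_mul_of_nonneg_right _ (abs_nonneg _)
      exact le_trans (abs_Sk_le k (sub_nonneg.mpr hσ1)) (by linarith)
    calc |f σ| ≤ |f₀ * Real.cos (k * (σ - τ₀))| + |f₀' * Sk k (σ - τ₀)| +
          |∫ s in τ₀..σ, G s| := by rw [hrep]; exact abs_add_three _ _ _
      _ ≤ |f₀| + (τ - τ₀) * |f₀'| + ((τ - τ₀) * H * (σ - τ₀) + K * F σ) :=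
          add_le_add (add_le_add hcb hsb) habs
      _ ≤ K * F σ + C := by
          have hq : (τ - τ₀) * H * (σ - τ₀) ≤ (τ - τ₀) ^ 2 * H := by
            have h2 : σ - τ₀ ≤ τ - τ₀ := by linarith
            have h3 := mul_le_mul_of_nonneg_left h2 (mul_nonneg hτ0 hH0)
            nlinarith [h3]
          rw [hCdef]; linarith
  -- Grönwall
  have grb := norm_le_gronwallBound_of_norm_deriv_right_le
    (f := F) (f' := g) (δ := 0) (K := K) (ε := C) (a := τ₀) (b := τ)
    (fun s _ => (hFd s).continuousAt.continuousWithinAt)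
    (fun s _ => (hFd s).hasDerivWithinAt)
    (by simp [hF0])
    (fun s hs => by
      rw [Real.norm_eq_abs, hgeq s hs.1, abs_abs, Real.norm_eq_abs,
        abs_of_nonneg (hFnonneg s hs.1)]
      exact key s ⟨hs.1, le_of_lt hs.2⟩)
  have hFτ : F τ ≤ gronwallBound 0 K C (τ - τ₀) := by
    have := grb τ ⟨hτ, le_refl τ⟩
    rwa [Real.norm_eq_abs, abs_of_nonneg (hFnonneg τ hτ)] at this
  have hgb : K * gronwallBound 0 K C (τ - τ₀) + C = C * Real.exp (K * (τ - τ₀)) := by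
    rcases eq_or_ne K 0 with hKz | hKz
    · rw [hKz, gronwallBound_K0]; simp
    · rw [gronwallBound_of_K_ne_0 hKz]
      field_simp
      ring
  have hfinal : |f τ| ≤ C * Real.exp (K * (τ - τ₀)) := by
    have h1 := key τ ⟨hτ, le_refl τ⟩
    have h2 : K * F τ ≤ K * gronwallBound 0 K C (τ - τ₀) :=
      mul_le_mul_of_nonneg_left hFτ hK0
    linarith [hgb.le, hgb.ge]
  have hexp : K * (τ - τ₀) = (τ - τ₀) ^ 2 * M := by rw [hKdef]; ring
  rw [← hCdef] at *
  calc |f τ| ≤ C * Real.exp (K * (τ - τ₀)) := hfinal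
    _ = C * Real.exp ((τ - τ₀) ^ 2 * M) := by rw [hexp]
end

section
/- Let k₀ > 0, τ₀ < τ₁, let V ∈ C¹([τ₀,τ₁];ℝ) with V(τ₀) = 0, and let χ be the C² complex-valued solution of χ'' + (k₀² + V) χ = 0 with χ(τ₀) = e^{i k₀ τ₀}/√(2k₀) and χ'(τ₀) = i k₀ e^{i k₀ τ₀}/√(2k₀). Then for every τ ∈ [τ₀,τ₁]: |χ(τ)| ≤ (1/√(2k₀)) · exp( ‖V‖_{1,[τ₀,τ]} / k₀ ) and |χ'(τ)| ≤ ( √(k₀/2) + ‖V'‖_{1,[τ₀,τ]} /(√2 · k₀^{3/2}) ) · exp( 2‖V‖_{1,[τ₀,τ]} / k₀ ), where ‖g‖_{1,[τ₀,τ]} = ∫_{τ₀}^{τ} |g(η)| dη. -/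
open MeasureTheory Real Set

/-- Let `k₀ > 0`, `τ₀ < τ₁`, `V ∈ C¹([τ₀,τ₁])` with `V(τ₀) = 0`, and let
`χ` be the `C²` complex solution of `χ'' + (k₀² + V)χ = 0` with
`χ(τ₀) = e^{i k₀ τ₀}/√(2k₀)`, `χ'(τ₀) = i k₀ e^{i k₀ τ₀}/√(2k₀)`. Then for all
`τ ∈ [τ₀,τ₁]`:
`|χ(τ)| ≤ (1/√(2k₀)) exp(‖V‖₁/k₀)` and
`|χ'(τ)| ≤ (√(k₀/2) + ‖V'‖₁/(√2 k₀^{3/2})) exp(2‖V‖₁/k₀)`,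
where `‖g‖₁ = ∫_{τ₀}^{τ} |g|`. -/
theorem stmt17 (k₀ τ₀ τ₁ : ℝ) (hk : 0 < k₀) (hτ : τ₀ < τ₁) (V V' : ℝ → ℝ)
    (hV : ∀ τ ∈ Set.Icc τ₀ τ₁, HasDerivWithinAt V (V' τ) (Set.Icc τ₀ τ₁) τ)
    (hV' : ContinuousOn V' (Set.Icc τ₀ τ₁)) (hV0 : V τ₀ = 0)
    (χ χ' : ℝ → ℂ)
    (hχ : ∀ τ ∈ Set.Icc τ₀ τ₁, HasDerivWithinAt χ (χ' τ) (Set.Icc τ₀ τ₁) τ)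
    (hχ' : ∀ τ ∈ Set.Icc τ₀ τ₁,
      HasDerivWithinAt χ' (-(((k₀ ^ 2 + V τ : ℝ)) : ℂ) * χ τ) (Set.Icc τ₀ τ₁) τ)
    (hi0 : χ τ₀ = Complex.exp (Complex.I * k₀ * τ₀) / (Real.sqrt (2 * k₀) : ℂ))
    (hi1 : χ' τ₀ = Complex.I * k₀ * Complex.exp (Complex.I * k₀ * τ₀) / (Real.sqrt (2 * k₀) : ℂ)) :
    ∀ τ ∈ Set.Icc τ₀ τ₁,
      ‖χ τ‖ ≤ (1 / Real.sqrt (2 * k₀)) *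
          Real.exp ((∫ η in τ₀..τ, |V η|) / k₀) ∧
      ‖χ' τ‖ ≤
        (Real.sqrt (k₀ / 2) +
            (∫ η in τ₀..τ, |V' η|) / (Real.sqrt 2 * k₀ ^ ((3:ℝ) / 2))) *
          Real.exp (2 * (∫ η in τ₀..τ, |V η|) / k₀) := by
  have hk2 : (0:ℝ) < 2 * k₀ := by linarith
  have hs2k : (0:ℝ) < Real.sqrt (2 * k₀) := Real.sqrt_pos.mpr hk2
  have hss : Real.sqrt (2 * k₀) * Real.sqrt (2 * k₀) = 2 * k₀ := Real.mul_self_sqrt hk2.le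
  set c : ℂ := Complex.I * (k₀ : ℂ) with hc_def
  have habs_c : ‖c‖ = k₀ := by
    simp [hc_def, abs_of_pos hk]
  have habs_exp : ∀ x : ℝ, ‖Complex.exp (c * x)‖ = 1 := by
    intro x
    rw [Complex.norm_exp]
    simp [hc_def, Complex.mul_re]
  have habs_exp' : ∀ x : ℝ, ‖Complex.exp (-(c * x))‖ = 1 := by
    intro x
    rw [Complex.norm_exp]
    simp [hc_def, Complex.mul_re]
  have hmulE : ∀ (x : ℝ) (z : ℂ), ‖Complex.exp (c * x) * z‖ = ‖z‖ := by
    intro x z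
    rw [norm_mul, habs_exp, one_mul]
  have hmulE' : ∀ (x : ℝ) (z : ℂ), ‖Complex.exp (-(c * x)) * z‖ = ‖z‖ := by
    intro x z
    rw [norm_mul, habs_exp', one_mul]
  have hee : ∀ x : ℝ, Complex.exp (c * x) * Complex.exp (-(c * x)) = 1 := by
    intro x
    rw [← Complex.exp_add]
    simp
  set u : ℝ → ℂ := fun t => Complex.exp (c * t) * (χ' t - c * χ t) with hu_def
  set v : ℝ → ℂ := fun t => Complex.exp (-(c * t)) * (χ' t + c * χ t) with hv_def
  -- continuity facts
  have hχc : ContinuousOn χ (Icc τ₀ τ₁) := fun x hx => (hχ x hx).continuousWithinAt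
  have hχ'c : ContinuousOn χ' (Icc τ₀ τ₁) := fun x hx => (hχ' x hx).continuousWithinAt
  have hVcont : ContinuousOn V (Icc τ₀ τ₁) := fun x hx => (hV x hx).continuousWithinAt
  have hec : Continuous fun t : ℝ => Complex.exp (c * t) :=
    Complex.continuous_exp.comp (continuous_const.mul Complex.continuous_ofReal)
  have hec' : Continuous fun t : ℝ => Complex.exp (-(c * t)) :=
    Complex.continuous_exp.comp (continuous_const.mul Complex.continuous_ofReal).neg
  have huc : ContinuousOn u (Icc τ₀ τ₁) :=
    hec.continuousOn.mul (hχ'c.sub (continuousOn_const.mul hχc))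
  have hvc : ContinuousOn v (Icc τ₀ τ₁) :=
    hec'.continuousOn.mul (hχ'c.add (continuousOn_const.mul hχc))
  -- the continuous extension of |V|
  set W : ℝ → ℝ := fun t => |Set.IccExtend hτ.le ((Set.Icc τ₀ τ₁).restrict V) t| with hW_def
  have hWc : Continuous W :=
    continuous_abs.comp
      ((continuousOn_iff_continuous_restrict.mp hVcont).Icc_extend' (h := hτ.le))
  have hWeq : ∀ t ∈ Icc τ₀ τ₁, W t = |V t| := by
    intro t ht
    simp only [hW_def]
    rw [Set.IccExtend_of_mem hτ.le _ ht]
    rfl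
  set E : ℝ → ℝ := fun t => ∫ η in τ₀..t, W η with hE_def
  have hE : ∀ x : ℝ, HasDerivAt E (W x) x := fun x =>
    (hWc.integral_hasStrictDerivAt τ₀ x).hasDerivAt
  have hEeq : ∀ t ∈ Icc τ₀ τ₁, E t = ∫ η in τ₀..t, |V η| := by
    intro t ht
    refine intervalIntegral.integral_congr fun s hs => ?_
    rw [Set.uIcc_of_le ht.1] at hs
    exact hWeq s ⟨hs.1, hs.2.trans ht.2⟩
  -- the WithLp 1 pair
  set eL : WithLp 1 (ℂ × ℂ) ≃L[ℝ] ℂ × ℂ := WithLp.prodContinuousLinearEquiv 1 ℝ ℂ ℂ with heL_def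
  have hnormF : ∀ a b : ℂ, ‖eL.symm (a, b)‖ = ‖a‖ + ‖b‖ := by
    intro a b
    rw [WithLp.prod_norm_eq_add (by norm_num)]
    simp [heL_def]
  set F : ℝ → WithLp 1 (ℂ × ℂ) := fun t => eL.symm (u t, v t) with hF_def
  have hFnorm : ∀ x : ℝ, ‖F x‖ = ‖u x‖ + ‖v x‖ := fun x =>
    hnormF (u x) (v x)
  have hFc : ContinuousOn F (Icc τ₀ τ₁) :=
    eL.symm.continuous.comp_continuousOn (huc.prodMk hvc)
  set u' : ℝ → ℂ := fun t => -(Complex.exp (c * t) * ((V t : ℂ) * χ t)) with hu'_def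
  set v' : ℝ → ℂ := fun t => -(Complex.exp (-(c * t)) * ((V t : ℂ) * χ t)) with hv'_def
  set F' : ℝ → WithLp 1 (ℂ × ℂ) := fun t => eL.symm (u' t, v' t) with hF'_def
  -- derivative of F
  have hF'x : ∀ x ∈ Ico τ₀ τ₁, HasDerivWithinAt F (F' x) (Ici x) x := by
    intro x hx
    have hxI : x ∈ Icc τ₀ τ₁ := ⟨hx.1, hx.2.le⟩
    have hm : Icc τ₀ τ₁ ∈ nhdsWithin x (Ici x) := Icc_mem_nhdsGE_of_mem hx
    have hcx : HasDerivWithinAt χ (χ' x) (Ici x) x :=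
      (hχ x hxI).mono_of_mem_nhdsWithin hm
    have hcx' : HasDerivWithinAt χ' (-((k₀ ^ 2 + V x : ℝ) : ℂ) * χ x) (Ici x) x :=
      (hχ' x hxI).mono_of_mem_nhdsWithin hm
    have hexp : HasDerivAt (fun t : ℝ => Complex.exp (c * t)) (Complex.exp (c * x) * c) x := by
      have h1 : HasDerivAt (fun w : ℂ => Complex.exp (c * w)) (Complex.exp (c * x) * c) (x : ℂ) := by
        simpa using ((hasDerivAt_id (x : ℂ)).const_mul c).cexp
      exact h1.comp_ofReal
    have hexp' : HasDerivAt (fun t : ℝ => Complex.exp (-(c * t)))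
        (Complex.exp (-(c * x)) * (-c)) x := by
      have h1 : HasDerivAt (fun w : ℂ => Complex.exp (-(c * w)))
          (Complex.exp (-(c * x)) * (-c)) (x : ℂ) := by
        simpa using (((hasDerivAt_id (x : ℂ)).const_mul c).neg).cexp
      exact h1.comp_ofReal
    have hu' : HasDerivWithinAt u (u' x) (Ici x) x := by
      have h2 := hexp.hasDerivWithinAt.mul (hcx'.sub (hcx.const_mul c))
      refine h2.congr_deriv (Eq.symm ?_)
      simp only [hu'_def, hc_def, Pi.sub_apply]
      push_cast
      linear_combination (Complex.exp (Complex.I * (k₀:ℂ) * (x:ℂ)) * (k₀:ℂ)^2 * χ x) *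
        Complex.I_mul_I
    have hv' : HasDerivWithinAt v (v' x) (Ici x) x := by
      have h2 := hexp'.hasDerivWithinAt.mul (hcx'.add (hcx.const_mul c))
      refine h2.congr_deriv (Eq.symm ?_)
      simp only [hv'_def, hc_def, Pi.add_apply]
      push_cast
      linear_combination (Complex.exp (-(Complex.I * (k₀:ℂ) * (x:ℂ))) * (k₀:ℂ)^2 * χ x) *
        Complex.I_mul_I
    exact eL.symm.hasFDerivAt.comp_hasDerivWithinAt x (hu'.prodMk hv')
  -- pointwise comparisons
  have hχF : ∀ x : ℝ, 2 * k₀ * ‖χ x‖ ≤ ‖F x‖ := by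
    intro x
    have h2 : (2:ℂ) * c * χ x =
        Complex.exp (c * x) * v x - Complex.exp (-(c * x)) * u x := by
      simp only [hu_def, hv_def]
      linear_combination (-(2 * c * χ x)) * hee x
    have h3 : ‖(2:ℂ) * c * χ x‖ = 2 * k₀ * ‖χ x‖ := by
      rw [norm_mul, norm_mul, habs_c, Complex.norm_two]
    rw [hFnorm]
    calc 2 * k₀ * ‖χ x‖ = ‖(2:ℂ) * c * χ x‖ := h3.symm
      _ = ‖Complex.exp (c * x) * v x - Complex.exp (-(c * x)) * u x‖ := by rw [h2]
      _ ≤ ‖Complex.exp (c * x) * v x‖ +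
          ‖Complex.exp (-(c * x)) * u x‖ := by
          exact norm_sub_le _ _
      _ = ‖u x‖ + ‖v x‖ := by
          rw [hmulE x (v x), hmulE' x (u x)]; ring
  have hχ'F : ∀ x : ℝ, 2 * ‖χ' x‖ ≤ ‖F x‖ := by
    intro x
    have h2 : (2:ℂ) * χ' x =
        Complex.exp (c * x) * v x + Complex.exp (-(c * x)) * u x := by
      simp only [hu_def, hv_def]
      linear_combination (-(2 * χ' x)) * hee x
    have h3 : ‖(2:ℂ) * χ' x‖ = 2 * ‖χ' x‖ := by
      rw [norm_mul, Complex.norm_two]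
    rw [hFnorm]
    calc 2 * ‖χ' x‖ = ‖(2:ℂ) * χ' x‖ := h3.symm
      _ = ‖Complex.exp (c * x) * v x + Complex.exp (-(c * x)) * u x‖ := by rw [h2]
      _ ≤ ‖Complex.exp (c * x) * v x‖ +
          ‖Complex.exp (-(c * x)) * u x‖ := norm_add_le _ _
      _ = ‖u x‖ + ‖v x‖ := by
          rw [hmulE x (v x), hmulE' x (u x)]; ring
  -- norm of F'
  have hF'norm : ∀ x : ℝ, ‖F' x‖ = 2 * (|V x| * ‖χ x‖) := by
    intro x
    have h1 : ‖F' x‖ = ‖u' x‖ + ‖v' x‖ := hnormF (u' x) (v' x)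
    have h2 : ‖u' x‖ = |V x| * ‖χ x‖ := by
      simp only [hu'_def]
      rw [norm_neg, hmulE, norm_mul, Complex.norm_real, Real.norm_eq_abs]
    have h3 : ‖v' x‖ = |V x| * ‖χ x‖ := by
      simp only [hv'_def]
      rw [norm_neg, hmulE', norm_mul, Complex.norm_real, Real.norm_eq_abs]
    rw [h1, h2, h3]; ring
  -- initial value
  have habsχ0 : ‖χ τ₀‖ = 1 / Real.sqrt (2 * k₀) := by
    rw [hi0, norm_div, Complex.norm_real, Real.norm_eq_abs, abs_of_pos hs2k]
    rw [habs_exp τ₀]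
  have hu0 : u τ₀ = 0 := by
    have h0 : χ' τ₀ - c * χ τ₀ = 0 := by
      rw [hi0, hi1]; ring
    simp [hu_def, h0]
  have hv0 : ‖v τ₀‖ = Real.sqrt (2 * k₀) := by
    have h0 : v τ₀ = Complex.exp (-(c * τ₀)) * (2 * c * χ τ₀) := by
      simp only [hv_def]
      rw [hi0, hi1]; ring
    rw [h0, hmulE', norm_mul, norm_mul, habs_c, Complex.norm_two, habsχ0, mul_one_div,
      div_eq_iff hs2k.ne']
    linarith [hss]
  have hF0 : ‖F τ₀‖ = Real.sqrt (2 * k₀) := by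
    rw [hFnorm, hu0, hv0]
    simp
  -- the Grönwall estimate
  have key : ∀ t ∈ Icc τ₀ τ₁, ‖F t‖ ≤ Real.sqrt (2 * k₀) * Real.exp (E t / k₀) := by
    intro t ht
    have hb : ∀ ε : ℝ, 0 < ε →
        ‖F t‖ ≤ Real.sqrt (2 * k₀) * Real.exp (E t / k₀ + ε * (t - τ₀)) := by
      intro ε hε
      set B : ℝ → ℝ := fun s => Real.sqrt (2 * k₀) * Real.exp (E s / k₀ + ε * (s - τ₀))
        with hB_def
      have hBpos : ∀ s, 0 < B s := fun s => by positivity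
      have hB' : ∀ s : ℝ, HasDerivAt B ((W s / k₀ + ε) * B s) s := by
        intro s
        have h2 : HasDerivAt (fun r : ℝ => ε * (r - τ₀)) ε s := by
          simpa using ((hasDerivAt_id s).sub_const τ₀).const_mul ε
        have h1 : HasDerivAt (fun r => E r / k₀ + ε * (r - τ₀)) (W s / k₀ + ε) s :=
          ((hE s).div_const k₀).add h2
        have h3 := h1.exp.const_mul (Real.sqrt (2 * k₀))
        refine h3.congr_deriv (Eq.symm ?_)
        simp only [hB_def]
        ring
      have ha0 : ‖F τ₀‖ ≤ B τ₀ := by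
        rw [hF0]
        simp only [hB_def, hE_def]
        rw [intervalIntegral.integral_same]
        simp
      have bound : ∀ x ∈ Ico τ₀ τ₁, ‖F x‖ = B x → ‖F' x‖ < (W x / k₀ + ε) * B x := by
        intro x hx hFB
        have hxI : x ∈ Icc τ₀ τ₁ := ⟨hx.1, hx.2.le⟩
        have h1 : ‖F' x‖ ≤ (|V x| / k₀) * ‖F x‖ := by
          rw [hF'norm]
          have h2 := hχF x
          rw [div_mul_eq_mul_div, le_div_iff₀ hk]
          nlinarith [abs_nonneg (V x)]
        have h4 : (|V x| / k₀) * ‖F x‖ < (W x / k₀ + ε) * B x := by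
          rw [hFB, hWeq x hxI]
          have := hBpos x
          nlinarith
        exact lt_of_le_of_lt h1 h4
      exact image_norm_le_of_norm_deriv_right_lt_deriv_boundary hFc hF'x ha0 hB' bound ht
    have hlim : Filter.Tendsto
        (fun ε : ℝ => Real.sqrt (2 * k₀) * Real.exp (E t / k₀ + ε * (t - τ₀)))
        (nhdsWithin 0 (Ioi 0)) (nhds (Real.sqrt (2 * k₀) * Real.exp (E t / k₀))) := by
      have hcont : Continuous
          fun ε : ℝ => Real.sqrt (2 * k₀) * Real.exp (E t / k₀ + ε * (t - τ₀)) :=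
        continuous_const.mul (Real.continuous_exp.comp
          (continuous_const.add (continuous_id.mul continuous_const)))
      have h5 : Filter.Tendsto
          (fun ε : ℝ => Real.sqrt (2 * k₀) * Real.exp (E t / k₀ + ε * (t - τ₀)))
          (nhdsWithin 0 (Ioi 0))
          (nhds (Real.sqrt (2 * k₀) * Real.exp (E t / k₀ + 0 * (t - τ₀)))) :=
        (hcont.tendsto 0).mono_left nhdsWithin_le_nhds
      simpa using h5
    exact ge_of_tendsto hlim (Filter.eventually_of_mem self_mem_nhdsWithin fun ε hε => hb ε hε)
  -- conclusion
  intro τ hτm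
  have hkey := key τ hτm
  rw [hEeq τ hτm] at hkey
  set A : ℝ := ∫ η in τ₀..τ, |V η| with hA_def
  have hA0 : 0 ≤ A := intervalIntegral.integral_nonneg hτm.1 fun x _ => abs_nonneg _
  constructor
  · -- bound on χ
    have h1 : 2 * k₀ * ‖χ τ‖ ≤ Real.sqrt (2 * k₀) * Real.exp (A / k₀) :=
      (hχF τ).trans hkey
    have h3 : ‖χ τ‖ ≤ (Real.sqrt (2 * k₀) * Real.exp (A / k₀)) / (2 * k₀) := by
      rw [le_div_iff₀ hk2]; linarith
    have h4 : (Real.sqrt (2 * k₀) * Real.exp (A / k₀)) / (2 * k₀) =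
        (1 / Real.sqrt (2 * k₀)) * Real.exp (A / k₀) := by
      rw [one_div, ← div_eq_inv_mul, div_eq_div_iff hk2.ne' hs2k.ne']
      linear_combination Real.exp (A / k₀) * hss
    rw [← h4]
    exact h3
  · -- bound on χ'
    have h1 : 2 * ‖χ' τ‖ ≤ Real.sqrt (2 * k₀) * Real.exp (A / k₀) :=
      (hχ'F τ).trans hkey
    have hsq : Real.sqrt (2 * k₀) = 2 * Real.sqrt (k₀ / 2) := by
      rw [show (2 * k₀ : ℝ) = 2 ^ 2 * (k₀ / 2) by ring,
        Real.sqrt_mul (by positivity) (k₀ / 2), Real.sqrt_sq (by norm_num : (0:ℝ) ≤ 2)]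
    have h2 : ‖χ' τ‖ ≤ Real.sqrt (k₀ / 2) * Real.exp (A / k₀) := by
      rw [hsq] at h1; linarith
    have hC : 0 ≤ (∫ η in τ₀..τ, |V' η|) / (Real.sqrt 2 * k₀ ^ ((3:ℝ) / 2)) := by
      apply div_nonneg
      · exact intervalIntegral.integral_nonneg hτm.1 fun x _ => abs_nonneg _
      · positivity
    have hexple : Real.exp (A / k₀) ≤ Real.exp (2 * A / k₀) := by
      apply Real.exp_le_exp.mpr
      have h5 : 0 ≤ A / k₀ := div_nonneg hA0 hk.le
      have h4 : 2 * A / k₀ = A / k₀ + A / k₀ := by ring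
      linarith [h4.ge]
    calc ‖χ' τ‖ ≤ Real.sqrt (k₀ / 2) * Real.exp (A / k₀) := h2
      _ ≤ Real.sqrt (k₀ / 2) * Real.exp (2 * A / k₀) :=
        mul_le_mul_of_nonneg_left hexple (Real.sqrt_nonneg _)
      _ ≤ (Real.sqrt (k₀ / 2) + (∫ η in τ₀..τ, |V' η|) / (Real.sqrt 2 * k₀ ^ ((3:ℝ) / 2))) *
          Real.exp (2 * A / k₀) := by
        apply mul_le_mul_of_nonneg_right _ (Real.exp_pos _).le
        linarith
end

section
/- Let k₀ > 0, τ₀ < τ₁, let V ∈ C¹([τ₀,τ₁];ℝ) with V(τ₀) = 0, let χ be the C² complex-valued solution of χ'' + (k₀² + V) χ = 0 with χ(τ₀) = e^{i k₀ τ₀}/√(2k₀) and χ'(τ₀) = i k₀ e^{i k₀ τ₀}/√(2k₀), and set χ⁰(τ) = e^{i k₀ τ}/√(2k₀). Then for every τ ∈ [τ₀,τ₁]: |χ(τ) − χ⁰(τ)| ≤ ( ‖V‖_{1,[τ₀,τ]} /(√2 · k₀^{3/2}) ) · exp( ‖V‖_{1,[τ₀,τ]} / k₀ ) and |χ'(τ)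 − (χ⁰)'(τ)| ≤ ( ‖V‖_{1,[τ₀,τ]} /√(2k₀) + ‖V'‖_{1,[τ₀,τ]} /(√2 · k₀^{3/2}) ) · exp( 2‖V‖_{1,[τ₀,τ]} / k₀ ), where ‖g‖_{1,[τ₀,τ]} = ∫_{τ₀}^{τ} |g(η)| dη. -/
open MeasureTheory Real Set
open scoped RealInnerProductSpace


lemma gronwall_eps (k₀ τ₀ τ₁ c ε : ℝ) (hk : 0 < k₀) (hc : 0 ≤ c) (hε : 0 < ε)
    (V : ℝ → ℝ) (hVc : ContinuousOn V (Icc τ₀ τ₁))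
    (u v χ : ℝ → ℂ)
    (hχu : ∀ σ ∈ Icc τ₀ τ₁, ‖χ σ‖ ≤ c + ‖u σ‖)
    (hu : ∀ σ ∈ Icc τ₀ τ₁, HasDerivWithinAt u (v σ) (Icc τ₀ τ₁) σ)
    (hv : ∀ σ ∈ Icc τ₀ τ₁,
      HasDerivWithinAt v (-((k₀^2 : ℝ) • u σ) - V σ • χ σ) (Icc τ₀ τ₁) σ)
    (hu0 : u τ₀ = 0) (hv0 : v τ₀ = 0) :
    ∀ τ ∈ Icc τ₀ τ₁,
      Real.sqrt (k₀^2 * ‖u τ‖^2 + ‖v τ‖^2 + ε^2)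
        ≤ (ε + c * ∫ η in τ₀..τ, |V η|) * Real.exp ((∫ η in τ₀..τ, |V η|) / k₀) := by
  intro τ hτmem
  set s : Set ℝ := Icc τ₀ τ₁ with hs
  set E : ℝ → ℝ := fun σ => k₀^2 * ⟪u σ, u σ⟫ + ⟪v σ, v σ⟫ with hE
  set A : ℝ → ℝ := fun σ => ∫ η in τ₀..σ, |V η| with hA
  set g : ℝ → ℝ := fun σ => Real.sqrt (E σ + ε^2) with hg
  set F : ℝ → ℝ := fun σ => g σ * Real.exp (-(A σ)/k₀) - c * A σ with hF
  have hE_eq : ∀ σ, E σ = k₀^2 * ‖u σ‖^2 + ‖v σ‖^2 := by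
    intro σ; simp [hE, real_inner_self_eq_norm_sq]
  have hEnn : ∀ σ, 0 ≤ E σ := by intro σ; rw [hE_eq]; positivity
  have hEε : ∀ σ, 0 < E σ + ε^2 := fun σ => by nlinarith [hEnn σ]
  have hgpos : ∀ σ, 0 < g σ := fun σ => Real.sqrt_pos.mpr (hEε σ)
  have hvg : ∀ σ, ‖v σ‖ ≤ g σ := by
    intro σ
    rw [show ‖v σ‖ = Real.sqrt (‖v σ‖^2) from (Real.sqrt_sq (norm_nonneg _)).symm]
    apply Real.sqrt_le_sqrt; rw [hE_eq]; nlinarith [norm_nonneg (u σ), sq_nonneg ε]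
  have hug : ∀ σ, k₀ * ‖u σ‖ ≤ g σ := by
    intro σ
    rw [show k₀ * ‖u σ‖ = Real.sqrt ((k₀ * ‖u σ‖)^2) from
      (Real.sqrt_sq (by positivity)).symm]
    apply Real.sqrt_le_sqrt; rw [hE_eq]; nlinarith [norm_nonneg (v σ), sq_nonneg ε]
  -- derivative of E
  have hE' : ∀ σ ∈ s, HasDerivWithinAt E (-(2 * V σ) * ⟪v σ, χ σ⟫) s σ := by
    intro σ hσ
    have h1 := ((hu σ hσ).inner ℝ (hu σ hσ)).const_mul (k₀^2)
    have h2 := (hv σ hσ).inner ℝ (hv σ hσ)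
    have := h1.add h2
    refine this.congr_deriv ?_
    simp only [inner_sub_right, inner_sub_left, inner_neg_right, inner_neg_left,
      real_inner_smul_right, real_inner_smul_left, real_inner_comm (u σ) (v σ),
      real_inner_comm (χ σ) (v σ)]
    ring
  -- derivative of A
  have hVabs : ContinuousOn (fun η => |V η|) s := hVc.abs
  have hA' : ∀ σ ∈ s, HasDerivWithinAt A (|V σ|) s σ := by
    intro σ hσ
    haveI : Fact (σ ∈ Icc τ₀ τ₁) := ⟨hσ⟩
    apply intervalIntegral.integral_hasDerivWithinAt_right (t := Icc τ₀ τ₁)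
    · apply ContinuousOn.intervalIntegrable
      apply hVabs.mono
      rw [uIcc_of_le hσ.1]
      exact Icc_subset_Icc le_rfl hσ.2
    · exact hVabs.stronglyMeasurableAtFilter_nhdsWithin measurableSet_Icc σ
    · exact hVabs σ hσ
  have hAnn : ∀ σ ∈ s, 0 ≤ A σ := fun σ hσ =>
    intervalIntegral.integral_nonneg hσ.1 (fun _ _ => abs_nonneg _)
  -- derivative of g
  have hg' : ∀ σ ∈ s, HasDerivWithinAt g
      ((-(2 * V σ) * ⟪v σ, χ σ⟫) / (2 * g σ)) s σ := by
    intro σ hσ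
    exact ((hE' σ hσ).add_const (ε^2)).sqrt (ne_of_gt (hEε σ))
  -- bound on g'
  have hg'le : ∀ σ ∈ s, (-(2 * V σ) * ⟪v σ, χ σ⟫) / (2 * g σ)
      ≤ |V σ| * (c + g σ / k₀) := by
    intro σ hσ
    rw [div_le_iff₀ (mul_pos two_pos (hgpos σ))]
    have h1 : -(2 * V σ) * ⟪v σ, χ σ⟫ ≤ 2 * |V σ| * (‖v σ‖ * ‖χ σ‖) := by
      calc -(2 * V σ) * ⟪v σ, χ σ⟫ ≤ |(-(2 * V σ)) * ⟪v σ, χ σ⟫| := le_abs_self _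
        _ = 2 * |V σ| * |⟪v σ, χ σ⟫| := by rw [abs_mul, abs_neg, abs_mul, abs_two]
        _ ≤ 2 * |V σ| * (‖v σ‖ * ‖χ σ‖) := by
            apply mul_le_mul_of_nonneg_left (abs_real_inner_le_norm _ _) (by positivity)
    have h2 : ‖χ σ‖ ≤ c + g σ / k₀ := by
      refine (hχu σ hσ).trans ?_
      have := hug σ
      have : ‖u σ‖ ≤ g σ / k₀ := by rw [le_div_iff₀ hk]; linarith [hug σ]
      linarith
    have h3 := hvg σ
    have h4 : 0 ≤ ‖v σ‖ := norm_nonneg _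
    have h5 : 0 ≤ ‖χ σ‖ := norm_nonneg _
    have h6 : 0 ≤ g σ / k₀ := by positivity
    have h7 : ‖v σ‖ * ‖χ σ‖ ≤ g σ * (c + g σ / k₀) := mul_le_mul h3 h2 h5 (hgpos σ).le
    nlinarith [h1, mul_le_mul_of_nonneg_left h7 (abs_nonneg (V σ))]
  -- derivative of F and sign
  have hF' : ∀ σ ∈ s, HasDerivWithinAt F
      (((-(2 * V σ) * ⟪v σ, χ σ⟫) / (2 * g σ)) * Real.exp (-(A σ)/k₀)
        + g σ * (Real.exp (-(A σ)/k₀) * (-(|V σ|)/k₀)) - c * |V σ|) s σ := by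
    intro σ hσ
    exact ((hg' σ hσ).mul (((hA' σ hσ).neg.div_const k₀).exp)).sub
      ((hA' σ hσ).const_mul c)
  have hF'le : ∀ σ ∈ s,
      ((-(2 * V σ) * ⟪v σ, χ σ⟫) / (2 * g σ)) * Real.exp (-(A σ)/k₀)
        + g σ * (Real.exp (-(A σ)/k₀) * (-(|V σ|)/k₀)) - c * |V σ| ≤ 0 := by
    intro σ hσ
    have he1 : Real.exp (-(A σ)/k₀) ≤ 1 := by
      rw [Real.exp_le_one_iff]
      have := hAnn σ hσ
      rw [neg_div]
      simp only [neg_nonpos]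
      positivity
    have he0 : 0 < Real.exp (-(A σ)/k₀) := Real.exp_pos _
    have hb := hg'le σ hσ
    have hcV : 0 ≤ c * |V σ| := by positivity
    have key : ((-(2 * V σ) * ⟪v σ, χ σ⟫) / (2 * g σ)) - g σ * (|V σ|/k₀) ≤ c * |V σ| := by
      have : |V σ| * (c + g σ / k₀) = c * |V σ| + g σ * (|V σ|/k₀) := by ring
      linarith [hg'le σ hσ]
    have k1 := mul_le_mul_of_nonneg_right key he0.le
    have k2 := mul_le_of_le_one_right hcV he1
    ring_nf at k1 k2 ⊢
    linarith
  -- F is antitone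
  have hFanti : AntitoneOn F s := by
    apply antitoneOn_of_deriv_nonpos (convex_Icc τ₀ τ₁)
    · exact fun σ hσ => (hF' σ hσ).continuousWithinAt
    · intro σ hσ
      rw [interior_Icc] at hσ
      exact ((hF' σ (Ioo_subset_Icc_self hσ)).hasDerivAt
        (Icc_mem_nhds hσ.1 hσ.2)).differentiableAt.differentiableWithinAt
    · intro σ hσ
      rw [interior_Icc] at hσ
      have hd := (hF' σ (Ioo_subset_Icc_self hσ)).hasDerivAt (Icc_mem_nhds hσ.1 hσ.2)
      rw [hd.deriv]
      exact hF'le σ (Ioo_subset_Icc_self hσ)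
  have hτ₀mem : τ₀ ∈ s := ⟨le_rfl, hτmem.1.trans hτmem.2⟩
  have hmono : F τ ≤ F τ₀ := hFanti hτ₀mem hτmem hτmem.1
  have hA0 : A τ₀ = 0 := intervalIntegral.integral_same
  have hE0 : E τ₀ = 0 := by simp [hE, hu0, hv0]
  have hF0 : F τ₀ = ε := by
    simp [hF, hA0, hE0, hg, Real.sqrt_sq hε.le]
  rw [hF0] at hmono
  have hkey : g τ * Real.exp (-(A τ)/k₀) ≤ ε + c * A τ := by
    simp only [hF] at hmono; linarith
  have hmul := mul_le_mul_of_nonneg_right hkey (Real.exp_pos (A τ / k₀)).le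
  rw [mul_assoc, ← Real.exp_add, neg_div, neg_add_cancel, Real.exp_zero, mul_one] at hmul
  have hgoal : Real.sqrt (k₀^2 * ‖u τ‖^2 + ‖v τ‖^2 + ε^2) = g τ := by
    rw [hg]; congr 1; rw [hE_eq]
  rw [hgoal]
  exact hmul

lemma gronwall_lim (k₀ τ₀ τ₁ c : ℝ) (hk : 0 < k₀) (hc : 0 ≤ c)
    (V : ℝ → ℝ) (hVc : ContinuousOn V (Icc τ₀ τ₁))
    (u v χ : ℝ → ℂ)
    (hχu : ∀ σ ∈ Icc τ₀ τ₁, ‖χ σ‖ ≤ c + ‖u σ‖)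
    (hu : ∀ σ ∈ Icc τ₀ τ₁, HasDerivWithinAt u (v σ) (Icc τ₀ τ₁) σ)
    (hv : ∀ σ ∈ Icc τ₀ τ₁,
      HasDerivWithinAt v (-((k₀^2 : ℝ) • u σ) - V σ • χ σ) (Icc τ₀ τ₁) σ)
    (hu0 : u τ₀ = 0) (hv0 : v τ₀ = 0) :
    ∀ τ ∈ Icc τ₀ τ₁,
      k₀ * ‖u τ‖ ≤ (c * ∫ η in τ₀..τ, |V η|) * Real.exp ((∫ η in τ₀..τ, |V η|) / k₀) ∧
      ‖v τ‖ ≤ (c * ∫ η in τ₀..τ, |V η|) * Real.exp ((∫ η in τ₀..τ, |V η|) / k₀) := by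
  intro τ hτmem
  have base : ∀ m : ℝ,
      (∀ ε : ℝ, 0 < ε → m ≤ Real.sqrt (k₀^2 * ‖u τ‖^2 + ‖v τ‖^2 + ε^2)) →
      m ≤ (c * ∫ η in τ₀..τ, |V η|) * Real.exp ((∫ η in τ₀..τ, |V η|) / k₀) := by
    intro m hm
    apply le_of_forall_pos_le_add
    intro δ hδ
    set X := Real.exp ((∫ η in τ₀..τ, |V η|) / k₀) with hX
    have hXpos : 0 < X := Real.exp_pos _
    have hεp : 0 < δ / X := by positivity
    calc m ≤ Real.sqrt (k₀^2 * ‖u τ‖^2 + ‖v τ‖^2 + (δ/X)^2) := hm _ hεp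
      _ ≤ (δ/X + c * ∫ η in τ₀..τ, |V η|) * X :=
          gronwall_eps k₀ τ₀ τ₁ c (δ/X) hk hc hεp V hVc u v χ hχu hu hv hu0 hv0 τ hτmem
      _ = (c * ∫ η in τ₀..τ, |V η|) * X + δ := by
          field_simp
          ring
  constructor
  · apply base
    intro ε hε
    rw [show k₀ * ‖u τ‖ = Real.sqrt ((k₀ * ‖u τ‖)^2) from
      (Real.sqrt_sq (by positivity)).symm]
    apply Real.sqrt_le_sqrt
    nlinarith [norm_nonneg (v τ), sq_nonneg ε]
  · apply base
    intro ε hε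
    nth_rewrite 1 [show ‖v τ‖ = Real.sqrt (‖v τ‖^2) from (Real.sqrt_sq (norm_nonneg _)).symm]
    apply Real.sqrt_le_sqrt
    nlinarith [norm_nonneg (u τ), sq_nonneg ε]


/-- With the hypotheses of Statement 17 and `χ⁰(τ) = e^{i k₀ τ}/√(2k₀)`,
for all `τ ∈ [τ₀,τ₁]`:
`|χ(τ) − χ⁰(τ)| ≤ (‖V‖₁/(√2 k₀^{3/2})) exp(‖V‖₁/k₀)` and
`|χ'(τ) − (χ⁰)'(τ)| ≤ (‖V‖₁/√(2k₀) + ‖V'‖₁/(√2 k₀^{3/2})) exp(2‖V‖₁/k₀)`,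
where `‖g‖₁ = ∫_{τ₀}^{τ} |g|` and `(χ⁰)'(τ) = i k₀ e^{i k₀ τ}/√(2k₀)`. -/
theorem stmt18 (k₀ τ₀ τ₁ : ℝ) (hk : 0 < k₀) (hτ : τ₀ < τ₁) (V V' : ℝ → ℝ)
    (hV : ∀ τ ∈ Set.Icc τ₀ τ₁, HasDerivWithinAt V (V' τ) (Set.Icc τ₀ τ₁) τ)
    (hV' : ContinuousOn V' (Set.Icc τ₀ τ₁)) (hV0 : V τ₀ = 0)
    (χ χ' : ℝ → ℂ)
    (hχ : ∀ τ ∈ Set.Icc τ₀ τ₁, HasDerivWithinAt χ (χ' τ) (Set.Icc τ₀ τ₁) τ)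
    (hχ' : ∀ τ ∈ Set.Icc τ₀ τ₁,
      HasDerivWithinAt χ' (-(((k₀ ^ 2 + V τ : ℝ)) : ℂ) * χ τ) (Set.Icc τ₀ τ₁) τ)
    (hi0 : χ τ₀ = Complex.exp (Complex.I * k₀ * τ₀) / (Real.sqrt (2 * k₀) : ℂ))
    (hi1 : χ' τ₀ = Complex.I * k₀ * Complex.exp (Complex.I * k₀ * τ₀) / (Real.sqrt (2 * k₀) : ℂ)) :
    ∀ τ ∈ Set.Icc τ₀ τ₁,
      ‖χ τ - Complex.exp (Complex.I * k₀ * τ) / (Real.sqrt (2 * k₀) : ℂ)‖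
        ≤ ((∫ η in τ₀..τ, |V η|) / (Real.sqrt 2 * k₀ ^ ((3:ℝ) / 2))) *
            Real.exp ((∫ η in τ₀..τ, |V η|) / k₀) ∧
      ‖χ' τ -
          Complex.I * k₀ * Complex.exp (Complex.I * k₀ * τ) / (Real.sqrt (2 * k₀) : ℂ)‖
        ≤ ((∫ η in τ₀..τ, |V η|) / Real.sqrt (2 * k₀) +
              (∫ η in τ₀..τ, |V' η|) / (Real.sqrt 2 * k₀ ^ ((3:ℝ) / 2))) *
            Real.exp (2 * (∫ η in τ₀..τ, |V η|) / k₀) := by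
  have h2k : (0:ℝ) < 2 * k₀ := by linarith
  have hs2k : 0 < Real.sqrt (2 * k₀) := Real.sqrt_pos.mpr h2k
  set r : ℝ := Real.sqrt (2 * k₀) with hr
  set u : ℝ → ℂ := fun σ => χ σ - Complex.exp (Complex.I * k₀ * σ) / (r:ℂ) with hudef
  set v : ℝ → ℂ := fun σ =>
    χ' σ - Complex.I * k₀ * Complex.exp (Complex.I * k₀ * σ) / (r:ℂ) with hvdef
  have hχ0' : ∀ σ : ℝ, HasDerivAt (fun σ : ℝ => Complex.exp (Complex.I * k₀ * σ) / (r:ℂ))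
      (Complex.I * k₀ * Complex.exp (Complex.I * k₀ * σ) / (r:ℂ)) σ := by
    intro σ
    have h1 : HasDerivAt (fun z : ℂ => Complex.exp (Complex.I * k₀ * z))
        (Complex.exp (Complex.I * k₀ * σ) * (Complex.I * k₀ * 1)) (σ:ℂ) :=
      ((hasDerivAt_id (σ:ℂ)).const_mul (Complex.I * k₀)).cexp
    have h2 := (h1.comp_ofReal).div_const (r:ℂ)
    refine h2.congr_deriv ?_
    ring
  have hχ0'' : ∀ σ : ℝ, HasDerivAt
      (fun σ : ℝ => Complex.I * k₀ * Complex.exp (Complex.I * k₀ * σ) / (r:ℂ))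
      (-((k₀^2 : ℝ) : ℂ) * (Complex.exp (Complex.I * k₀ * σ) / (r:ℂ))) σ := by
    intro σ
    have h1 : HasDerivAt (fun z : ℂ => Complex.exp (Complex.I * k₀ * z))
        (Complex.exp (Complex.I * k₀ * σ) * (Complex.I * k₀ * 1)) (σ:ℂ) :=
      ((hasDerivAt_id (σ:ℂ)).const_mul (Complex.I * k₀)).cexp
    have h2 := ((h1.comp_ofReal).const_mul (Complex.I * k₀)).div_const (r:ℂ)
    refine h2.congr_deriv ?_
    push_cast
    ring_nf
    rw [Complex.I_sq]
    ring
  have hnorm0 : ∀ σ : ℝ, ‖Complex.exp (Complex.I * k₀ * σ) / (r:ℂ)‖ = r⁻¹ := by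
    intro σ
    rw [norm_div, Complex.norm_exp]
    have : (Complex.I * k₀ * σ).re = 0 := by simp
    rw [this, Real.exp_zero]
    simp [hr, abs_of_nonneg (Real.sqrt_nonneg _)]
  have hVc : ContinuousOn V (Set.Icc τ₀ τ₁) :=
    fun σ hσ => (hV σ hσ).continuousWithinAt
  have hχu : ∀ σ ∈ Set.Icc τ₀ τ₁, ‖χ σ‖ ≤ r⁻¹ + ‖u σ‖ := by
    intro σ hσ
    have : χ σ = u σ + Complex.exp (Complex.I * k₀ * σ) / (r:ℂ) := by
      simp [hudef]
    rw [this]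
    calc ‖u σ + Complex.exp (Complex.I * k₀ * σ) / (r:ℂ)‖
        ≤ ‖u σ‖ + ‖Complex.exp (Complex.I * k₀ * σ) / (r:ℂ)‖ := norm_add_le _ _
      _ = r⁻¹ + ‖u σ‖ := by rw [hnorm0 σ]; ring
  have hu : ∀ σ ∈ Set.Icc τ₀ τ₁, HasDerivWithinAt u (v σ) (Set.Icc τ₀ τ₁) σ :=
    fun σ hσ => (hχ σ hσ).sub (hχ0' σ).hasDerivWithinAt
  have hv : ∀ σ ∈ Set.Icc τ₀ τ₁,
      HasDerivWithinAt v (-((k₀^2 : ℝ) • u σ) - V σ • χ σ) (Set.Icc τ₀ τ₁) σ := by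
    intro σ hσ
    have h := (hχ' σ hσ).sub (hχ0'' σ).hasDerivWithinAt
    refine h.congr_deriv ?_
    simp only [hudef, Complex.real_smul]
    push_cast
    ring
  have hu0 : u τ₀ = 0 := by simp [hudef, hi0]
  have hv0 : v τ₀ = 0 := by simp [hvdef, hi1]
  have key := gronwall_lim k₀ τ₀ τ₁ r⁻¹ hk (by positivity) V hVc u v χ hχu hu hv hu0 hv0
  intro τ hτmem
  obtain ⟨h1, h2⟩ := key τ hτmem
  set A : ℝ := ∫ η in τ₀..τ, |V η| with hA
  set B : ℝ := ∫ η in τ₀..τ, |V' η| with hB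
  have hAnn : 0 ≤ A := intervalIntegral.integral_nonneg hτmem.1 (fun _ _ => abs_nonneg _)
  have hBnn : 0 ≤ B := intervalIntegral.integral_nonneg hτmem.1 (fun _ _ => abs_nonneg _)
  have hpow : Real.sqrt 2 * k₀ ^ ((3:ℝ)/2) = r * k₀ := by
    rw [hr, Real.sqrt_mul (by norm_num : (0:ℝ) ≤ 2) k₀]
    rw [show ((3:ℝ)/2) = 1/2 + 1 by norm_num, Real.rpow_add hk, Real.rpow_one,
      ← Real.sqrt_eq_rpow]
    ring
  have hknn : (0:ℝ) < k₀ ^ ((3:ℝ)/2) := Real.rpow_pos_of_pos hk _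
  have hexp1 : (0:ℝ) < Real.exp (A / k₀) := Real.exp_pos _
  constructor
  · 
    have h3 : ‖u τ‖ ≤ (r⁻¹ * A) * Real.exp (A / k₀) / k₀ := by
      rw [le_div_iff₀ hk]
      linarith
    have h4 : A / (Real.sqrt 2 * k₀ ^ ((3:ℝ)/2)) * Real.exp (A / k₀)
        = (r⁻¹ * A) * Real.exp (A / k₀) / k₀ := by
      rw [hpow]
      field_simp
    rw [h4]
    exact h3
  · 
    have hexp2 : Real.exp (A / k₀) ≤ Real.exp (2 * A / k₀) := by
      apply Real.exp_le_exp.mpr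
      have h5 : 0 ≤ A / k₀ := by positivity
      have : 2 * A / k₀ = 2 * (A / k₀) := by ring
      rw [this]
      linarith
    have h6 : r⁻¹ * A = A / r := by ring
    have h7 : 0 ≤ A / r := by positivity
    have h8 : 0 ≤ B / (Real.sqrt 2 * k₀ ^ ((3:ℝ)/2)) := by positivity
    calc ‖v τ‖ ≤ (r⁻¹ * A) * Real.exp (A / k₀) := h2
      _ = (A / r) * Real.exp (A / k₀) := by rw [h6]
      _ ≤ (A / r) * Real.exp (2 * A / k₀) := by
          exact mul_le_mul_of_nonneg_left hexp2 h7
      _ ≤ (A / r + B / (Real.sqrt 2 * k₀ ^ ((3:ℝ)/2))) * Real.exp (2 * A / k₀) := by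
          apply mul_le_mul_of_nonneg_right _ (Real.exp_pos _).le
          linarith
end
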